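/- arXiv:2209.07772 — 4 statements merged into one kernel-verified Lean document; each statement's English description precedes it below -/
import Mathlib

section
/- Let G be an undirected graph and let B_1, …, B_d be a path decomposition of G of width w. Then G admits a linear order of its vertices whose module-width is at most w + 2. In particular, the linear module-width of G is at most its pathwidth plus 2. -/
open Finset

/-- A path decomposition of a graph: a sequence of bags covering all vertices and all
edges, such that for `h ≤ i ≤ j`, `bag h ∩ bag j ⊆ bag i`. -/
structure PathDecomp {α : Type*} (G : SimpleGraph α) where
  d : ℕ
  bag : Fin d → Finset α
  covers : ∀ v : α, ∃ i, v ∈ bag i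
  covers_edge : ∀ ⦃u v : α⦄, G.Adj u v → ∃ i, u ∈ bag i ∧ v ∈ bag i
  interval : ∀ ⦃h i j : Fin d⦄, h ≤ i → i ≤ j → ∀ a, a ∈ bag h → a ∈ bag j → a ∈ bag i

/-- The module number of a set `S` of vertices: the number of equivalence classes of the
relation `u ∼ v ↔ N(u) \ S = N(v) \ S` on `S`. -/
def moduleNumber {V : Type*} [Fintype V] [DecidableEq V] (G : SimpleGraph V)
    [DecidableRel G.Adj] (S : Finset V) : ℕ :=
  (S.image fun u => G.neighborFinset u \ S).card

/-- if `G` has a path decomposition of width `w`, then `G` admits a linear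
order of its vertices whose module-width is at most `w + 2` (every prefix of the order
has module number at most `w + 2`); in particular, the linear module-width of `G` is at
most its pathwidth plus `2`. -/
theorem exists_linear_order_moduleWidth_le_pathwidth_add_two
    {V : Type*} [Fintype V] [DecidableEq V] (G : SimpleGraph V) [DecidableRel G.Adj]
    (w : ℕ) (pd : PathDecomp G) (hpd : ∀ i, (pd.bag i).card ≤ w + 1) :
    ∃ σ : Fin (Fintype.card V) ≃ V,
      ∀ i : Fin (Fintype.card V),
        moduleNumber G ((Finset.univ.filter fun j => j ≤ i).image σ) ≤ w + 2 := by
  classical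
  -- `f v` is the first bag containing `v`
  have hne : ∀ v : V, (Finset.univ.filter fun i => v ∈ pd.bag i).Nonempty := by
    intro v
    obtain ⟨i, hi⟩ := pd.covers v
    exact ⟨i, by simp [hi]⟩
  set f : V → Fin pd.d := fun v => (Finset.univ.filter fun i => v ∈ pd.bag i).min' (hne v)
    with hf
  have hf_mem : ∀ v, v ∈ pd.bag (f v) := by
    intro v
    have := Finset.min'_mem _ (hne v)
    simpa [hf] using this
  have hf_le : ∀ v i, v ∈ pd.bag i → f v ≤ i := by
    intro v i hi
    exact Finset.min'_le _ _ (by simp [hi])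
  obtain e0 := Fintype.equivFin V
  letI : LinearOrder V := LinearOrder.lift'
    (fun v => toLex (f v, e0 v) : V → Lex (Fin pd.d × Fin (Fintype.card V)))
    (fun a b h => e0.injective (congrArg Prod.snd (toLex.injective h)))
  have hmono : ∀ a b : V, a ≤ b → f a ≤ f b := by
    intro a b h
    have h' : toLex (f a, e0 a) ≤ toLex (f b, e0 b) := h
    rcases Prod.Lex.le_iff.mp h' with h1 | ⟨h1, _⟩
    · exact h1.le
    · exact h1.le
  set σ : Fin (Fintype.card V) ≃o V := monoEquivOfFin V rfl with hσ
  refine ⟨σ.toEquiv, ?_⟩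
  intro i
  set S : Finset V := (Finset.univ.filter fun j => j ≤ i).image ⇑σ.toEquiv with hS
  have hSmem : ∀ v : V, v ∈ S ↔ σ.symm v ≤ i := by
    intro v
    simp only [hS, Finset.mem_image, Finset.mem_filter, Finset.mem_univ, true_and]
    constructor
    · rintro ⟨j, hj, rfl⟩
      simpa using hj
    · intro h
      exact ⟨σ.symm v, h, by simp⟩
  -- find a bag containing all vertices of `S` that have a neighbor outside `S`
  obtain ⟨t, hkey⟩ : ∃ t : Fin pd.d,
      ∀ u ∈ S, ∀ v, v ∉ S → G.Adj u v → u ∈ pd.bag t := by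
    by_cases hall : ∀ j : Fin (Fintype.card V), j ≤ i
    · obtain ⟨t0, _⟩ := pd.covers (σ.toEquiv i)
      exact ⟨t0, fun u hu v hv _ => absurd ((hSmem v).mpr (hall _)) hv⟩
    · push_neg at hall
      obtain ⟨k, hk⟩ := hall
      have hi1 : i.1 + 1 < Fintype.card V :=
        lt_of_le_of_lt (Nat.succ_le_of_lt (Fin.lt_def.mp hk)) k.2
      set k' : Fin (Fintype.card V) := ⟨i.1 + 1, hi1⟩ with hk'
      refine ⟨f (σ k'), ?_⟩
      intro u hu v hv hadj
      have hu' : σ.symm u ≤ i := (hSmem u).mp hu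
      have hv' : ¬ σ.symm v ≤ i := fun h => hv ((hSmem v).mpr h)
      have huk : σ.symm u < k' := lt_of_le_of_lt hu' (by
        simp [hk', Fin.lt_def])
      have hkv : k' ≤ σ.symm v := by
        have : i < σ.symm v := lt_of_not_ge hv'
        simpa [hk', Fin.le_def, Nat.succ_le_iff] using this
      have hule : u ≤ σ k' := by
        have := σ.monotone huk.le
        simpa using this
      have hvle : σ k' ≤ v := by
        have := σ.monotone hkv
        simpa using this
      have hfu : f u ≤ f (σ k') := hmono _ _ hule
      have hfv : f (σ k') ≤ f v := hmono _ _ hvle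
      obtain ⟨s, hus, hvs⟩ := pd.covers_edge hadj
      have hts : f (σ k') ≤ s := le_trans hfv (hf_le v s hvs)
      have hfus : f u ≤ s := le_trans hfu hts
      exact pd.interval hfu hts u (hf_mem u) hus
  -- bound the module number using the bag `t`
  have hsub : (S.image fun u => G.neighborFinset u \ S) ⊆
      insert ∅ ((S ∩ pd.bag t).image fun u => G.neighborFinset u \ S) := by
    intro A hA
    obtain ⟨u, hu, rfl⟩ := Finset.mem_image.mp hA
    by_cases hemp : G.neighborFinset u \ S = ∅
    · simp [hemp]
    · obtain ⟨v, hv⟩ := Finset.nonempty_iff_ne_empty.mpr hemp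
      rw [Finset.mem_sdiff, SimpleGraph.mem_neighborFinset] at hv
      have hu' : u ∈ pd.bag t := hkey u hu v hv.2 hv.1
      exact Finset.mem_insert_of_mem
        (Finset.mem_image_of_mem _ (Finset.mem_inter.mpr ⟨hu, hu'⟩))
  calc moduleNumber G S ≤
      (insert ∅ ((S ∩ pd.bag t).image fun u => G.neighborFinset u \ S)).card :=
        Finset.card_le_card hsub
    _ ≤ ((S ∩ pd.bag t).image fun u => G.neighborFinset u \ S).card + 1 :=
        Finset.card_insert_le _ _
    _ ≤ (S ∩ pd.bag t).card + 1 := by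
        exact Nat.add_le_add_right (Finset.card_image_le) 1
    _ ≤ (pd.bag t).card + 1 := by
        exact Nat.add_le_add_right (Finset.card_le_card (Finset.inter_subset_right)) 1
    _ ≤ w + 2 := by
        have := hpd t
        omega
end

section
/- If (G, w) admits a circulating orientation, then the constructed graph H admits a b-coloring with k = 2W + 3m + n + 2 colors. -/
open Finset

/-- `a` is a b-vertex of the coloring `c`: it has a neighbor in every color class
other than its own. -/
def IsBVertex {VH : Type*} (H : SimpleGraph VH) {k : ℕ} (c : VH → Fin k) (a : VH) : Prop :=
  ∀ col : Fin k, col ≠ c a → ∃ b : VH, H.Adj a b ∧ c b = col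

/-- `c` is a b-coloring of `H` with `k` colors: a proper coloring using all `k` colors
in which every color class contains a b-vertex. -/
def IsBColoring {VH : Type*} (H : SimpleGraph VH) (k : ℕ) (c : VH → Fin k) : Prop :=
  (∀ ⦃a b : VH⦄, H.Adj a b → c a ≠ c b) ∧ Function.Surjective c ∧
    ∀ col : Fin k, ∃ a : VH, c a = col ∧ IsBVertex H c a

variable {V : Type*} [Fintype V] [DecidableEq V]

/-- `W`, the total weight of all edges. -/
def totW (G : SimpleGraph V) [DecidableRel G.Adj] (wt : Sym2 V → ℕ) : ℕ :=
  ∑ e ∈ G.edgeFinset, wt e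

/-- `W_v`, the total weight of the edges incident with `v`. -/
def vertW (G : SimpleGraph V) [DecidableRel G.Adj] (wt : Sym2 V → ℕ) (v : V) : ℕ :=
  ∑ e ∈ G.edgeFinset.filter (fun e => v ∈ e), wt e

/-- `k = 2W + 3m + n + 2`. -/
def numColors (G : SimpleGraph V) [DecidableRel G.Adj] (wt : Sym2 V → ℕ) : ℕ :=
  2 * totW G wt + 3 * G.edgeFinset.card + Fintype.card V + 2

/-- An orientation of `(G, wt)` (given by choosing a head `o e ∈ e` for every edge `e`)
is circulating if, at every vertex, the entering weight equals the leaving weight. -/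
def IsCirculating (G : SimpleGraph V) [DecidableRel G.Adj] (wt : Sym2 V → ℕ)
    (o : Sym2 V → V) : Prop :=
  (∀ e ∈ G.edgeFinset, o e ∈ e) ∧
    ∀ v : V,
      ∑ e ∈ G.edgeFinset.filter (fun e => v ∈ e ∧ o e = v), wt e =
        ∑ e ∈ G.edgeFinset.filter (fun e => v ∈ e ∧ o e ≠ v), wt e

/-- The data of the construction of the graph `H` from `(G, wt)`. -/
structure GadgetData (V : Type*) [Fintype V] [DecidableEq V]
    (G : SimpleGraph V) [DecidableRel G.Adj] (wt : Sym2 V → ℕ) where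
  /-- the vertex type of `H` -/
  VH : Type*
  fintypeVH : Fintype VH
  decEqVH : DecidableEq VH
  /-- the graph `H` -/
  H : SimpleGraph VH
  decAdj : DecidableRel H.Adj
  /-- the center `s*` of the superstar -/
  sstar : VH
  /-- the leaves of the superstar -/
  Sleaves : Finset VH
  /-- the centers of the anonymous stars -/
  Acenters : Finset VH
  /-- the leaves of each anonymous star -/
  Aleaves : VH → Finset VH
  /-- the sets `L_{e,v}` (subsets of the superstar leaves) -/
  L : Sym2 V → V → Finset VH
  /-- the copy of a vertex of `G` inside `H` -/
  orig : V → VH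
  /-- the sets `P_v` -/
  P : V → Finset VH
  /-- the vertices `x_{e,v}` -/
  x : Sym2 V → V → VH
  /-- the sets `Y_e` -/
  Y : Sym2 V → Finset VH
  /-- the sets `Z_e` -/
  Z : Sym2 V → Finset VH
  /-- the vertices `q_{e,1}, q_{e,2}` -/
  q : Sym2 V → Fin 2 → VH

namespace GadgetData

variable {G : SimpleGraph V} [DecidableRel G.Adj] {wt : Sym2 V → ℕ}

/-- The set `X = {x_{e,v} : v ∈ e ∈ E(G)}`. -/
def Xset (g : GadgetData V G wt) : Finset g.VH :=
  letI := g.fintypeVH; letI := g.decEqVH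
  G.edgeFinset.biUnion fun e => (Finset.univ.filter fun v => v ∈ e).image (g.x e)

/-- The set `Q = {q_{e,1}, q_{e,2} : e ∈ E(G)}`. -/
def Qset (g : GadgetData V G wt) : Finset g.VH :=
  letI := g.decEqVH
  G.edgeFinset.biUnion fun e => {g.q e 0, g.q e 1}

/-- The parts into which the vertex set of `H` is partitioned. -/
def parts (g : GadgetData V G wt) : List (Finset g.VH) :=
  letI := g.fintypeVH; letI := g.decEqVH
  [{g.sstar}, g.Sleaves, g.Acenters, g.Acenters.biUnion g.Aleaves,
    Finset.univ.image g.orig, Finset.univ.biUnion g.P,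
    g.Xset, G.edgeFinset.biUnion g.Y, G.edgeFinset.biUnion g.Z, g.Qset]

/-- One directional specification of the adjacencies of `H`. -/
def AdjSpec (g : GadgetData V G wt) (a b : g.VH) : Prop :=
  (a = g.sstar ∧ b ∈ g.Sleaves) ∨
  (∃ s ∈ g.Acenters, a = s ∧ b ∈ g.Aleaves s) ∨
  (∃ v : V, a = g.orig v ∧ b ∈ g.P v) ∨
  (∃ e ∈ G.edgeFinset, ∃ v : V, v ∈ e ∧ a = g.orig v ∧ (b ∈ g.L e v ∨ b ∈ g.Y e)) ∨
  (∃ e ∈ G.edgeFinset, ∃ v : V, v ∈ e ∧ a = g.x e v ∧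
    (b ∈ g.Y e ∨ b ∈ g.Z e ∨ b ∈ g.L e v)) ∨
  (∃ e ∈ G.edgeFinset, a = g.q e 0 ∧ b = g.q e 1) ∨
  (∃ e ∈ G.edgeFinset, ∃ h : Fin 2, a = g.q e h ∧
    (b ∈ g.Z e ∨ (∃ v : V, v ∈ e ∧ b ∈ g.L e v) ∨ (∃ v : V, v ∈ e ∧ b = g.x e v)))

/-- Degree in `H`. -/
def deg (g : GadgetData V G wt) (a : g.VH) : ℕ :=
  letI := g.fintypeVH; letI := g.decEqVH; letI := g.decAdj
  g.H.degree a

/-- The set `{s*} ∪ V(G) ∪ Q ∪ A ∪ X`. -/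
def bigSet (g : GadgetData V G wt) : Finset g.VH :=
  letI := g.fintypeVH; letI := g.decEqVH
  {g.sstar} ∪ Finset.univ.image g.orig ∪ g.Qset ∪ g.Acenters ∪ g.Xset

end GadgetData

/-- The construction of the graph `H` from `(G, wt)`: the data together with all the
requirements (sizes of the parts, their disjointness, and the adjacency relation). -/
structure Gadget (V : Type*) [Fintype V] [DecidableEq V]
    (G : SimpleGraph V) [DecidableRel G.Adj] (wt : Sym2 V → ℕ)
    extends GadgetData V G wt where
  card_Sleaves : Sleaves.card = numColors G wt - 1
  card_Acenters : Acenters.card = 2 * totW G wt + 1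
  card_Aleaves : ∀ s ∈ Acenters, (Aleaves s).card = numColors G wt - 1
  Aleaves_disjoint : ∀ s ∈ Acenters, ∀ s' ∈ Acenters, s ≠ s' →
    Disjoint (Aleaves s) (Aleaves s')
  L_subset : ∀ e ∈ G.edgeFinset, ∀ v ∈ e, L e v ⊆ Sleaves
  card_L : ∀ e ∈ G.edgeFinset, ∀ v ∈ e, (L e v).card = wt e
  L_disjoint : ∀ e ∈ G.edgeFinset, ∀ v ∈ e, ∀ e' ∈ G.edgeFinset, ∀ v' ∈ e',
    (e, v) ≠ (e', v') → Disjoint (L e v) (L e' v')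
  card_P : ∀ v : V, 2 * (P v).card + 3 * vertW G wt v + 2 = 2 * numColors G wt
  card_Y : ∀ e ∈ G.edgeFinset, (Y e).card = wt e
  card_Z : ∀ e ∈ G.edgeFinset, (Z e).card + 2 * wt e + 3 = numColors G wt
  orig_inj : Function.Injective orig
  P_disjoint : ∀ v v' : V, v ≠ v' → Disjoint (P v) (P v')
  x_inj : ∀ e ∈ G.edgeFinset, ∀ v ∈ e, ∀ e' ∈ G.edgeFinset, ∀ v' ∈ e',
    x e v = x e' v' → (e, v) = (e', v')
  Y_disjoint : ∀ e ∈ G.edgeFinset, ∀ e' ∈ G.edgeFinset, e ≠ e' → Disjoint (Y e) (Y e')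
  Z_disjoint : ∀ e ∈ G.edgeFinset, ∀ e' ∈ G.edgeFinset, e ≠ e' → Disjoint (Z e) (Z e')
  q_inj : ∀ e ∈ G.edgeFinset, ∀ h : Fin 2, ∀ e' ∈ G.edgeFinset, ∀ h' : Fin 2,
    q e h = q e' h' → (e, h) = (e', h')
  parts_disjoint : toGadgetData.parts.Pairwise Disjoint
  parts_cover : ∀ a : VH, ∃ p ∈ toGadgetData.parts, a ∈ p
  adj_iff : ∀ a b : VH, H.Adj a b ↔
    toGadgetData.AdjSpec a b ∨ toGadgetData.AdjSpec b a

section AuxBij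
open Classical in
/-- There is a function mapping `s` bijectively onto `t`, provided the cards agree. -/
lemma exists_mapsBij {α β : Type*} [Nonempty β] (s : Finset α) (t : Finset β)
    (h : s.card = t.card) :
    ∃ f : α → β, (∀ a ∈ s, f a ∈ t) ∧ (∀ a ∈ s, ∀ b ∈ s, f a = f b → a = b) ∧
      ∀ y ∈ t, ∃ a ∈ s, f a = y := by
  classical
  let e := Finset.equivOfCardEq h
  refine ⟨fun a => if ha : a ∈ s then (e ⟨a, ha⟩ : β) else Classical.arbitrary β, ?_, ?_, ?_⟩
  · intro a ha; simp only [dif_pos ha]; exact (e ⟨a, ha⟩).2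
  · intro a ha b hb hab
    simp only [dif_pos ha, dif_pos hb] at hab
    have := e.injective (Subtype.ext hab)
    exact congrArg Subtype.val this
  · intro y hy
    refine ⟨(e.symm ⟨y, hy⟩ : α), (e.symm ⟨y, hy⟩).2, ?_⟩
    simp only [dif_pos (e.symm ⟨y, hy⟩).2]
    have : e ⟨(e.symm ⟨y, hy⟩ : α), (e.symm ⟨y, hy⟩).2⟩ = ⟨y, hy⟩ := by
      rw [← Subtype.coe_eta (e.symm ⟨y, hy⟩) (e.symm ⟨y, hy⟩).2]; exact e.apply_symm_apply _
    exact congrArg Subtype.val this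
end AuxBij

/-- If `(G, wt)` admits a circulating orientation, then the constructed
graph `H` admits a b-coloring with `k = 2W + 3m + n + 2` colors. -/
theorem circulating_orientation_gives_bColoring
    {V : Type*} [Fintype V] [DecidableEq V] (G : SimpleGraph V) [DecidableRel G.Adj]
    (wt : Sym2 V → ℕ) (hconn : G.Connected)
    (hwt : ∀ e ∈ G.edgeFinset, 1 ≤ wt e)
    (heven : ∀ v : V, Even (vertW G wt v))
    (g : Gadget V G wt)
    (horient : ∃ o : Sym2 V → V, IsCirculating G wt o) :
    ∃ c : g.VH → Fin (numColors G wt), IsBColoring g.H (numColors G wt) c := by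
  classical
  letI := g.fintypeVH
  letI := g.decEqVH
  letI := g.decAdj
  obtain ⟨o, ho_mem, ho_circ⟩ := horient
  set K := numColors G wt with hKdef
  have hK2 : K = 2 * totW G wt + 3 * G.edgeFinset.card + Fintype.card V + 2 := rfl
  have hKpos : 0 < K := by omega
  have hneFinK : Nonempty (Fin K) := ⟨⟨0, hKpos⟩⟩
  set d0 : Fin K := ⟨0, hKpos⟩ with hd0
  -- the system of "named" colors
  obtain ⟨colS, colA, colV, colQ, colX, hSA, hSV, hSQ, hSX, hAV, hAQ, hAX, hVQ, hVX, hQX,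
      hAinj, hVinj, hQinj, hXinj, hcover⟩ :
      ∃ (colS : Fin K) (colA : g.VH → Fin K) (colV : V → Fin K)
        (colQ : Sym2 V → Fin 2 → Fin K) (colX : Sym2 V → Fin K),
        (∀ s ∈ g.Acenters, colS ≠ colA s) ∧
        (∀ v : V, colS ≠ colV v) ∧
        (∀ e ∈ G.edgeFinset, ∀ i : Fin 2, colS ≠ colQ e i) ∧
        (∀ e ∈ G.edgeFinset, colS ≠ colX e) ∧
        (∀ s ∈ g.Acenters, ∀ v : V, colA s ≠ colV v) ∧
        (∀ s ∈ g.Acenters, ∀ e ∈ G.edgeFinset, ∀ i : Fin 2, colA s ≠ colQ e i) ∧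
        (∀ s ∈ g.Acenters, ∀ e ∈ G.edgeFinset, colA s ≠ colX e) ∧
        (∀ v : V, ∀ e ∈ G.edgeFinset, ∀ i : Fin 2, colV v ≠ colQ e i) ∧
        (∀ v : V, ∀ e ∈ G.edgeFinset, colV v ≠ colX e) ∧
        (∀ e ∈ G.edgeFinset, ∀ i : Fin 2, ∀ e' ∈ G.edgeFinset, colQ e i ≠ colX e') ∧
        (∀ s ∈ g.Acenters, ∀ s' ∈ g.Acenters, colA s = colA s' → s = s') ∧
        (Function.Injective colV) ∧
        (∀ e ∈ G.edgeFinset, ∀ i : Fin 2, ∀ e' ∈ G.edgeFinset, ∀ i' : Fin 2,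
          colQ e i = colQ e' i' → e = e' ∧ i = i') ∧
        (∀ e ∈ G.edgeFinset, ∀ e' ∈ G.edgeFinset, colX e = colX e' → e = e') ∧
        (∀ col : Fin K, col = colS ∨ (∃ s ∈ g.Acenters, col = colA s) ∨
          (∃ v : V, col = colV v) ∨ (∃ e ∈ G.edgeFinset, ∃ i : Fin 2, col = colQ e i) ∨
          (∃ e ∈ G.edgeFinset, col = colX e)) := by
    have hTcard : Fintype.card (Unit ⊕ ({s // s ∈ g.Acenters} ⊕
        (V ⊕ (({e // e ∈ G.edgeFinset} × Fin 2) ⊕ {e // e ∈ G.edgeFinset})))) = K := by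
      simp only [Fintype.card_sum, Fintype.card_prod, Fintype.card_coe, Fintype.card_unit,
        Fintype.card_fin, g.card_Acenters, hK2]
      ring
    set eqv := Fintype.equivFinOfCardEq hTcard with heqv
    refine ⟨eqv (Sum.inl ()),
      fun s => if h : s ∈ g.Acenters then eqv (Sum.inr (Sum.inl ⟨s, h⟩)) else d0,
      fun v => eqv (Sum.inr (Sum.inr (Sum.inl v))),
      fun e i => if h : e ∈ G.edgeFinset then
        eqv (Sum.inr (Sum.inr (Sum.inr (Sum.inl (⟨e, h⟩, i))))) else d0,
      fun e => if h : e ∈ G.edgeFinset then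
        eqv (Sum.inr (Sum.inr (Sum.inr (Sum.inr ⟨e, h⟩)))) else d0,
      ?_, ?_, ?_, ?_, ?_, ?_, ?_, ?_, ?_, ?_, ?_, ?_, ?_, ?_, ?_⟩
    · intro s hs; simp only [dif_pos hs]; simp [eqv.injective.eq_iff]
    · intro v; simp [eqv.injective.eq_iff]
    · intro e he i; simp only [dif_pos he]; simp [eqv.injective.eq_iff]
    · intro e he; simp only [dif_pos he]; simp [eqv.injective.eq_iff]
    · intro s hs v; simp only [dif_pos hs]; simp [eqv.injective.eq_iff]
    · intro s hs e he i; simp only [dif_pos hs, dif_pos he]; simp [eqv.injective.eq_iff]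
    · intro s hs e he; simp only [dif_pos hs, dif_pos he]; simp [eqv.injective.eq_iff]
    · intro v e he i; simp only [dif_pos he]; simp [eqv.injective.eq_iff]
    · intro v e he; simp only [dif_pos he]; simp [eqv.injective.eq_iff]
    · intro e he i e' he'; simp only [dif_pos he, dif_pos he']; simp [eqv.injective.eq_iff]
    · intro s hs s' hs' h; simp only [dif_pos hs, dif_pos hs'] at h
      simpa [eqv.injective.eq_iff, Subtype.ext_iff] using h
    · intro v v' h; simpa [eqv.injective.eq_iff] using h
    · intro e he i e' he' i' h; simp only [dif_pos he, dif_pos he'] at h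
      simpa [eqv.injective.eq_iff, Prod.ext_iff, Subtype.ext_iff] using h
    · intro e he e' he' h; simp only [dif_pos he, dif_pos he'] at h
      simpa [eqv.injective.eq_iff, Subtype.ext_iff] using h
    · intro col
      have hcol : eqv (eqv.symm col) = col := eqv.apply_symm_apply col
      rcases htok : eqv.symm col with _ | (⟨s, hs⟩ | (v | (⟨⟨e, he⟩, i⟩ | ⟨e, he⟩)))
      · left; rw [← hcol, htok]
      · right; left; exact ⟨s, hs, by rw [← hcol, htok]; simp only [dif_pos hs]⟩
      · right; right; left; exact ⟨v, by rw [← hcol, htok]⟩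
      · right; right; right; left; exact ⟨e, he, i, by rw [← hcol, htok]; simp only [dif_pos he]⟩
      · right; right; right; right; exact ⟨e, he, by rw [← hcol, htok]; simp only [dif_pos he]⟩
  -- unpack the pairwise disjointness of the parts
  have hpd := g.parts_disjoint
  simp only [GadgetData.parts, List.pairwise_cons, List.mem_cons, List.not_mem_nil, or_false,
    forall_eq_or_imp, forall_eq, List.Pairwise.nil, and_true] at hpd
  obtain ⟨⟨hd01, hd02, hd03, hd04, hd05, hd06, hd07, hd08, hd09⟩,
    ⟨hd12, hd13, hd14, hd15, hd16, hd17, hd18, hd19⟩,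
    ⟨hd23, hd24, hd25, hd26, hd27, hd28, hd29⟩,
    ⟨hd34, hd35, hd36, hd37, hd38, hd39⟩,
    ⟨hd45, hd46, hd47, hd48, hd49⟩,
    ⟨hd56, hd57, hd58, hd59⟩,
    ⟨hd67, hd68, hd69⟩, ⟨hd78, hd79⟩, hd89, -⟩ := hpd
  -- basic facts about edges
  have hedge : ∀ e ∈ G.edgeFinset, ∃ u w : V, u ≠ w ∧ e = s(u, w) := by
    intro e he
    rw [SimpleGraph.mem_edgeFinset] at he
    induction e with
    | _ u w => exact ⟨u, w, ((SimpleGraph.mem_edgeSet G).1 he).ne, rfl⟩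
  have htwo : ∀ e ∈ G.edgeFinset, ∀ a b x : V, a ∈ e → b ∈ e → x ∈ e → a ≠ b →
      x = a ∨ x = b := by
    intro e he a b x ha hb hx hab
    obtain ⟨u, w, huw, rfl⟩ := hedge e he
    simp only [Sym2.mem_iff] at ha hb hx
    rcases ha with rfl | rfl <;> rcases hb with rfl | rfl <;> tauto
  have hfilter2 : ∀ e ∈ G.edgeFinset, (univ.filter (· ∈ e)).card = 2 := by
    intro e he
    obtain ⟨u, w, huw, rfl⟩ := hedge e he
    have hset : (univ.filter (· ∈ s(u, w))) = {u, w} := by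
      ext a; simp [Sym2.mem_iff]
    rw [hset, card_insert_of_notMem (by simp [huw]), card_singleton]
  -- the union of all the L sets
  set Lunion := G.edgeFinset.biUnion
    (fun e => (univ.filter (· ∈ e)).biUnion (fun v => g.L e v)) with hLUdef
  have hLUmem : ∀ e ∈ G.edgeFinset, ∀ v ∈ e, ∀ a ∈ g.L e v, a ∈ Lunion := by
    intro e he v hv a ha
    rw [hLUdef]
    exact mem_biUnion.2 ⟨e, he, mem_biUnion.2 ⟨v, mem_filter.2 ⟨mem_univ v, hv⟩, ha⟩⟩
  have hUsub : Lunion ⊆ g.Sleaves := by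
    rw [hLUdef]; intro a ha
    simp only [mem_biUnion, mem_filter] at ha
    obtain ⟨e, he, v, ⟨-, hv⟩, ha⟩ := ha
    exact g.L_subset e he v hv ha
  have hinner : ∀ e ∈ G.edgeFinset,
      ((univ.filter (· ∈ e)).biUnion (fun v => g.L e v)).card = 2 * wt e := by
    intro e he
    rw [card_biUnion (fun v hv v' hv' hne =>
      g.L_disjoint e he v (mem_filter.1 hv).2 e he v' (mem_filter.1 hv').2
        (fun hEq => hne (congrArg Prod.snd hEq)))]
    rw [sum_congr rfl (fun v hv => g.card_L e he v (mem_filter.1 hv).2), sum_const,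
      hfilter2 e he, smul_eq_mul]
  have hLUcard : Lunion.card = 2 * totW G wt := by
    rw [hLUdef, card_biUnion (fun e he e' he' hne => by
      rw [Function.onFun, disjoint_left]
      intro a ha ha'
      simp only [mem_biUnion, mem_filter] at ha ha'
      obtain ⟨v, ⟨-, hv⟩, ha⟩ := ha
      obtain ⟨v', ⟨-, hv'⟩, ha'⟩ := ha'
      exact (disjoint_left.1 (g.L_disjoint e he v hv e' he' v' hv'
        (fun hEq => hne (congrArg Prod.fst hEq))) ha) ha')]
    rw [sum_congr rfl hinner, totW, mul_sum]
  -- the anonymous colors used on the L sets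
  have hACcard : (g.Acenters.image colA).card = 2 * totW G wt + 1 := by
    rw [card_image_of_injOn (fun s hs s' hs' h => hAinj s hs s' hs' h), g.card_Acenters]
  obtain ⟨AC', hAC'sub, hAC'card⟩ : ∃ t ⊆ g.Acenters.image colA, t.card = 2 * totW G wt :=
    Finset.exists_subset_card_eq (by rw [hACcard]; omega)
  have hanonAC : ∀ x ∈ AC', ∃ s ∈ g.Acenters, x = colA s := by
    intro x hx
    obtain ⟨s, hs, hsx⟩ := mem_image.1 (hAC'sub hx)
    exact ⟨s, hs, hsx.symm⟩
  -- the coloring of the L-leaves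
  obtain ⟨fL, hfL1, hfL2, hfL3⟩ := exists_mapsBij Lunion AC' (by rw [hLUcard, hAC'card])
  set Lc : Sym2 V → V → Finset (Fin K) := fun e v => (g.L e v).image fL with hLcdef
  have hLcmem : ∀ (e : Sym2 V) (v : V), ∀ a ∈ g.L e v, fL a ∈ Lc e v :=
    fun e v a ha => mem_image_of_mem _ ha
  have hLcanon : ∀ e ∈ G.edgeFinset, ∀ v ∈ e, ∀ x ∈ Lc e v,
      ∃ s ∈ g.Acenters, x = colA s := by
    intro e he v hv x hx
    obtain ⟨a, ha, rfl⟩ := mem_image.1 hx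
    exact hanonAC _ (hfL1 _ (hLUmem e he v hv a ha))
  have hLccard : ∀ e ∈ G.edgeFinset, ∀ v ∈ e, (Lc e v).card = wt e := by
    intro e he v hv
    rw [hLcdef]
    rw [card_image_of_injOn (fun a ha b hb h =>
      hfL2 a (hLUmem e he v hv a ha) b (hLUmem e he v hv b hb) h), g.card_L e he v hv]
  have hLcdisj : ∀ e ∈ G.edgeFinset, ∀ v ∈ e, ∀ e' ∈ G.edgeFinset, ∀ v' ∈ e',
      ((e, v) : Sym2 V × V) ≠ (e', v') → Disjoint (Lc e v) (Lc e' v') := by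
    intro e he v hv e' he' v' hv' hne
    rw [disjoint_left]
    rintro x hx hx'
    obtain ⟨a, ha, rfl⟩ := mem_image.1 hx
    obtain ⟨b, hb, hba⟩ := mem_image.1 hx'
    have hab := hfL2 b (hLUmem e' he' v' hv' b hb) a (hLUmem e he v hv a ha) hba
    subst hab
    exact (disjoint_left.1 (g.L_disjoint e he v hv e' he' v' hv' hne) ha) hb
  -- the coloring of the remaining superstar leaves
  obtain ⟨fR, hfR1, hfR2, hfR3⟩ := exists_mapsBij (g.Sleaves \ Lunion)
      ((univ : Finset (Fin K)) \ insert colS AC') (by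
    have hSne : colS ∉ AC' := fun hmem => by
      obtain ⟨s, hs, hEq⟩ := hanonAC _ hmem; exact hSA s hs hEq
    rw [card_sdiff_of_subset hUsub, card_sdiff_of_subset (subset_univ _), card_univ, Fintype.card_fin,
      g.card_Sleaves, hLUcard, card_insert_of_notMem hSne, hAC'card, ← hKdef]
    omega)
  -- the coloring of the anonymous star leaves
  have hALex : ∀ s, ∃ f : g.VH → Fin K, s ∈ g.Acenters →
      ((∀ a ∈ g.Aleaves s, f a ∈ (univ : Finset (Fin K)).erase (colA s)) ∧
       (∀ a ∈ g.Aleaves s, ∀ b ∈ g.Aleaves s, f a = f b → a = b) ∧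
       (∀ y ∈ (univ : Finset (Fin K)).erase (colA s), ∃ a ∈ g.Aleaves s, f a = y)) := by
    intro s
    by_cases hs : s ∈ g.Acenters
    · obtain ⟨f, h1, h2, h3⟩ := exists_mapsBij (g.Aleaves s)
        ((univ : Finset (Fin K)).erase (colA s)) (by
          rw [g.card_Aleaves s hs, card_erase_of_mem (mem_univ _), card_univ,
            Fintype.card_fin, ← hKdef])
      exact ⟨f, fun _ => ⟨h1, h2, h3⟩⟩
    · exact ⟨fun _ => d0, fun h => absurd h hs⟩
  choose fAL hfAL using hALex
  -- the coloring of the Y sets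
  have hYex : ∀ e, ∃ f : g.VH → Fin K, e ∈ G.edgeFinset →
      ((∀ a ∈ g.Y e, f a ∈ Lc e (o e)) ∧
       (∀ a ∈ g.Y e, ∀ b ∈ g.Y e, f a = f b → a = b) ∧
       (∀ y ∈ Lc e (o e), ∃ a ∈ g.Y e, f a = y)) := by
    intro e
    by_cases he : e ∈ G.edgeFinset
    · obtain ⟨f, h1, h2, h3⟩ := exists_mapsBij (g.Y e) (Lc e (o e))
        (by rw [g.card_Y e he, hLccard e he (o e) (ho_mem e he)])
      exact ⟨f, fun _ => ⟨h1, h2, h3⟩⟩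
    · exact ⟨fun _ => d0, fun h => absurd h he⟩
  choose fY hfY using hYex
  -- the L-colors of both endpoints of an edge
  set LB : Sym2 V → Finset (Fin K) := fun e =>
    (univ.filter (· ∈ e)).biUnion (fun v => Lc e v) with hLBdef
  have hLBmem : ∀ (e : Sym2 V), ∀ v ∈ e, Lc e v ⊆ LB e := by
    intro e v hv
    rw [hLBdef]
    exact subset_biUnion_of_mem _ (mem_filter.2 ⟨mem_univ v, hv⟩)
  have hLBrev : ∀ (e : Sym2 V), ∀ x ∈ LB e, ∃ v ∈ e, x ∈ Lc e v := by
    intro e x hx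
    rw [hLBdef] at hx
    simp only [mem_biUnion, mem_filter] at hx
    obtain ⟨v, ⟨-, hv⟩, hx⟩ := hx
    exact ⟨v, hv, hx⟩
  have hLBanon : ∀ e ∈ G.edgeFinset, ∀ x ∈ LB e, ∃ s ∈ g.Acenters, x = colA s := by
    intro e he x hx
    obtain ⟨v, hv, hx⟩ := hLBrev e x hx
    exact hLcanon e he v hv x hx
  have hLBcard : ∀ e ∈ G.edgeFinset, (LB e).card = 2 * wt e := by
    intro e he
    rw [hLBdef]
    rw [card_biUnion (fun v hv v' hv' hne =>
      hLcdisj e he v (mem_filter.1 hv).2 e he v' (mem_filter.1 hv').2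
        (fun hEq => hne (congrArg Prod.snd hEq)))]
    rw [sum_congr rfl (fun v hv => hLccard e he v (mem_filter.1 hv).2), sum_const,
      hfilter2 e he, smul_eq_mul]
  -- the target of the Z sets
  set Zt : Sym2 V → Finset (Fin K) := fun e =>
    univ \ (insert (colX e) (insert (colQ e 0) (insert (colQ e 1) (LB e)))) with hZtdef
  have hZtcard : ∀ e ∈ G.edgeFinset, (Zt e).card = K - (2 * wt e + 3) := by
    intro e he
    have h1 : colQ e 1 ∉ LB e := fun h => by
      obtain ⟨s, hs, hEq⟩ := hLBanon e he _ h; exact hAQ s hs e he 1 hEq.symm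
    have h0 : colQ e 0 ∉ insert (colQ e 1) (LB e) := by
      simp only [mem_insert]
      rintro (h | h)
      · exact absurd (hQinj e he 0 e he 1 h).2 (by decide)
      · obtain ⟨s, hs, hEq⟩ := hLBanon e he _ h; exact hAQ s hs e he 0 hEq.symm
    have hxne : colX e ∉ insert (colQ e 0) (insert (colQ e 1) (LB e)) := by
      simp only [mem_insert]
      rintro (h | h | h)
      · exact hQX e he 0 e he h.symm
      · exact hQX e he 1 e he h.symm
      · obtain ⟨s, hs, hEq⟩ := hLBanon e he _ h; exact hAX s hs e he hEq.symm
    rw [hZtdef]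
    rw [card_sdiff_of_subset (subset_univ _), card_univ, Fintype.card_fin,
      card_insert_of_notMem hxne, card_insert_of_notMem h0, card_insert_of_notMem h1,
      hLBcard e he]
  -- the coloring of the Z sets
  have hZex : ∀ e, ∃ f : g.VH → Fin K, e ∈ G.edgeFinset →
      ((∀ a ∈ g.Z e, f a ∈ Zt e) ∧
       (∀ a ∈ g.Z e, ∀ b ∈ g.Z e, f a = f b → a = b) ∧
       (∀ y ∈ Zt e, ∃ a ∈ g.Z e, f a = y)) := by
    intro e
    by_cases he : e ∈ G.edgeFinset
    · obtain ⟨f, h1, h2, h3⟩ := exists_mapsBij (g.Z e) (Zt e) (by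
        have hZc := g.card_Z e he
        rw [← hKdef] at hZc
        rw [hZtcard e he]
        omega)
      exact ⟨f, fun _ => ⟨h1, h2, h3⟩⟩
    · exact ⟨fun _ => d0, fun h => absurd h he⟩
  choose fZ hfZ using hZex
  -- the colors forbidden at a vertex of G
  set LV : V → Finset (Fin K) := fun v =>
    (G.edgeFinset.filter (fun e => v ∈ e)).biUnion (fun e => Lc e v) with hLVdef
  set YT : V → Finset (Fin K) := fun v =>
    (G.edgeFinset.filter (fun e => v ∈ e ∧ o e ≠ v)).biUnion (fun e => Lc e (o e)) with hYTdef
  have hLVcard : ∀ v, (LV v).card = vertW G wt v := by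
    intro v
    rw [hLVdef]
    rw [card_biUnion (fun e he e' he' hne =>
      hLcdisj e (mem_filter.1 he).1 v (mem_filter.1 he).2 e' (mem_filter.1 he').1 v
        (mem_filter.1 he').2 (fun hEq => hne (congrArg Prod.fst hEq)))]
    exact sum_congr rfl (fun e he => hLccard e (mem_filter.1 he).1 v (mem_filter.1 he).2)
  have hsumsplit : ∀ v, (∑ e ∈ G.edgeFinset.filter (fun e => v ∈ e ∧ o e = v), wt e) +
      (∑ e ∈ G.edgeFinset.filter (fun e => v ∈ e ∧ o e ≠ v), wt e) = vertW G wt v := by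
    intro v
    rw [vertW, ← Finset.sum_filter_add_sum_filter_not
      (G.edgeFinset.filter (fun e => v ∈ e)) (fun e => o e = v) wt,
      filter_filter, filter_filter]
  have hYTval : ∀ v, 2 * (YT v).card = vertW G wt v := by
    intro v
    have hcardYT : (YT v).card =
        ∑ e ∈ G.edgeFinset.filter (fun e => v ∈ e ∧ o e ≠ v), wt e := by
      rw [hYTdef]
      rw [card_biUnion (fun e he e' he' hne =>
        hLcdisj e (mem_filter.1 he).1 (o e) (ho_mem e (mem_filter.1 he).1)
          e' (mem_filter.1 he').1 (o e') (ho_mem e' (mem_filter.1 he').1)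
          (fun hEq => hne (congrArg Prod.fst hEq)))]
      exact sum_congr rfl (fun e he =>
        hLccard e (mem_filter.1 he).1 (o e) (ho_mem e (mem_filter.1 he).1))
    have hs1 := hsumsplit v
    have hs2 := ho_circ v
    omega
  have hLVanon : ∀ (v : V), ∀ x ∈ LV v, ∃ s ∈ g.Acenters, x = colA s := by
    intro v x hx
    rw [hLVdef] at hx
    simp only [mem_biUnion, mem_filter] at hx
    obtain ⟨e, ⟨he, hv⟩, hx⟩ := hx
    exact hLcanon e he v hv x hx
  have hYTanon : ∀ (v : V), ∀ x ∈ YT v, ∃ s ∈ g.Acenters, x = colA s := by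
    intro v x hx
    rw [hYTdef] at hx
    simp only [mem_biUnion, mem_filter] at hx
    obtain ⟨e, ⟨he, hv, hov⟩, hx⟩ := hx
    exact hLcanon e he (o e) (ho_mem e he) x hx
  have hLVYTdisj : ∀ v, Disjoint (LV v) (YT v) := by
    intro v
    rw [disjoint_left]
    intro x hx hx'
    rw [hLVdef] at hx
    rw [hYTdef] at hx'
    simp only [mem_biUnion, mem_filter] at hx hx'
    obtain ⟨e, ⟨he, hv⟩, hx⟩ := hx
    obtain ⟨e', ⟨he', hv', hov'⟩, hx'⟩ := hx'
    refine (disjoint_left.1 (hLcdisj e he v hv e' he' (o e') (ho_mem e' he') ?_) hx) hx'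
    intro hEq
    rw [Prod.mk.injEq] at hEq
    obtain ⟨hEq1, hEq2⟩ := hEq
    subst hEq1
    exact hov' hEq2.symm
  set Pt : V → Finset (Fin K) := fun v =>
    univ \ (insert (colV v) (LV v ∪ YT v)) with hPtdef
  have hPex : ∀ v : V, ∃ f : g.VH → Fin K,
      ((∀ a ∈ g.P v, f a ∈ Pt v) ∧
       (∀ a ∈ g.P v, ∀ b ∈ g.P v, f a = f b → a = b) ∧
       (∀ y ∈ Pt v, ∃ a ∈ g.P v, f a = y)) := by
    intro v
    apply exists_mapsBij
    have hnm : colV v ∉ LV v ∪ YT v := by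
      rw [mem_union]
      rintro (h | h)
      · obtain ⟨s, hs, hEq⟩ := hLVanon v _ h; exact hAV s hs v hEq.symm
      · obtain ⟨s, hs, hEq⟩ := hYTanon v _ h; exact hAV s hs v hEq.symm
    have h2P := g.card_P v
    rw [← hKdef] at h2P
    have hYT := hYTval v
    have hle : (insert (colV v) (LV v ∪ YT v)).card ≤ K := by
      have hcu := card_le_univ (insert (colV v) (LV v ∪ YT v))
      rwa [Fintype.card_fin] at hcu
    rw [hPtdef]
    rw [card_sdiff_of_subset (subset_univ _), card_univ, Fintype.card_fin,
      card_insert_of_notMem hnm, card_union_of_disjoint (hLVYTdisj v), hLVcard v]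
    rw [card_insert_of_notMem hnm, card_union_of_disjoint (hLVYTdisj v), hLVcard v] at hle
    omega
  choose fP hfP using hPex
  -- membership of the special vertices in their parts
  have hXmem : ∀ e ∈ G.edgeFinset, ∀ v ∈ e, g.x e v ∈ g.Xset := by
    intro e he v hv
    simp only [GadgetData.Xset, mem_biUnion, mem_image, mem_filter]
    exact ⟨e, he, v, ⟨mem_univ v, hv⟩, rfl⟩
  have hQmem : ∀ e ∈ G.edgeFinset, ∀ i : Fin 2, g.q e i ∈ g.Qset := by
    intro e he i
    simp only [GadgetData.Qset, mem_biUnion, mem_insert, mem_singleton]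
    refine ⟨e, he, ?_⟩
    fin_cases i
    · left; rfl
    · right; rfl
  -- the coloring
  set c : g.VH → Fin K := fun a =>
    if a = g.sstar then colS
    else if a ∈ g.Sleaves then (if a ∈ Lunion then fL a else fR a)
    else if a ∈ g.Acenters then colA a
    else if h : ∃ s, s ∈ g.Acenters ∧ a ∈ g.Aleaves s then fAL h.choose a
    else if h : ∃ v, a = g.orig v then colV h.choose
    else if h : ∃ v, a ∈ g.P v then fP h.choose a
    else if h : ∃ p : Sym2 V × V, p.1 ∈ G.edgeFinset ∧ p.2 ∈ p.1 ∧ a = g.x p.1 p.2 then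
      colX h.choose.1
    else if h : ∃ e, e ∈ G.edgeFinset ∧ a ∈ g.Y e then fY h.choose a
    else if h : ∃ e, e ∈ G.edgeFinset ∧ a ∈ g.Z e then fZ h.choose a
    else if h : ∃ p : Sym2 V × Fin 2, p.1 ∈ G.edgeFinset ∧ a = g.q p.1 p.2 then
      colQ h.choose.1 h.choose.2
    else d0
    with hcdef
  -- computation of the coloring on each part
  have hc_sstar : c g.sstar = colS := by
    simp only [hcdef]
    rw [if_pos trivial]
  have hc_U : ∀ a ∈ Lunion, c a = fL a := by
    intro a ha
    have hm : a ∈ g.Sleaves := hUsub ha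
    simp only [hcdef]
    rw [if_neg (fun h => disjoint_right.1 hd01 hm (by rw [← h]; exact mem_singleton_self a)),
      if_pos hm, if_pos ha]
  have hc_R : ∀ a ∈ g.Sleaves, a ∉ Lunion → c a = fR a := by
    intro a hm ha
    simp only [hcdef]
    rw [if_neg (fun h => disjoint_right.1 hd01 hm (by rw [← h]; exact mem_singleton_self a)),
      if_pos hm, if_neg ha]
  have hc_A : ∀ s ∈ g.Acenters, c s = colA s := by
    intro a hm
    simp only [hcdef]
    rw [if_neg (fun h => disjoint_right.1 hd02 hm (by rw [← h]; exact mem_singleton_self a)),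
      if_neg (disjoint_right.1 hd12 hm), if_pos hm]
  have hc_AL : ∀ s ∈ g.Acenters, ∀ a ∈ g.Aleaves s, c a = fAL s a := by
    intro s hs a ha
    have hm : a ∈ g.Acenters.biUnion g.Aleaves := mem_biUnion.2 ⟨s, hs, ha⟩
    simp only [hcdef]
    rw [if_neg (fun h => disjoint_right.1 hd03 hm (by rw [← h]; exact mem_singleton_self a)),
      if_neg (disjoint_right.1 hd13 hm), if_neg (disjoint_right.1 hd23 hm)]
    have hex : ∃ s', s' ∈ g.Acenters ∧ a ∈ g.Aleaves s' := ⟨s, hs, ha⟩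
    rw [dif_pos hex]
    obtain ⟨hs', ha'⟩ := hex.choose_spec
    by_cases hss : hex.choose = s
    · rw [hss]
    · exact absurd ha' (disjoint_right.1 (g.Aleaves_disjoint hex.choose hs' s hs hss) ha)
  have hc_orig : ∀ v : V, c (g.orig v) = colV v := by
    intro v
    have hm : g.orig v ∈ univ.image g.orig := mem_image_of_mem g.orig (mem_univ v)
    simp only [hcdef]
    rw [if_neg (fun h =>
        disjoint_right.1 hd04 hm (by rw [← h]; exact mem_singleton_self _)),
      if_neg (disjoint_right.1 hd14 hm), if_neg (disjoint_right.1 hd24 hm),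
      dif_neg (fun ⟨s, hs, ha⟩ => disjoint_right.1 hd34 hm (mem_biUnion.2 ⟨s, hs, ha⟩))]
    have hex : ∃ v', g.orig v = g.orig v' := ⟨v, rfl⟩
    rw [dif_pos hex]
    rw [g.orig_inj hex.choose_spec.symm]
  have hc_P : ∀ v : V, ∀ a ∈ g.P v, c a = fP v a := by
    intro v a ha
    have hm : a ∈ univ.biUnion g.P := mem_biUnion.2 ⟨v, mem_univ v, ha⟩
    simp only [hcdef]
    rw [if_neg (fun h =>
        disjoint_right.1 hd05 hm (by rw [← h]; exact mem_singleton_self _)),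
      if_neg (disjoint_right.1 hd15 hm), if_neg (disjoint_right.1 hd25 hm),
      dif_neg (fun ⟨s, hs, ha'⟩ => disjoint_right.1 hd35 hm (mem_biUnion.2 ⟨s, hs, ha'⟩)),
      dif_neg (fun ⟨v', hv'⟩ => disjoint_right.1 hd45 hm
        (by rw [hv']; exact mem_image_of_mem g.orig (mem_univ v')))]
    have hex : ∃ v', a ∈ g.P v' := ⟨v, ha⟩
    rw [dif_pos hex]
    by_cases hvv : hex.choose = v
    · rw [hvv]
    · exact absurd hex.choose_spec (disjoint_right.1 (g.P_disjoint hex.choose v hvv) ha)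
  have hc_x : ∀ e ∈ G.edgeFinset, ∀ v ∈ e, c (g.x e v) = colX e := by
    intro e he v hv
    have hm : g.x e v ∈ g.Xset := hXmem e he v hv
    simp only [hcdef]
    rw [if_neg (fun h =>
        disjoint_right.1 hd06 hm (by rw [← h]; exact mem_singleton_self _)),
      if_neg (disjoint_right.1 hd16 hm), if_neg (disjoint_right.1 hd26 hm),
      dif_neg (fun ⟨s, hs, ha'⟩ => disjoint_right.1 hd36 hm (mem_biUnion.2 ⟨s, hs, ha'⟩)),
      dif_neg (fun ⟨v', hv'⟩ => disjoint_right.1 hd46 hm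
        (by rw [hv']; exact mem_image_of_mem g.orig (mem_univ v'))),
      dif_neg (fun ⟨v', hv'⟩ => disjoint_right.1 hd56 hm (mem_biUnion.2 ⟨v', mem_univ v', hv'⟩))]
    have hex : ∃ p : Sym2 V × V, p.1 ∈ G.edgeFinset ∧ p.2 ∈ p.1 ∧ g.x e v = g.x p.1 p.2 :=
      ⟨(e, v), he, hv, rfl⟩
    rw [dif_pos hex]
    obtain ⟨hp1, hp2, hp3⟩ := hex.choose_spec
    have hpe := g.x_inj hex.choose.1 hp1 hex.choose.2 hp2 e he v hv hp3.symm
    rw [Prod.mk.injEq] at hpe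
    rw [hpe.1]
  have hc_Y : ∀ e ∈ G.edgeFinset, ∀ a ∈ g.Y e, c a = fY e a := by
    intro e he a ha
    have hm : a ∈ G.edgeFinset.biUnion g.Y := mem_biUnion.2 ⟨e, he, ha⟩
    simp only [hcdef]
    rw [if_neg (fun h =>
        disjoint_right.1 hd07 hm (by rw [← h]; exact mem_singleton_self _)),
      if_neg (disjoint_right.1 hd17 hm), if_neg (disjoint_right.1 hd27 hm),
      dif_neg (fun ⟨s, hs, ha'⟩ => disjoint_right.1 hd37 hm (mem_biUnion.2 ⟨s, hs, ha'⟩)),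
      dif_neg (fun ⟨v', hv'⟩ => disjoint_right.1 hd47 hm
        (by rw [hv']; exact mem_image_of_mem g.orig (mem_univ v'))),
      dif_neg (fun ⟨v', hv'⟩ => disjoint_right.1 hd57 hm (mem_biUnion.2 ⟨v', mem_univ v', hv'⟩)),
      dif_neg (fun ⟨p, hp1, hp2, hp3⟩ => disjoint_right.1 hd67 hm
        (by rw [hp3]; exact hXmem p.1 hp1 p.2 hp2))]
    have hex : ∃ e', e' ∈ G.edgeFinset ∧ a ∈ g.Y e' := ⟨e, he, ha⟩
    rw [dif_pos hex]
    obtain ⟨he', ha'⟩ := hex.choose_spec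
    by_cases hee : hex.choose = e
    · rw [hee]
    · exact absurd ha' (disjoint_right.1 (g.Y_disjoint hex.choose he' e he hee) ha)
  have hc_Z : ∀ e ∈ G.edgeFinset, ∀ a ∈ g.Z e, c a = fZ e a := by
    intro e he a ha
    have hm : a ∈ G.edgeFinset.biUnion g.Z := mem_biUnion.2 ⟨e, he, ha⟩
    simp only [hcdef]
    rw [if_neg (fun h =>
        disjoint_right.1 hd08 hm (by rw [← h]; exact mem_singleton_self _)),
      if_neg (disjoint_right.1 hd18 hm), if_neg (disjoint_right.1 hd28 hm),
      dif_neg (fun ⟨s, hs, ha'⟩ => disjoint_right.1 hd38 hm (mem_biUnion.2 ⟨s, hs, ha'⟩)),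
      dif_neg (fun ⟨v', hv'⟩ => disjoint_right.1 hd48 hm
        (by rw [hv']; exact mem_image_of_mem g.orig (mem_univ v'))),
      dif_neg (fun ⟨v', hv'⟩ => disjoint_right.1 hd58 hm (mem_biUnion.2 ⟨v', mem_univ v', hv'⟩)),
      dif_neg (fun ⟨p, hp1, hp2, hp3⟩ => disjoint_right.1 hd68 hm
        (by rw [hp3]; exact hXmem p.1 hp1 p.2 hp2)),
      dif_neg (fun ⟨e', he', ha'⟩ => disjoint_right.1 hd78 hm (mem_biUnion.2 ⟨e', he', ha'⟩))]
    have hex : ∃ e', e' ∈ G.edgeFinset ∧ a ∈ g.Z e' := ⟨e, he, ha⟩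
    rw [dif_pos hex]
    obtain ⟨he', ha'⟩ := hex.choose_spec
    by_cases hee : hex.choose = e
    · rw [hee]
    · exact absurd ha' (disjoint_right.1 (g.Z_disjoint hex.choose he' e he hee) ha)
  have hc_q : ∀ e ∈ G.edgeFinset, ∀ i : Fin 2, c (g.q e i) = colQ e i := by
    intro e he i
    have hm : g.q e i ∈ g.Qset := hQmem e he i
    simp only [hcdef]
    rw [if_neg (fun h =>
        disjoint_right.1 hd09 hm (by rw [← h]; exact mem_singleton_self _)),
      if_neg (disjoint_right.1 hd19 hm), if_neg (disjoint_right.1 hd29 hm),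
      dif_neg (fun ⟨s, hs, ha'⟩ => disjoint_right.1 hd39 hm (mem_biUnion.2 ⟨s, hs, ha'⟩)),
      dif_neg (fun ⟨v', hv'⟩ => disjoint_right.1 hd49 hm
        (by rw [hv']; exact mem_image_of_mem g.orig (mem_univ v'))),
      dif_neg (fun ⟨v', hv'⟩ => disjoint_right.1 hd59 hm (mem_biUnion.2 ⟨v', mem_univ v', hv'⟩)),
      dif_neg (fun ⟨p, hp1, hp2, hp3⟩ => disjoint_right.1 hd69 hm
        (by rw [hp3]; exact hXmem p.1 hp1 p.2 hp2)),
      dif_neg (fun ⟨e', he', ha'⟩ => disjoint_right.1 hd79 hm (mem_biUnion.2 ⟨e', he', ha'⟩)),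
      dif_neg (fun ⟨e', he', ha'⟩ => disjoint_right.1 hd89 hm (mem_biUnion.2 ⟨e', he', ha'⟩))]
    have hex : ∃ p : Sym2 V × Fin 2, p.1 ∈ G.edgeFinset ∧ g.q e i = g.q p.1 p.2 :=
      ⟨(e, i), he, rfl⟩
    rw [dif_pos hex]
    obtain ⟨hp1, hp2⟩ := hex.choose_spec
    have hpe := g.q_inj hex.choose.1 hp1 hex.choose.2 e he i hp2.symm
    rw [Prod.mk.injEq] at hpe
    rw [hpe.1, hpe.2]
  -- unfolding of the adjacency specification
  have hadjspec : ∀ a b : g.VH, g.toGadgetData.AdjSpec a b =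
      ((a = g.sstar ∧ b ∈ g.Sleaves) ∨
      (∃ s ∈ g.Acenters, a = s ∧ b ∈ g.Aleaves s) ∨
      (∃ v : V, a = g.orig v ∧ b ∈ g.P v) ∨
      (∃ e ∈ G.edgeFinset, ∃ v : V, v ∈ e ∧ a = g.orig v ∧ (b ∈ g.L e v ∨ b ∈ g.Y e)) ∨
      (∃ e ∈ G.edgeFinset, ∃ v : V, v ∈ e ∧ a = g.x e v ∧
        (b ∈ g.Y e ∨ b ∈ g.Z e ∨ b ∈ g.L e v)) ∨
      (∃ e ∈ G.edgeFinset, a = g.q e 0 ∧ b = g.q e 1) ∨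
      (∃ e ∈ G.edgeFinset, ∃ h : Fin 2, a = g.q e h ∧
        (b ∈ g.Z e ∨ (∃ v : V, v ∈ e ∧ b ∈ g.L e v) ∨ (∃ v : V, v ∈ e ∧ b = g.x e v)))) :=
    fun a b => rfl
  -- properness, one direction
  have hproper1 : ∀ a b : g.VH, g.toGadgetData.AdjSpec a b → c a ≠ c b := by
    intro a b hs
    rw [hadjspec] at hs
    rcases hs with ⟨rfl, hb⟩ | ⟨s, hs, rfl, hb⟩ | ⟨v, rfl, hb⟩ |
      ⟨e, he, v, hv, rfl, hb | hb⟩ | ⟨e, he, v, hv, rfl, hb | hb | hb⟩ |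
      ⟨e, he, rfl, rfl⟩ | ⟨e, he, i, rfl, hb | ⟨v, hv, hb⟩ | ⟨v, hv, rfl⟩⟩
    · -- superstar center vs superstar leaf
      rw [hc_sstar]
      by_cases hbU : b ∈ Lunion
      · rw [hc_U b hbU]
        obtain ⟨s, hs, hEq⟩ := hanonAC _ (hfL1 b hbU)
        rw [hEq]; exact hSA s hs
      · rw [hc_R b hb hbU]
        have hmem := hfR1 b (mem_sdiff.2 ⟨hb, hbU⟩)
        rw [mem_sdiff, mem_insert] at hmem
        intro hEq; exact hmem.2 (Or.inl hEq.symm)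
    · -- anonymous center vs its leaf
      rw [hc_A _ hs, hc_AL _ hs b hb]
      exact fun hEq => (mem_erase.1 ((hfAL _ hs).1 b hb)).1 hEq.symm
    · -- orig v vs P v
      rw [hc_orig v, hc_P v b hb]
      have hmem := (hfP v).1 b hb
      simp only [hPtdef, mem_sdiff, mem_insert, mem_univ, true_and] at hmem
      intro hEq; exact hmem (Or.inl hEq.symm)
    · -- orig v vs L e v
      rw [hc_orig v, hc_U b (hLUmem e he v hv b hb)]
      obtain ⟨s, hs, hEq⟩ := hanonAC _ (hfL1 b (hLUmem e he v hv b hb))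
      rw [hEq]; exact fun h => hAV s hs v h.symm
    · -- orig v vs Y e
      rw [hc_orig v, hc_Y e he b hb]
      obtain ⟨s, hs, hEq⟩ := hLcanon e he (o e) (ho_mem e he) _ ((hfY e he).1 b hb)
      rw [hEq]; exact fun h => hAV s hs v h.symm
    · -- x e v vs Y e
      rw [hc_x e he v hv, hc_Y e he b hb]
      obtain ⟨s, hs, hEq⟩ := hLcanon e he (o e) (ho_mem e he) _ ((hfY e he).1 b hb)
      rw [hEq]; exact fun h => hAX s hs e he h.symm
    · -- x e v vs Z e
      rw [hc_x e he v hv, hc_Z e he b hb]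
      have hmem := (hfZ e he).1 b hb
      simp only [hZtdef, mem_sdiff, mem_insert, mem_univ, true_and] at hmem
      intro hEq; exact hmem (Or.inl hEq.symm)
    · -- x e v vs L e v
      rw [hc_x e he v hv, hc_U b (hLUmem e he v hv b hb)]
      obtain ⟨s, hs, hEq⟩ := hanonAC _ (hfL1 b (hLUmem e he v hv b hb))
      rw [hEq]; exact fun h => hAX s hs e he h.symm
    · -- q e 0 vs q e 1
      rw [hc_q e he 0, hc_q e he 1]
      intro hEq
      exact absurd (hQinj e he 0 e he 1 hEq).2 (by decide)
    · -- q e i vs Z e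
      rw [hc_q e he i, hc_Z e he b hb]
      have hmem := (hfZ e he).1 b hb
      simp only [hZtdef, mem_sdiff, mem_insert, mem_univ, true_and] at hmem
      intro hEq
      fin_cases i
      · exact hmem (Or.inr (Or.inl hEq.symm))
      · exact hmem (Or.inr (Or.inr (Or.inl hEq.symm)))
    · -- q e i vs L e v
      rw [hc_q e he i, hc_U b (hLUmem e he v hv b hb)]
      obtain ⟨s, hs, hEq⟩ := hanonAC _ (hfL1 b (hLUmem e he v hv b hb))
      rw [hEq]; exact fun h => hAQ s hs e he i h.symm
    · -- q e i vs x e v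
      rw [hc_q e he i, hc_x e he v hv]
      exact hQX e he i e he
  have hproper : ∀ ⦃a b : g.VH⦄, g.H.Adj a b → c a ≠ c b := by
    intro a b hadj
    rcases (g.adj_iff a b).1 hadj with h | h
    · exact hproper1 a b h
    · exact (hproper1 b a h).symm
  -- adjacency constructors
  have hadj1 : ∀ a b : g.VH, g.toGadgetData.AdjSpec a b → g.H.Adj a b :=
    fun a b h => (g.adj_iff a b).2 (Or.inl h)
  have hA_sL : ∀ b ∈ g.Sleaves, g.H.Adj g.sstar b := by
    intro b hb
    exact hadj1 _ _ (by rw [hadjspec]; exact Or.inl ⟨rfl, hb⟩)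
  have hA_AL : ∀ s ∈ g.Acenters, ∀ b ∈ g.Aleaves s, g.H.Adj s b := by
    intro s hs b hb
    exact hadj1 _ _ (by rw [hadjspec]; exact Or.inr (Or.inl ⟨s, hs, rfl, hb⟩))
  have hA_oP : ∀ (v : V), ∀ b ∈ g.P v, g.H.Adj (g.orig v) b := by
    intro v b hb
    exact hadj1 _ _ (by rw [hadjspec]; exact Or.inr (Or.inr (Or.inl ⟨v, rfl, hb⟩)))
  have hA_oLY : ∀ e ∈ G.edgeFinset, ∀ v : V, v ∈ e → ∀ b : g.VH,
      (b ∈ g.L e v ∨ b ∈ g.Y e) → g.H.Adj (g.orig v) b := by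
    intro e he v hv b hb
    refine hadj1 _ _ ?_
    rw [hadjspec]
    exact Or.inr (Or.inr (Or.inr (Or.inl ⟨e, he, v, hv, rfl, hb⟩)))
  have hA_xYZL : ∀ e ∈ G.edgeFinset, ∀ v : V, v ∈ e → ∀ b : g.VH,
      (b ∈ g.Y e ∨ b ∈ g.Z e ∨ b ∈ g.L e v) → g.H.Adj (g.x e v) b := by
    intro e he v hv b hb
    refine hadj1 _ _ ?_
    rw [hadjspec]
    exact Or.inr (Or.inr (Or.inr (Or.inr (Or.inl ⟨e, he, v, hv, rfl, hb⟩))))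
  have hA_qq : ∀ e ∈ G.edgeFinset, ∀ i j : Fin 2, i ≠ j → g.H.Adj (g.q e i) (g.q e j) := by
    intro e he i j hij
    have hbase : g.H.Adj (g.q e 0) (g.q e 1) := hadj1 _ _ (by
      rw [hadjspec]
      exact Or.inr (Or.inr (Or.inr (Or.inr (Or.inr (Or.inl ⟨e, he, rfl, rfl⟩))))))
    fin_cases i <;> fin_cases j
    · exact absurd rfl hij
    · exact hbase
    · exact hbase.symm
    · exact absurd rfl hij
  have hA_qZLx : ∀ e ∈ G.edgeFinset, ∀ i : Fin 2, ∀ b : g.VH,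
      (b ∈ g.Z e ∨ (∃ v : V, v ∈ e ∧ b ∈ g.L e v) ∨ (∃ v : V, v ∈ e ∧ b = g.x e v)) →
      g.H.Adj (g.q e i) b := by
    intro e he i b hb
    refine hadj1 _ _ ?_
    rw [hadjspec]
    exact Or.inr (Or.inr (Or.inr (Or.inr (Or.inr (Or.inr ⟨e, he, i, rfl, hb⟩)))))
  have hA_xq : ∀ e ∈ G.edgeFinset, ∀ v : V, v ∈ e → ∀ i : Fin 2,
      g.H.Adj (g.x e v) (g.q e i) := by
    intro e he v hv i
    exact (hA_qZLx e he i _ (Or.inr (Or.inr ⟨v, hv, rfl⟩))).symm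
  -- surjectivity
  obtain ⟨s0, hs0⟩ : ∃ s0, s0 ∈ g.Acenters := by
    have hcA := g.card_Acenters
    obtain ⟨x, hx⟩ := card_pos.1 (by rw [hcA]; omega)
    exact ⟨x, hx⟩
  have hsurj : Function.Surjective c := by
    intro col
    by_cases hc0 : col = colA s0
    · exact ⟨s0, by rw [hc_A s0 hs0, hc0]⟩
    · obtain ⟨a, ha, hEq⟩ := (hfAL s0 hs0).2.2 col (mem_erase.2 ⟨hc0, mem_univ col⟩)
      exact ⟨a, by rw [hc_AL s0 hs0 a ha, hEq]⟩
  -- every color class contains a b-vertex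
  have h01 : ∀ i j : Fin 2, i ≠ j →
      (((0 : Fin 2) = i ∨ (0 : Fin 2) = j) ∧ ((1 : Fin 2) = i ∨ (1 : Fin 2) = j)) := by decide
  have hbv : ∀ col : Fin K, ∃ a : g.VH, c a = col ∧ IsBVertex g.H c a := by
    intro col
    rcases hcover col with rfl | ⟨s, hs, rfl⟩ | ⟨v, rfl⟩ | ⟨e, he, i, rfl⟩ | ⟨e, he, rfl⟩
    · -- the color of the superstar center
      refine ⟨g.sstar, hc_sstar, ?_⟩
      intro col' hne
      rw [hc_sstar] at hne
      by_cases hcU : col' ∈ AC'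
      · obtain ⟨a, ha, hEq⟩ := hfL3 col' hcU
        exact ⟨a, hA_sL a (hUsub ha), by rw [hc_U a ha, hEq]⟩
      · obtain ⟨a, ha, hEq⟩ := hfR3 col' (mem_sdiff.2 ⟨mem_univ _, by
          rw [mem_insert]; rintro (h | h); exacts [hne h, hcU h]⟩)
        have haS : a ∈ g.Sleaves := (mem_sdiff.1 ha).1
        have haU : a ∉ Lunion := (mem_sdiff.1 ha).2
        exact ⟨a, hA_sL a haS, by rw [hc_R a haS haU, hEq]⟩
    · -- the color of an anonymous center
      refine ⟨s, hc_A s hs, ?_⟩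
      intro col' hne
      rw [hc_A s hs] at hne
      obtain ⟨a, ha, hEq⟩ := (hfAL s hs).2.2 col' (mem_erase.2 ⟨hne, mem_univ _⟩)
      exact ⟨a, hA_AL s hs a ha, by rw [hc_AL s hs a ha, hEq]⟩
    · -- the color of an original vertex
      refine ⟨g.orig v, hc_orig v, ?_⟩
      intro col' hne
      rw [hc_orig v] at hne
      by_cases hLVc : col' ∈ LV v
      · rw [hLVdef] at hLVc
        simp only [mem_biUnion, mem_filter] at hLVc
        obtain ⟨e, ⟨he, hv⟩, hcol⟩ := hLVc
        obtain ⟨a, ha, hEq⟩ := mem_image.1 hcol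
        exact ⟨a, hA_oLY e he v hv a (Or.inl ha),
          by rw [hc_U a (hLUmem e he v hv a ha), hEq]⟩
      by_cases hYTc : col' ∈ YT v
      · rw [hYTdef] at hYTc
        simp only [mem_biUnion, mem_filter] at hYTc
        obtain ⟨e, ⟨he, hv, hov⟩, hcol⟩ := hYTc
        obtain ⟨y, hy, hEq⟩ := (hfY e he).2.2 col' hcol
        exact ⟨y, hA_oLY e he v hv y (Or.inr hy), by rw [hc_Y e he y hy, hEq]⟩
      · have hPtm : col' ∈ Pt v := by
          simp only [hPtdef, mem_sdiff, mem_univ, true_and, mem_insert, mem_union]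
          rintro (h | h | h)
          exacts [hne h, hLVc h, hYTc h]
        obtain ⟨a, ha, hEq⟩ := (hfP v).2.2 col' hPtm
        exact ⟨a, hA_oP v a ha, by rw [hc_P v a ha, hEq]⟩
    · -- the color of a q vertex
      refine ⟨g.q e i, hc_q e he i, ?_⟩
      intro col' hne
      rw [hc_q e he i] at hne
      obtain ⟨j, hij⟩ : ∃ j : Fin 2, i ≠ j := by
        fin_cases i
        exacts [⟨1, by decide⟩, ⟨0, by decide⟩]
      by_cases hj : col' = colQ e j
      · exact ⟨g.q e j, hA_qq e he i j hij, by rw [hc_q e he j, hj]⟩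
      by_cases hxc : col' = colX e
      · obtain ⟨u, w, huw, hEq⟩ := hedge e he
        have hu : u ∈ e := by rw [hEq]; exact Sym2.mem_mk_left u w
        exact ⟨g.x e u, hA_qZLx e he i _ (Or.inr (Or.inr ⟨u, hu, rfl⟩)),
          by rw [hc_x e he u hu, hxc]⟩
      by_cases hLBc : col' ∈ LB e
      · obtain ⟨v, hv, hcol⟩ := hLBrev e col' hLBc
        obtain ⟨a, ha, hEq⟩ := mem_image.1 hcol
        exact ⟨a, hA_qZLx e he i _ (Or.inr (Or.inl ⟨v, hv, ha⟩)),
          by rw [hc_U a (hLUmem e he v hv a ha), hEq]⟩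
      · have hZm : col' ∈ Zt e := by
          simp only [hZtdef, mem_sdiff, mem_univ, true_and, mem_insert]
          rintro (h | h | h | h)
          · exact hxc h
          · rcases (h01 i j hij).1 with h0 | h0
            · exact hne (h0 ▸ h)
            · exact hj (h0 ▸ h)
          · rcases (h01 i j hij).2 with h1 | h1
            · exact hne (h1 ▸ h)
            · exact hj (h1 ▸ h)
          · exact hLBc h
        obtain ⟨a, ha, hEq⟩ := (hfZ e he).2.2 col' hZm
        exact ⟨a, hA_qZLx e he i _ (Or.inl ha), by rw [hc_Z e he a ha, hEq]⟩
    · -- the color of the x vertices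
      obtain ⟨u, w, huw, hEq⟩ := hedge e he
      have hu : u ∈ e := by rw [hEq]; exact Sym2.mem_mk_left u w
      have hw : w ∈ e := by rw [hEq]; exact Sym2.mem_mk_right u w
      obtain ⟨t, ht, hto⟩ : ∃ t, t ∈ e ∧ t ≠ o e := by
        by_cases hou : o e = u
        · exact ⟨w, hw, fun h => huw (by rw [← hou, ← h])⟩
        · exact ⟨u, hu, fun h => hou h.symm⟩
      refine ⟨g.x e t, hc_x e he t ht, ?_⟩
      intro col' hne
      rw [hc_x e he t ht] at hne
      by_cases hq0 : col' = colQ e 0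
      · exact ⟨g.q e 0, hA_xq e he t ht 0, by rw [hc_q e he 0, hq0]⟩
      by_cases hq1 : col' = colQ e 1
      · exact ⟨g.q e 1, hA_xq e he t ht 1, by rw [hc_q e he 1, hq1]⟩
      by_cases hLBc : col' ∈ LB e
      · obtain ⟨v, hv, hcol⟩ := hLBrev e col' hLBc
        rcases htwo e he t (o e) v ht (ho_mem e he) hv hto with hvt | hvo
        · rw [hvt] at hcol
          obtain ⟨a, ha, hEq2⟩ := mem_image.1 hcol
          exact ⟨a, hA_xYZL e he t ht a (Or.inr (Or.inr ha)),
            by rw [hc_U a (hLUmem e he t ht a ha), hEq2]⟩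
        · rw [hvo] at hcol
          obtain ⟨y, hy, hEq2⟩ := (hfY e he).2.2 col' hcol
          exact ⟨y, hA_xYZL e he t ht y (Or.inl hy), by rw [hc_Y e he y hy, hEq2]⟩
      · have hZm : col' ∈ Zt e := by
          simp only [hZtdef, mem_sdiff, mem_univ, true_and, mem_insert]
          rintro (h | h | h | h)
          exacts [hne h, hq0 h, hq1 h, hLBc h]
        obtain ⟨a, ha, hEq2⟩ := (hfZ e he).2.2 col' hZm
        exact ⟨a, hA_xYZL e he t ht a (Or.inr (Or.inl ha)),
          by rw [hc_Z e he a ha, hEq2]⟩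
  exact ⟨c, hproper, hsurj, hbv⟩
end

section
/- In any b-coloring of the constructed graph H with k colors, for every edge e = uv of G it is not the case that x_{e,u} and x_{e,v} are both b-vertices with two distinct colors; that is, if both x_{e,u} and x_{e,v} are b-vertices for their colors, then they receive the same color. -/
open Finset

variable {V : Type*} [Fintype V] [DecidableEq V]

set_option maxHeartbeats 0 in
/-- In any b-coloring of `H` with `k` colors, for every edge `e = uv`
of `G`, if both `x_{e,u}` and `x_{e,v}` are b-vertices, then they have the same color. -/
theorem xvertices_not_bVertices_with_distinct_colors
    {V : Type*} [Fintype V] [DecidableEq V] (G : SimpleGraph V) [DecidableRel G.Adj]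
    (wt : Sym2 V → ℕ) (hconn : G.Connected)
    (hwt : ∀ e ∈ G.edgeFinset, 1 ≤ wt e)
    (heven : ∀ v : V, Even (vertW G wt v))
    (g : Gadget V G wt)
    (c : g.VH → Fin (numColors G wt)) (hc : IsBColoring g.H (numColors G wt) c) :
    ∀ e ∈ G.edgeFinset, ∀ u v : V, e = s(u, v) →
      IsBVertex g.H c (g.x e u) → IsBVertex g.H c (g.x e v) →
      c (g.x e u) = c (g.x e v) := by
  classical
  letI := g.fintypeVH
  letI := g.decEqVH
  letI := g.decAdj
  intro e he u v huv hbu hbv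
  exfalso
  have hpd := g.parts_disjoint
  simp only [GadgetData.parts, List.pairwise_cons, List.forall_mem_cons,
    List.forall_mem_nil, and_true, List.Pairwise.nil] at hpd
  obtain ⟨⟨d01, d02, d03, d04, d05, d06, d07, d08, d09⟩,
    ⟨d12, d13, d14, d15, d16, d17, d18, d19⟩,
    ⟨d23, d24, d25, d26, d27, d28, d29⟩,
    ⟨d34, d35, d36, d37, d38, d39⟩,
    ⟨d45, d46, d47, d48, d49⟩,
    ⟨d56, d57, d58, d59⟩,
    ⟨d67, d68, d69⟩,
    ⟨d78, d79⟩, d89, -⟩ := hpd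
  replace d09 := d09.1; replace d19 := d19.1; replace d29 := d29.1
  replace d39 := d39.1; replace d49 := d49.1; replace d59 := d59.1
  replace d69 := d69.1; replace d79 := d79.1; replace d89 := d89.1
  obtain ⟨hprop, hsurj, hbcol⟩ := hc
  have sym2rep : ∀ z : Sym2 V, ∃ a b : V, z = s(a, b) :=
    fun z => Sym2.ind (fun a b => ⟨a, b, rfl⟩) z
  have hkdef : numColors G wt = 2 * totW G wt + 3 * G.edgeFinset.card
      + Fintype.card V + 2 := rfl
  have hm1 : 1 ≤ G.edgeFinset.card := Finset.card_pos.mpr ⟨e, he⟩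
  have hW1 : 1 ≤ totW G wt := le_trans (hwt e he) (Finset.single_le_sum (fun i _ => Nat.zero_le _) he)
  have hk7 : 7 ≤ numColors G wt := by omega
  -- membership helpers
  have memX : ∀ e' ∈ G.edgeFinset, ∀ v' ∈ e', g.x e' v' ∈ g.Xset := by
    intro e' he' v' hv'
    simp only [GadgetData.Xset, Finset.mem_biUnion, Finset.mem_image, Finset.mem_filter]
    exact ⟨e', he', v', ⟨Finset.mem_univ _, hv'⟩, rfl⟩
  have memQ : ∀ e' ∈ G.edgeFinset, ∀ h : Fin 2, g.q e' h ∈ g.Qset := by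
    intro e' he' h
    simp only [GadgetData.Qset, Finset.mem_biUnion]
    refine ⟨e', he', ?_⟩
    fin_cases h <;> simp
  have memL : ∀ e' ∈ G.edgeFinset, ∀ v' ∈ e', ∀ a ∈ g.L e' v', a ∈ g.Sleaves :=
    fun e' he' v' hv' a ha => g.L_subset e' he' v' hv' ha
  have memA : ∀ s ∈ g.Acenters, ∀ a ∈ g.Aleaves s, a ∈ g.Acenters.biUnion g.Aleaves :=
    fun s hs a ha => Finset.mem_biUnion.mpr ⟨s, hs, ha⟩
  have memP : ∀ (v' : V), ∀ a ∈ g.P v', a ∈ (Finset.univ : Finset V).biUnion g.P :=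
    fun v' a ha => Finset.mem_biUnion.mpr ⟨v', Finset.mem_univ _, ha⟩
  have memY : ∀ e' ∈ G.edgeFinset, ∀ a ∈ g.Y e', a ∈ G.edgeFinset.biUnion g.Y :=
    fun e' he' a ha => Finset.mem_biUnion.mpr ⟨e', he', ha⟩
  have memZ : ∀ e' ∈ G.edgeFinset, ∀ a ∈ g.Z e', a ∈ G.edgeFinset.biUnion g.Z :=
    fun e' he' a ha => Finset.mem_biUnion.mpr ⟨e', he', ha⟩
  have memO : ∀ v' : V, g.orig v' ∈ (Finset.univ : Finset V).image g.orig :=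
    fun v' => Finset.mem_image_of_mem _ (Finset.mem_univ _)
  -- bound lemma: a b-vertex whose neighbourhood is inside S forces k-1 ≤ S.card
  have bnd : ∀ (a : g.VH) (S : Finset g.VH), IsBVertex g.H c a →
      (∀ b, g.H.Adj a b → b ∈ S) → numColors G wt - 1 ≤ S.card := by
    intro a S hb hsub
    classical
    have h1 : ((Finset.univ : Finset (Fin (numColors G wt))).erase (c a)).card ≤ S.card := by
      apply Finset.card_le_card_of_injOn
        (fun col => if h : col ≠ c a then (hb col h).choose else a)
      · intro col hcol
        have hne : col ≠ c a := (Finset.mem_erase.mp (Finset.mem_coe.mp hcol)).1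
        simp only [dif_pos hne]
        exact hsub _ (hb col hne).choose_spec.1
      · intro col1 h1 col2 h2 heq
        have hne1 : col1 ≠ c a := (Finset.mem_erase.mp (Finset.mem_coe.mp h1)).1
        have hne2 : col2 ≠ c a := (Finset.mem_erase.mp (Finset.mem_coe.mp h2)).1
        have e1 : c (if h : col1 ≠ c a then (hb col1 h).choose else a) = col1 := by
          simp only [dif_pos hne1]; exact (hb col1 hne1).choose_spec.2
        have e2 : c (if h : col2 ≠ c a then (hb col2 h).choose else a) = col2 := by
          simp only [dif_pos hne2]; exact (hb col2 hne2).choose_spec.2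
        exact e1.symm.trans ((congrArg c heq).trans e2)
    rwa [Finset.card_erase_of_mem (Finset.mem_univ _), Finset.card_univ,
      Fintype.card_fin] at h1
  have nm : ∀ {p q : Finset g.VH} {a : g.VH}, Disjoint p q → a ∈ p → a ∈ q → False :=
    fun d h1 h2 => Finset.disjoint_left.mp d h1 h2
  -- adjacency characterization for the x-vertices
  have adjX : ∀ e' ∈ G.edgeFinset, ∀ w' ∈ e', ∀ b : g.VH,
      g.H.Adj (g.x e' w') b ↔
        (b ∈ g.Y e' ∨ b ∈ g.Z e' ∨ b ∈ g.L e' w' ∨ b = g.q e' 0 ∨ b = g.q e' 1) := by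
    intro e' he' w' hw' b
    rw [g.adj_iff]
    constructor
    · rintro (hsp | hsp) <;> simp only [GadgetData.AdjSpec] at hsp <;>
        rcases hsp with ⟨h1a, h1b⟩ | ⟨s, hs, h2a, h2b⟩ | ⟨v0, h3a, h3b⟩ |
          ⟨e0, he0, v0, hv0, h4a, h4b⟩ | ⟨e0, he0, v0, hv0, h5a, h5b⟩ |
          ⟨e0, he0, h6a, h6b⟩ | ⟨e0, he0, h0, h7a, h7b⟩
      · exact absurd (h1a ▸ memX e' he' w' hw') (fun hh => nm d06 (Finset.mem_singleton_self _) hh)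
      · exact absurd (h2a ▸ memX e' he' w' hw') (fun hh => nm d26 hs hh)
      · exact absurd (h3a ▸ memX e' he' w' hw') (fun hh => nm d46 (memO v0) hh)
      · exact absurd (h4a ▸ memX e' he' w' hw') (fun hh => nm d46 (memO v0) hh)
      · have hee := g.x_inj e' he' w' hw' e0 he0 v0 hv0 h5a
        rw [Prod.mk.injEq] at hee
        obtain ⟨rfl, rfl⟩ := hee
        tauto
      · exact absurd (h6a ▸ memX e' he' w' hw') (fun hh => nm d69 hh (memQ e0 he0 0))
      · exact absurd (h7a ▸ memX e' he' w' hw') (fun hh => nm d69 hh (memQ e0 he0 h0))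
      · exact absurd h1b (fun hh => nm d16 hh (memX e' he' w' hw'))
      · exact absurd h2b (fun hh => nm d36 (memA s hs _ hh) (memX e' he' w' hw'))
      · exact absurd h3b (fun hh => nm d56 (memP v0 _ hh) (memX e' he' w' hw'))
      · rcases h4b with hh | hh
        · exact absurd (memL e0 he0 v0 hv0 _ hh) (fun h2 => nm d16 h2 (memX e' he' w' hw'))
        · exact absurd (memY e0 he0 _ hh) (fun h2 => nm d67 (memX e' he' w' hw') h2)
      · rcases h5b with hh | hh | hh
        · exact absurd (memY e0 he0 _ hh) (fun h2 => nm d67 (memX e' he' w' hw') h2)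
        · exact absurd (memZ e0 he0 _ hh) (fun h2 => nm d68 (memX e' he' w' hw') h2)
        · exact absurd (memL e0 he0 v0 hv0 _ hh) (fun h2 => nm d16 h2 (memX e' he' w' hw'))
      · exact absurd (h6b ▸ memX e' he' w' hw') (fun hh => nm d69 hh (memQ e0 he0 1))
      · rcases h7b with hh | ⟨v0, hv0, hh⟩ | ⟨v0, hv0, hh⟩
        · exact absurd (memZ e0 he0 _ hh) (fun h2 => nm d68 (memX e' he' w' hw') h2)
        · exact absurd (memL e0 he0 v0 hv0 _ hh) (fun h2 => nm d16 h2 (memX e' he' w' hw'))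
        · have hee := g.x_inj e' he' w' hw' e0 he0 v0 hv0 hh
          rw [Prod.mk.injEq] at hee
          obtain ⟨rfl, rfl⟩ := hee
          rw [h7a]
          fin_cases h0
          · tauto
          · tauto
    · rintro (hh | hh | hh | rfl | rfl)
      · exact Or.inl (Or.inr (Or.inr (Or.inr (Or.inr (Or.inl
          ⟨e', he', w', hw', rfl, Or.inl hh⟩)))))
      · exact Or.inl (Or.inr (Or.inr (Or.inr (Or.inr (Or.inl
          ⟨e', he', w', hw', rfl, Or.inr (Or.inl hh)⟩)))))
      · exact Or.inl (Or.inr (Or.inr (Or.inr (Or.inr (Or.inl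
          ⟨e', he', w', hw', rfl, Or.inr (Or.inr hh)⟩)))))
      · exact Or.inr (Or.inr (Or.inr (Or.inr (Or.inr (Or.inr (Or.inr
          ⟨e', he', 0, rfl, Or.inr (Or.inr ⟨w', hw', rfl⟩)⟩))))))
      · exact Or.inr (Or.inr (Or.inr (Or.inr (Or.inr (Or.inr (Or.inr
          ⟨e', he', 1, rfl, Or.inr (Or.inr ⟨w', hw', rfl⟩)⟩))))))
  have adjQx : ∀ e' ∈ G.edgeFinset, ∀ h : Fin 2, ∀ v' ∈ e', g.H.Adj (g.q e' h) (g.x e' v') := by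
    intro e' he' h v' hv'
    rw [g.adj_iff]
    exact Or.inl (Or.inr (Or.inr (Or.inr (Or.inr (Or.inr (Or.inr
      ⟨e', he', h, rfl, Or.inr (Or.inr ⟨v', hv', rfl⟩)⟩))))))
  have adjQL : ∀ e' ∈ G.edgeFinset, ∀ h : Fin 2, ∀ v' ∈ e', ∀ b ∈ g.L e' v',
      g.H.Adj (g.q e' h) b := by
    intro e' he' h v' hv' b hb
    rw [g.adj_iff]
    exact Or.inl (Or.inr (Or.inr (Or.inr (Or.inr (Or.inr (Or.inr
      ⟨e', he', h, rfl, Or.inr (Or.inl ⟨v', hv', hb⟩)⟩))))))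
  have adjQZ : ∀ e' ∈ G.edgeFinset, ∀ h : Fin 2, ∀ b ∈ g.Z e',
      g.H.Adj (g.q e' h) b := by
    intro e' he' h b hb
    rw [g.adj_iff]
    exact Or.inl (Or.inr (Or.inr (Or.inr (Or.inr (Or.inr (Or.inr
      ⟨e', he', h, rfl, Or.inl hb⟩))))))
  have adjQ : ∀ e' ∈ G.edgeFinset, ∀ h : Fin 2, ∀ b : g.VH, g.H.Adj (g.q e' h) b →
      (b ∈ g.Z e' ∨ (∃ v', v' ∈ e' ∧ b ∈ g.L e' v') ∨
        (∃ v', v' ∈ e' ∧ b = g.x e' v') ∨ b = g.q e' 0 ∨ b = g.q e' 1) := by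
    intro e' he' h b hadj
    rw [g.adj_iff] at hadj
    rcases hadj with hsp | hsp <;> simp only [GadgetData.AdjSpec] at hsp <;>
      rcases hsp with ⟨h1a, h1b⟩ | ⟨s, hs, h2a, h2b⟩ | ⟨v0, h3a, h3b⟩ |
        ⟨e0, he0, v0, hv0, h4a, h4b⟩ | ⟨e0, he0, v0, hv0, h5a, h5b⟩ |
        ⟨e0, he0, h6a, h6b⟩ | ⟨e0, he0, h0, h7a, h7b⟩
    · exact absurd (h1a ▸ memQ e' he' h) (fun hh => nm d09 (Finset.mem_singleton_self _) hh)
    · exact absurd (h2a ▸ memQ e' he' h) (fun hh => nm d29 hs hh)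
    · exact absurd (h3a ▸ memQ e' he' h) (fun hh => nm d49 (memO v0) hh)
    · exact absurd (h4a ▸ memQ e' he' h) (fun hh => nm d49 (memO v0) hh)
    · exact absurd (h5a ▸ memQ e' he' h) (fun hh => nm d69 (memX e0 he0 v0 hv0) hh)
    · have hee := g.q_inj e' he' h e0 he0 0 h6a
      rw [Prod.mk.injEq] at hee
      obtain ⟨rfl, rfl⟩ := hee
      exact Or.inr (Or.inr (Or.inr (Or.inr h6b)))
    · have hee := g.q_inj e' he' h e0 he0 h0 h7a
      rw [Prod.mk.injEq] at hee
      obtain ⟨rfl, rfl⟩ := hee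
      rcases h7b with hz | hl | hx
      · exact Or.inl hz
      · exact Or.inr (Or.inl hl)
      · exact Or.inr (Or.inr (Or.inl hx))
    · exact absurd h1b (fun hh => nm d19 hh (memQ e' he' h))
    · exact absurd h2b (fun hh => nm d39 (memA s hs _ hh) (memQ e' he' h))
    · exact absurd h3b (fun hh => nm d59 (memP v0 _ hh) (memQ e' he' h))
    · rcases h4b with hh | hh
      · exact absurd (memL e0 he0 v0 hv0 _ hh) (fun h2 => nm d19 h2 (memQ e' he' h))
      · exact absurd (memY e0 he0 _ hh) (fun h2 => nm d79 h2 (memQ e' he' h))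
    · rcases h5b with hh | hh | hh
      · exact absurd (memY e0 he0 _ hh) (fun h2 => nm d79 h2 (memQ e' he' h))
      · exact absurd (memZ e0 he0 _ hh) (fun h2 => nm d89 h2 (memQ e' he' h))
      · exact absurd (memL e0 he0 v0 hv0 _ hh) (fun h2 => nm d19 h2 (memQ e' he' h))
    · have hee := g.q_inj e' he' h e0 he0 1 h6b
      rw [Prod.mk.injEq] at hee
      obtain ⟨rfl, rfl⟩ := hee
      exact Or.inr (Or.inr (Or.inr (Or.inl h6a)))
    · rcases h7b with hh | ⟨v0, hv0, hh⟩ | ⟨v0, hv0, hh⟩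
      · exact absurd (memZ e0 he0 _ hh) (fun h2 => nm d89 h2 (memQ e' he' h))
      · exact absurd (memL e0 he0 v0 hv0 _ hh) (fun h2 => nm d19 h2 (memQ e' he' h))
      · exact absurd (hh ▸ memQ e' he' h) (fun h2 => nm d69 (memX e0 he0 v0 hv0) h2)
  have card5 : ∀ a1 a2 a3 a4 a5 : g.VH, ({a1, a2, a3, a4, a5} : Finset g.VH).card ≤ 5 := by
    intro a1 a2 a3 a4 a5
    have h1 := Finset.card_insert_le a1 ({a2, a3, a4, a5} : Finset g.VH)
    have h2 := Finset.card_insert_le a2 ({a3, a4, a5} : Finset g.VH)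
    have h3 := Finset.card_insert_le a3 ({a4, a5} : Finset g.VH)
    have h4 := Finset.card_insert_le a4 ({a5} : Finset g.VH)
    have h5 : ({a5} : Finset g.VH).card = 1 := Finset.card_singleton _
    omega
  have card4 : ∀ a1 a2 a3 a4 : g.VH, ({a1, a2, a3, a4} : Finset g.VH).card ≤ 4 := by
    intro a1 a2 a3 a4
    have h2 := Finset.card_insert_le a1 ({a2, a3, a4} : Finset g.VH)
    have h3 := Finset.card_insert_le a2 ({a3, a4} : Finset g.VH)
    have h4 := Finset.card_insert_le a3 ({a4} : Finset g.VH)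
    have h5 : ({a4} : Finset g.VH).card = 1 := Finset.card_singleton _
    omega
  have card3 : ∀ a1 a2 a3 : g.VH, ({a1, a2, a3} : Finset g.VH).card ≤ 3 := by
    intro a1 a2 a3
    have h3 := Finset.card_insert_le a1 ({a2, a3} : Finset g.VH)
    have h4 := Finset.card_insert_le a2 ({a3} : Finset g.VH)
    have h5 : ({a3} : Finset g.VH).card = 1 := Finset.card_singleton _
    omega
  have card2 : ∀ a1 a2 : g.VH, ({a1, a2} : Finset g.VH).card ≤ 2 := by
    intro a1 a2
    have h4 := Finset.card_insert_le a1 ({a2} : Finset g.VH)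
    have h5 : ({a2} : Finset g.VH).card = 1 := Finset.card_singleton _
    omega
  -- every b-vertex lies in bigSet
  have hBV_mem : ∀ a : g.VH, IsBVertex g.H c a → a ∈ g.bigSet := by
    intro a hb
    obtain ⟨p, hp, hap⟩ := g.parts_cover a
    simp only [GadgetData.parts, List.mem_cons, List.not_mem_nil, or_false] at hp
    have goodmem : a ∈ ({g.sstar} : Finset g.VH) ∨ a ∈ Finset.univ.image g.orig ∨
        a ∈ g.Qset ∨ a ∈ g.Acenters ∨ a ∈ g.Xset → a ∈ g.bigSet := by
      intro hh
      simp only [GadgetData.bigSet, Finset.mem_union]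
      tauto
    rcases hp with rfl | rfl | rfl | rfl | rfl | rfl | rfl | rfl | rfl | rfl
    · exact goodmem (Or.inl hap)
    · -- a ∈ Sleaves
      exfalso
      by_cases hex : ∃ e', e' ∈ G.edgeFinset ∧ ∃ v', v' ∈ e' ∧ a ∈ g.L e' v'
      · obtain ⟨e0, he0, v0, hv0, haL⟩ := hex
        have hsub : ∀ b, g.H.Adj a b →
            b ∈ ({g.sstar, g.orig v0, g.x e0 v0, g.q e0 0, g.q e0 1} : Finset g.VH) := by
          intro b hadj
          rw [g.adj_iff] at hadj
          rcases hadj with hsp | hsp <;> simp only [GadgetData.AdjSpec] at hsp <;>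
            rcases hsp with ⟨h1a, h1b⟩ | ⟨s, hs, h2a, h2b⟩ | ⟨v1, h3a, h3b⟩ |
              ⟨e1, he1, v1, hv1, h4a, h4b⟩ | ⟨e1, he1, v1, hv1, h5a, h5b⟩ |
              ⟨e1, he1, h6a, h6b⟩ | ⟨e1, he1, h1, h7a, h7b⟩
          · exact absurd (h1a ▸ hap) (fun hh => nm d01 (Finset.mem_singleton_self _) hh)
          · exact absurd (h2a ▸ hap) (fun hh => nm d12 hh hs)
          · exact absurd (h3a ▸ hap) (fun hh => nm d14 hh (memO v1))
          · exact absurd (h4a ▸ hap) (fun hh => nm d14 hh (memO v1))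
          · exact absurd (h5a ▸ hap) (fun hh => nm d16 hh (memX e1 he1 v1 hv1))
          · exact absurd (h6a ▸ hap) (fun hh => nm d19 hh (memQ e1 he1 0))
          · exact absurd (h7a ▸ hap) (fun hh => nm d19 hh (memQ e1 he1 h1))
          · simp [h1a]
          · exact absurd hap (fun hh => nm d13 hh (memA s hs _ h2b))
          · exact absurd hap (fun hh => nm d15 hh (memP v1 _ h3b))
          · rcases h4b with hh | hh
            · by_cases hpq : (e1, v1) = (e0, v0)
              · rw [Prod.mk.injEq] at hpq
                obtain ⟨rfl, rfl⟩ := hpq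
                simp [h4a]
              · exact absurd haL (fun h2 => nm (g.L_disjoint e1 he1 v1 hv1 e0 he0 v0 hv0 hpq) hh h2)
            · exact absurd hap (fun h2 => nm d17 h2 (memY e1 he1 _ hh))
          · rcases h5b with hh | hh | hh
            · exact absurd hap (fun h2 => nm d17 h2 (memY e1 he1 _ hh))
            · exact absurd hap (fun h2 => nm d18 h2 (memZ e1 he1 _ hh))
            · by_cases hpq : (e1, v1) = (e0, v0)
              · rw [Prod.mk.injEq] at hpq
                obtain ⟨rfl, rfl⟩ := hpq
                simp [h5a]
              · exact absurd haL (fun h2 => nm (g.L_disjoint e1 he1 v1 hv1 e0 he0 v0 hv0 hpq) hh h2)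
          · exact absurd (h6b ▸ hap) (fun hh => nm d19 hh (memQ e1 he1 1))
          · rcases h7b with hh | ⟨v1, hv1, hh⟩ | ⟨v1, hv1, hh⟩
            · exact absurd hap (fun h2 => nm d18 h2 (memZ e1 he1 _ hh))
            · by_cases hpq : (e1, v1) = (e0, v0)
              · rw [Prod.mk.injEq] at hpq
                obtain ⟨rfl, rfl⟩ := hpq
                fin_cases h1 <;> simp [h7a]
              · exact absurd hh (fun h2 => nm (g.L_disjoint e1 he1 v1 hv1 e0 he0 v0 hv0 hpq) h2 haL)
            · exact absurd (hh ▸ hap) (fun h2 => nm d16 h2 (memX e1 he1 v1 hv1))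
        have hb5 := bnd a _ hb hsub
        have := card5 g.sstar (g.orig v0) (g.x e0 v0) (g.q e0 0) (g.q e0 1)
        omega
      · push_neg at hex
        have hsub : ∀ b, g.H.Adj a b → b ∈ ({g.sstar} : Finset g.VH) := by
          intro b hadj
          rw [g.adj_iff] at hadj
          rcases hadj with hsp | hsp <;> simp only [GadgetData.AdjSpec] at hsp <;>
            rcases hsp with ⟨h1a, h1b⟩ | ⟨s, hs, h2a, h2b⟩ | ⟨v1, h3a, h3b⟩ |
              ⟨e1, he1, v1, hv1, h4a, h4b⟩ | ⟨e1, he1, v1, hv1, h5a, h5b⟩ |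
              ⟨e1, he1, h6a, h6b⟩ | ⟨e1, he1, h1, h7a, h7b⟩
          · exact absurd (h1a ▸ hap) (fun hh => nm d01 (Finset.mem_singleton_self _) hh)
          · exact absurd (h2a ▸ hap) (fun hh => nm d12 hh hs)
          · exact absurd (h3a ▸ hap) (fun hh => nm d14 hh (memO v1))
          · exact absurd (h4a ▸ hap) (fun hh => nm d14 hh (memO v1))
          · exact absurd (h5a ▸ hap) (fun hh => nm d16 hh (memX e1 he1 v1 hv1))
          · exact absurd (h6a ▸ hap) (fun hh => nm d19 hh (memQ e1 he1 0))
          · exact absurd (h7a ▸ hap) (fun hh => nm d19 hh (memQ e1 he1 h1))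
          · simp [h1a]
          · exact absurd hap (fun hh => nm d13 hh (memA s hs _ h2b))
          · exact absurd hap (fun hh => nm d15 hh (memP v1 _ h3b))
          · rcases h4b with hh | hh
            · exact absurd hh (hex e1 he1 v1 hv1)
            · exact absurd hap (fun h2 => nm d17 h2 (memY e1 he1 _ hh))
          · rcases h5b with hh | hh | hh
            · exact absurd hap (fun h2 => nm d17 h2 (memY e1 he1 _ hh))
            · exact absurd hap (fun h2 => nm d18 h2 (memZ e1 he1 _ hh))
            · exact absurd hh (hex e1 he1 v1 hv1)
          · exact absurd (h6b ▸ hap) (fun hh => nm d19 hh (memQ e1 he1 1))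
          · rcases h7b with hh | ⟨v1, hv1, hh⟩ | ⟨v1, hv1, hh⟩
            · exact absurd hap (fun h2 => nm d18 h2 (memZ e1 he1 _ hh))
            · exact absurd hh (hex e1 he1 v1 hv1)
            · exact absurd (hh ▸ hap) (fun h2 => nm d16 h2 (memX e1 he1 v1 hv1))
        have hb5 := bnd a _ hb hsub
        have : ({g.sstar} : Finset g.VH).card = 1 := Finset.card_singleton _
        omega
    · exact goodmem (Or.inr (Or.inr (Or.inr (Or.inl hap))))
    · -- a ∈ Aleaves-biUnion
      exfalso
      have hsub : ∀ b, g.H.Adj a b → b ∈ g.Acenters := by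
        intro b hadj
        rw [g.adj_iff] at hadj
        rcases hadj with hsp | hsp <;> simp only [GadgetData.AdjSpec] at hsp <;>
          rcases hsp with ⟨h1a, h1b⟩ | ⟨s, hs, h2a, h2b⟩ | ⟨v1, h3a, h3b⟩ |
            ⟨e1, he1, v1, hv1, h4a, h4b⟩ | ⟨e1, he1, v1, hv1, h5a, h5b⟩ |
            ⟨e1, he1, h6a, h6b⟩ | ⟨e1, he1, h1, h7a, h7b⟩
        · exact absurd (h1a ▸ hap) (fun hh => nm d03 (Finset.mem_singleton_self _) hh)
        · exact absurd (h2a ▸ hap) (fun hh => nm d23 hs hh)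
        · exact absurd (h3a ▸ hap) (fun hh => nm d34 hh (memO v1))
        · exact absurd (h4a ▸ hap) (fun hh => nm d34 hh (memO v1))
        · exact absurd (h5a ▸ hap) (fun hh => nm d36 hh (memX e1 he1 v1 hv1))
        · exact absurd (h6a ▸ hap) (fun hh => nm d39 hh (memQ e1 he1 0))
        · exact absurd (h7a ▸ hap) (fun hh => nm d39 hh (memQ e1 he1 h1))
        · exact absurd hap (fun hh => nm d13 h1b hh)
        · exact h2a ▸ hs
        · exact absurd hap (fun hh => nm d35 hh (memP v1 _ h3b))
        · rcases h4b with hh | hh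
          · exact absurd hap (fun h2 => nm d13 (memL e1 he1 v1 hv1 _ hh) h2)
          · exact absurd hap (fun h2 => nm d37 h2 (memY e1 he1 _ hh))
        · rcases h5b with hh | hh | hh
          · exact absurd hap (fun h2 => nm d37 h2 (memY e1 he1 _ hh))
          · exact absurd hap (fun h2 => nm d38 h2 (memZ e1 he1 _ hh))
          · exact absurd hap (fun h2 => nm d13 (memL e1 he1 v1 hv1 _ hh) h2)
        · exact absurd (h6b ▸ hap) (fun hh => nm d39 hh (memQ e1 he1 1))
        · rcases h7b with hh | ⟨v1, hv1, hh⟩ | ⟨v1, hv1, hh⟩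
          · exact absurd hap (fun h2 => nm d38 h2 (memZ e1 he1 _ hh))
          · exact absurd hap (fun h2 => nm d13 (memL e1 he1 v1 hv1 _ hh) h2)
          · exact absurd (hh ▸ hap) (fun h2 => nm d36 h2 (memX e1 he1 v1 hv1))
      have hb5 := bnd a _ hb hsub
      have hAc := g.card_Acenters
      omega
    · exact goodmem (Or.inr (Or.inl hap))
    · -- a ∈ P-biUnion
      exfalso
      have hsub : ∀ b, g.H.Adj a b → b ∈ Finset.univ.image g.orig := by
        intro b hadj
        rw [g.adj_iff] at hadj
        rcases hadj with hsp | hsp <;> simp only [GadgetData.AdjSpec] at hsp <;>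
          rcases hsp with ⟨h1a, h1b⟩ | ⟨s, hs, h2a, h2b⟩ | ⟨v1, h3a, h3b⟩ |
            ⟨e1, he1, v1, hv1, h4a, h4b⟩ | ⟨e1, he1, v1, hv1, h5a, h5b⟩ |
            ⟨e1, he1, h6a, h6b⟩ | ⟨e1, he1, h1, h7a, h7b⟩
        · exact absurd (h1a ▸ hap) (fun hh => nm d05 (Finset.mem_singleton_self _) hh)
        · exact absurd (h2a ▸ hap) (fun hh => nm d25 hs hh)
        · exact absurd (h3a ▸ hap) (fun hh => nm d45 (memO v1) hh)
        · exact absurd (h4a ▸ hap) (fun hh => nm d45 (memO v1) hh)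
        · exact absurd (h5a ▸ hap) (fun hh => nm d56 hh (memX e1 he1 v1 hv1))
        · exact absurd (h6a ▸ hap) (fun hh => nm d59 hh (memQ e1 he1 0))
        · exact absurd (h7a ▸ hap) (fun hh => nm d59 hh (memQ e1 he1 h1))
        · exact absurd hap (fun hh => nm d15 h1b hh)
        · exact absurd hap (fun hh => nm d35 (memA s hs _ h2b) hh)
        · exact h3a ▸ memO v1
        · rcases h4b with hh | hh
          · exact absurd hap (fun h2 => nm d15 (memL e1 he1 v1 hv1 _ hh) h2)
          · exact absurd hap (fun h2 => nm d57 h2 (memY e1 he1 _ hh))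
        · rcases h5b with hh | hh | hh
          · exact absurd hap (fun h2 => nm d57 h2 (memY e1 he1 _ hh))
          · exact absurd hap (fun h2 => nm d58 h2 (memZ e1 he1 _ hh))
          · exact absurd hap (fun h2 => nm d15 (memL e1 he1 v1 hv1 _ hh) h2)
        · exact absurd (h6b ▸ hap) (fun hh => nm d59 hh (memQ e1 he1 1))
        · rcases h7b with hh | ⟨v1, hv1, hh⟩ | ⟨v1, hv1, hh⟩
          · exact absurd hap (fun h2 => nm d58 h2 (memZ e1 he1 _ hh))
          · exact absurd hap (fun h2 => nm d15 (memL e1 he1 v1 hv1 _ hh) h2)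
          · exact absurd (hh ▸ hap) (fun h2 => nm d56 h2 (memX e1 he1 v1 hv1))
      have hb5 := bnd a _ hb hsub
      have himg : (Finset.univ.image g.orig).card ≤ Fintype.card V :=
        le_trans (Finset.card_image_le) (le_of_eq (Finset.card_univ))
      omega
    · exact goodmem (Or.inr (Or.inr (Or.inr (Or.inr hap))))
    · -- a ∈ Y-biUnion
      exfalso
      obtain ⟨e0, he0, haY⟩ := Finset.mem_biUnion.mp hap
      obtain ⟨u0, v0, he0eq⟩ := sym2rep e0
      have hu0 : u0 ∈ e0 := by rw [he0eq]; exact Sym2.mem_mk_left _ _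
      have hv0 : v0 ∈ e0 := by rw [he0eq]; exact Sym2.mem_mk_right _ _
      have hsub : ∀ b, g.H.Adj a b →
          b ∈ ({g.orig u0, g.orig v0, g.x e0 u0, g.x e0 v0} : Finset g.VH) := by
        intro b hadj
        rw [g.adj_iff] at hadj
        rcases hadj with hsp | hsp <;> simp only [GadgetData.AdjSpec] at hsp <;>
          rcases hsp with ⟨h1a, h1b⟩ | ⟨s, hs, h2a, h2b⟩ | ⟨v1, h3a, h3b⟩ |
            ⟨e1, he1, v1, hv1, h4a, h4b⟩ | ⟨e1, he1, v1, hv1, h5a, h5b⟩ |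
            ⟨e1, he1, h6a, h6b⟩ | ⟨e1, he1, h1, h7a, h7b⟩
        · exact absurd (h1a ▸ hap) (fun hh => nm d07 (Finset.mem_singleton_self _) hh)
        · exact absurd (h2a ▸ hap) (fun hh => nm d27 hs hh)
        · exact absurd (h3a ▸ hap) (fun hh => nm d47 (memO v1) hh)
        · exact absurd (h4a ▸ hap) (fun hh => nm d47 (memO v1) hh)
        · exact absurd (h5a ▸ hap) (fun hh => nm d67 (memX e1 he1 v1 hv1) hh)
        · exact absurd (h6a ▸ hap) (fun hh => nm d79 hh (memQ e1 he1 0))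
        · exact absurd (h7a ▸ hap) (fun hh => nm d79 hh (memQ e1 he1 h1))
        · exact absurd hap (fun hh => nm d17 h1b hh)
        · exact absurd hap (fun hh => nm d37 (memA s hs _ h2b) hh)
        · exact absurd hap (fun hh => nm d57 (memP v1 _ h3b) hh)
        · rcases h4b with hh | hh
          · exact absurd hap (fun h2 => nm d17 (memL e1 he1 v1 hv1 _ hh) h2)
          · have he10 : e1 = e0 := by
              by_contra hne
              exact nm (g.Y_disjoint e1 he1 e0 he0 hne) hh haY
            subst he10
            have : v1 = u0 ∨ v1 = v0 := by
              rw [he0eq] at hv1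
              exact Sym2.mem_iff.mp hv1
            rcases this with rfl | rfl <;> simp [h4a]
        · rcases h5b with hh | hh | hh
          · have he10 : e1 = e0 := by
              by_contra hne
              exact nm (g.Y_disjoint e1 he1 e0 he0 hne) hh haY
            subst he10
            have : v1 = u0 ∨ v1 = v0 := by
              rw [he0eq] at hv1
              exact Sym2.mem_iff.mp hv1
            rcases this with rfl | rfl <;> simp [h5a]
          · exact absurd hap (fun h2 => nm d78 h2 (memZ e1 he1 _ hh))
          · exact absurd hap (fun h2 => nm d17 (memL e1 he1 v1 hv1 _ hh) h2)
        · exact absurd (h6b ▸ hap) (fun hh => nm d79 hh (memQ e1 he1 1))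
        · rcases h7b with hh | ⟨v1, hv1, hh⟩ | ⟨v1, hv1, hh⟩
          · exact absurd hap (fun h2 => nm d78 h2 (memZ e1 he1 _ hh))
          · exact absurd hap (fun h2 => nm d17 (memL e1 he1 v1 hv1 _ hh) h2)
          · exact absurd (hh ▸ hap) (fun h2 => nm d67 (memX e1 he1 v1 hv1) h2)
      have hb5 := bnd a _ hb hsub
      have := card4 (g.orig u0) (g.orig v0) (g.x e0 u0) (g.x e0 v0)
      omega
    · -- a ∈ Z-biUnion
      exfalso
      obtain ⟨e0, he0, haZ⟩ := Finset.mem_biUnion.mp hap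
      obtain ⟨u0, v0, he0eq⟩ := sym2rep e0
      have hu0 : u0 ∈ e0 := by rw [he0eq]; exact Sym2.mem_mk_left _ _
      have hv0 : v0 ∈ e0 := by rw [he0eq]; exact Sym2.mem_mk_right _ _
      have hsub : ∀ b, g.H.Adj a b →
          b ∈ ({g.x e0 u0, g.x e0 v0, g.q e0 0, g.q e0 1} : Finset g.VH) := by
        intro b hadj
        rw [g.adj_iff] at hadj
        rcases hadj with hsp | hsp <;> simp only [GadgetData.AdjSpec] at hsp <;>
          rcases hsp with ⟨h1a, h1b⟩ | ⟨s, hs, h2a, h2b⟩ | ⟨v1, h3a, h3b⟩ |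
            ⟨e1, he1, v1, hv1, h4a, h4b⟩ | ⟨e1, he1, v1, hv1, h5a, h5b⟩ |
            ⟨e1, he1, h6a, h6b⟩ | ⟨e1, he1, h1, h7a, h7b⟩
        · exact absurd (h1a ▸ hap) (fun hh => nm d08 (Finset.mem_singleton_self _) hh)
        · exact absurd (h2a ▸ hap) (fun hh => nm d28 hs hh)
        · exact absurd (h3a ▸ hap) (fun hh => nm d48 (memO v1) hh)
        · exact absurd (h4a ▸ hap) (fun hh => nm d48 (memO v1) hh)
        · exact absurd (h5a ▸ hap) (fun hh => nm d68 (memX e1 he1 v1 hv1) hh)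
        · exact absurd (h6a ▸ hap) (fun hh => nm d89 hh (memQ e1 he1 0))
        · exact absurd (h7a ▸ hap) (fun hh => nm d89 hh (memQ e1 he1 h1))
        · exact absurd hap (fun hh => nm d18 h1b hh)
        · exact absurd hap (fun hh => nm d38 (memA s hs _ h2b) hh)
        · exact absurd hap (fun hh => nm d58 (memP v1 _ h3b) hh)
        · rcases h4b with hh | hh
          · exact absurd hap (fun h2 => nm d18 (memL e1 he1 v1 hv1 _ hh) h2)
          · exact absurd hap (fun h2 => nm d78 (memY e1 he1 _ hh) h2)
        · rcases h5b with hh | hh | hh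
          · exact absurd hap (fun h2 => nm d78 (memY e1 he1 _ hh) h2)
          · have he10 : e1 = e0 := by
              by_contra hne
              exact nm (g.Z_disjoint e1 he1 e0 he0 hne) hh haZ
            subst he10
            have : v1 = u0 ∨ v1 = v0 := by
              rw [he0eq] at hv1
              exact Sym2.mem_iff.mp hv1
            rcases this with rfl | rfl <;> simp [h5a]
          · exact absurd hap (fun h2 => nm d18 (memL e1 he1 v1 hv1 _ hh) h2)
        · exact absurd (h6b ▸ hap) (fun hh => nm d89 hh (memQ e1 he1 1))
        · rcases h7b with hh | ⟨v1, hv1, hh⟩ | ⟨v1, hv1, hh⟩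
          · have he10 : e1 = e0 := by
              by_contra hne
              exact nm (g.Z_disjoint e1 he1 e0 he0 hne) hh haZ
            subst he10
            fin_cases h1 <;> simp [h7a]
          · exact absurd hap (fun h2 => nm d18 (memL e1 he1 v1 hv1 _ hh) h2)
          · exact absurd (hh ▸ hap) (fun h2 => nm d68 (memX e1 he1 v1 hv1) h2)
      have hb5 := bnd a _ hb hsub
      have := card4 (g.x e0 u0) (g.x e0 v0) (g.q e0 0) (g.q e0 1)
      omega
    · exact goodmem (Or.inr (Or.inr (Or.inl hap)))
  -- blocking lemma
  have block : ∀ e' ∈ G.edgeFinset, ∀ u' v' : V, e' = s(u', v') →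
      IsBVertex g.H c (g.x e' u') → IsBVertex g.H c (g.x e' v') →
      ∀ h : Fin 2, ¬ IsBVertex g.H c (g.q e' h) := by
    intro e' he' u' v' hee hbx1 hbx2 h hbq
    have hu'e : u' ∈ e' := by rw [hee]; exact Sym2.mem_mk_left _ _
    have hv'e : v' ∈ e' := by rw [hee]; exact Sym2.mem_mk_right _ _
    have hadj' : G.Adj u' v' := by
      have h2 := SimpleGraph.mem_edgeFinset.mp he'
      rw [hee] at h2
      exact h2
    have hne_uv : u' ≠ v' := hadj'.ne
    have hxne : g.x e' u' ≠ g.x e' v' := by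
      intro hxx
      have h2 := g.x_inj e' he' u' hu'e e' he' v' hv'e hxx
      rw [Prod.mk.injEq] at h2
      exact hne_uv h2.2
    have hY := g.card_Y e' he'
    have hZca := g.card_Z e' he'
    have hLu := g.card_L e' he' u' hu'e
    have hLv := g.card_L e' he' v' hv'e
    have hw1 := hwt e' he'
    have hq01 : g.q e' 0 ≠ g.q e' 1 := by
      intro hq
      have h2 := g.q_inj e' he' 0 e' he' 1 hq
      rw [Prod.mk.injEq] at h2
      exact absurd h2.2 (by decide)
    have hLdisj : Disjoint (g.L e' u') (g.L e' v') := by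
      refine g.L_disjoint e' he' u' hu'e e' he' v' hv'e ?_
      intro hp
      rw [Prod.mk.injEq] at hp
      exact hne_uv hp.2
    -- the neighbourhood of x_{e',u'} as a finset
    set Nu : Finset g.VH := (g.Y e' ∪ g.Z e' ∪ g.L e' u') ∪ ({g.q e' 0, g.q e' 1} : Finset g.VH)
      with hNudef
    have hNumem : ∀ b : g.VH, b ∈ Nu ↔
        (b ∈ g.Y e' ∨ b ∈ g.Z e' ∨ b ∈ g.L e' u' ∨ b = g.q e' 0 ∨ b = g.q e' 1) := by
      intro b
      rw [hNudef]
      simp only [Finset.mem_union, Finset.mem_insert, Finset.mem_singleton, or_assoc]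
    have dYZ : Disjoint (g.Y e') (g.Z e') := by
      rw [Finset.disjoint_left]
      intro a2 ha2 hb2
      exact nm d78 (memY e' he' _ ha2) (memZ e' he' _ hb2)
    have dYZL : Disjoint (g.Y e' ∪ g.Z e') (g.L e' u') := by
      rw [Finset.disjoint_union_left]
      constructor
      · rw [Finset.disjoint_left]
        intro a2 ha2 hb2
        exact nm d17 (memL e' he' u' hu'e _ hb2) (memY e' he' _ ha2)
      · rw [Finset.disjoint_left]
        intro a2 ha2 hb2
        exact nm d18 (memL e' he' u' hu'e _ hb2) (memZ e' he' _ ha2)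
    have dQpair : Disjoint (g.Y e' ∪ g.Z e' ∪ g.L e' u') ({g.q e' 0, g.q e' 1} : Finset g.VH) := by
      rw [Finset.disjoint_left]
      intro b hb hb2
      have hbQ : b ∈ g.Qset := by
        rcases Finset.mem_insert.mp hb2 with rfl | hb3
        · exact memQ e' he' 0
        · rw [Finset.mem_singleton.mp hb3]
          exact memQ e' he' 1
      rcases Finset.mem_union.mp hb with hb4 | hb4
      · rcases Finset.mem_union.mp hb4 with hb5 | hb5
        · exact nm d79 (memY e' he' _ hb5) hbQ
        · exact nm d89 (memZ e' he' _ hb5) hbQ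
      · exact nm d19 (memL e' he' u' hu'e _ hb4) hbQ
    have hpair2 : ({g.q e' 0, g.q e' 1} : Finset g.VH).card = 2 := Finset.card_pair hq01
    have hNucard : Nu.card + 1 = numColors G wt := by
      rw [hNudef, Finset.card_union_of_disjoint dQpair, Finset.card_union_of_disjoint dYZL,
        Finset.card_union_of_disjoint dYZ, hY, hLu, hpair2]
      omega
    have himg : Nu.image c = Finset.univ.erase (c (g.x e' u')) := by
      apply Finset.Subset.antisymm
      · intro col hcol
        obtain ⟨b, hbN, rfl⟩ := Finset.mem_image.mp hcol
        have hadj2 : g.H.Adj (g.x e' u') b := (adjX e' he' u' hu'e b).mpr ((hNumem b).mp hbN)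
        exact Finset.mem_erase.mpr ⟨(hprop hadj2).symm, Finset.mem_univ _⟩
      · intro col hcol
        obtain ⟨hne', -⟩ := Finset.mem_erase.mp hcol
        obtain ⟨b, hadj2, hcb⟩ := hbx1 col hne'
        exact Finset.mem_image.mpr ⟨b, (hNumem b).mpr ((adjX e' he' u' hu'e b).mp hadj2), hcb⟩
    have hinj : Set.InjOn c (Nu : Set g.VH) := by
      apply Finset.card_image_iff.mp
      rw [himg, Finset.card_erase_of_mem (Finset.mem_univ _), Finset.card_univ, Fintype.card_fin]
      omega
    -- the q-neighbourhood superset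
    set Nq : Finset g.VH := (g.Z e' ∪ g.L e' u' ∪ g.L e' v') ∪
      ({g.x e' u', g.x e' v', g.q e' 0, g.q e' 1} : Finset g.VH) with hNqdef
    have hNqmem : ∀ b : g.VH, b ∈ Nq ↔ (b ∈ g.Z e' ∨ b ∈ g.L e' u' ∨ b ∈ g.L e' v' ∨
        b = g.x e' u' ∨ b = g.x e' v' ∨ b = g.q e' 0 ∨ b = g.q e' 1) := by
      intro b
      rw [hNqdef]
      simp only [Finset.mem_union, Finset.mem_insert, Finset.mem_singleton, or_assoc]
    -- find the two collapsed pairs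
    obtain ⟨b1, b2, a1, a2, hb1N, hb2N, ha1N, ha2N, hb1q, hb2q, ha1q, ha2q, hb12,
        ha1b1, ha1b2, ha2b1, ha2b2, hc1e, hc2e⟩ :
        ∃ b1 b2 a1 a2 : g.VH, b1 ∈ Nq ∧ b2 ∈ Nq ∧ a1 ∈ Nq ∧ a2 ∈ Nq ∧
          b1 ≠ g.q e' h ∧ b2 ≠ g.q e' h ∧ a1 ≠ g.q e' h ∧ a2 ≠ g.q e' h ∧
          b1 ≠ b2 ∧ a1 ≠ b1 ∧ a1 ≠ b2 ∧ a2 ≠ b1 ∧ a2 ≠ b2 ∧ c a1 = c b1 ∧ c a2 = c b2 := by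
      have hxuNq : g.x e' u' ∈ Nq := (hNqmem _).mpr (Or.inr (Or.inr (Or.inr (Or.inl rfl))))
      have hxvNq : g.x e' v' ∈ Nq := (hNqmem _).mpr (Or.inr (Or.inr (Or.inr (Or.inr (Or.inl rfl)))))
      have hxuq : g.x e' u' ≠ g.q e' h := fun hh => nm d69 (hh ▸ memX e' he' u' hu'e) (memQ e' he' h)
      have hxvq : g.x e' v' ≠ g.q e' h := fun hh => nm d69 (hh ▸ memX e' he' v' hv'e) (memQ e' he' h)
      by_cases hcc : c (g.x e' u') = c (g.x e' v')
      · -- same colours: pair (l1, l2) and pair (x u', x v')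
        have hLne : (g.L e' u').Nonempty := Finset.card_pos.mp (by rw [hLu]; omega)
        obtain ⟨l1, hl1⟩ := hLne
        have hl1Nu : l1 ∈ Nu := (hNumem l1).mpr (Or.inr (Or.inr (Or.inl hl1)))
        have hadjl1 : g.H.Adj (g.x e' u') l1 :=
          (adjX e' he' u' hu'e l1).mpr (Or.inr (Or.inr (Or.inl hl1)))
        have hc1 : c l1 ≠ c (g.x e' v') := by rw [← hcc]; exact (hprop hadjl1).symm
        obtain ⟨l2, hadjl2, hcl2⟩ := hbx2 (c l1) hc1
        have hl2cases := (adjX e' he' v' hv'e l2).mp hadjl2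
        have hl2 : l2 ∈ g.L e' v' := by
          rcases hl2cases with hh | hh | hh | rfl | rfl
          · exfalso
            have hl2Nu : l2 ∈ Nu := (hNumem l2).mpr (Or.inl hh)
            have heq2 : l2 = l1 := hinj (Finset.mem_coe.mpr hl2Nu) (Finset.mem_coe.mpr hl1Nu) hcl2
            exact nm d17 (memL e' he' u' hu'e _ (heq2 ▸ hl1)) (memY e' he' _ hh)
          · exfalso
            have hl2Nu : l2 ∈ Nu := (hNumem l2).mpr (Or.inr (Or.inl hh))
            have heq2 : l2 = l1 := hinj (Finset.mem_coe.mpr hl2Nu) (Finset.mem_coe.mpr hl1Nu) hcl2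
            exact nm d18 (memL e' he' u' hu'e _ (heq2 ▸ hl1)) (memZ e' he' _ hh)
          · exact hh
          · exfalso
            have hl2Nu : g.q e' 0 ∈ Nu := (hNumem _).mpr (Or.inr (Or.inr (Or.inr (Or.inl rfl))))
            have heq2 : g.q e' 0 = l1 := hinj (Finset.mem_coe.mpr hl2Nu) (Finset.mem_coe.mpr hl1Nu) hcl2
            exact nm d19 (memL e' he' u' hu'e _ (heq2 ▸ hl1)) (memQ e' he' 0)
          · exfalso
            have hl2Nu : g.q e' 1 ∈ Nu := (hNumem _).mpr (Or.inr (Or.inr (Or.inr (Or.inr rfl))))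
            have heq2 : g.q e' 1 = l1 := hinj (Finset.mem_coe.mpr hl2Nu) (Finset.mem_coe.mpr hl1Nu) hcl2
            exact nm d19 (memL e' he' u' hu'e _ (heq2 ▸ hl1)) (memQ e' he' 1)
        have hl1S : l1 ∈ g.Sleaves := memL e' he' u' hu'e _ hl1
        have hl2S : l2 ∈ g.Sleaves := memL e' he' v' hv'e _ hl2
        refine ⟨l2, g.x e' v', l1, g.x e' u',
          (hNqmem _).mpr (Or.inr (Or.inr (Or.inl hl2))), hxvNq,
          (hNqmem _).mpr (Or.inr (Or.inl hl1)), hxuNq,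
          fun hh => nm d19 (hh ▸ hl2S) (memQ e' he' h),
          hxvq,
          fun hh => nm d19 (hh ▸ hl1S) (memQ e' he' h),
          hxuq,
          fun hh => nm d16 (hh ▸ hl2S) (memX e' he' v' hv'e),
          ?_,
          fun hh => nm d16 (hh ▸ hl1S) (memX e' he' v' hv'e),
          fun hh => nm d16 (hh.symm ▸ hl2S) (memX e' he' u' hu'e),
          hxne,
          hcl2.symm,
          hcc⟩
        · intro hh
          subst hh
          exact Finset.disjoint_left.mp hLdisj hl1 hl2
      · -- distinct colours: pairs (l1, x v') and (l2, x u')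
        obtain ⟨l1, hadjl1, hcl1⟩ := hbx1 (c (g.x e' v')) (Ne.symm hcc)
        have hl1 : l1 ∈ g.L e' u' := by
          rcases (adjX e' he' u' hu'e l1).mp hadjl1 with hh | hh | hh | rfl | rfl
          · exact absurd hcl1 ((hprop ((adjX e' he' v' hv'e l1).mpr (Or.inl hh))).symm)
          · exact absurd hcl1 ((hprop ((adjX e' he' v' hv'e l1).mpr (Or.inr (Or.inl hh)))).symm)
          · exact hh
          · exact absurd hcl1 (hprop (adjQx e' he' 0 v' hv'e))
          · exact absurd hcl1 (hprop (adjQx e' he' 1 v' hv'e))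
        obtain ⟨l2, hadjl2, hcl2⟩ := hbx2 (c (g.x e' u')) hcc
        have hl2 : l2 ∈ g.L e' v' := by
          rcases (adjX e' he' v' hv'e l2).mp hadjl2 with hh | hh | hh | rfl | rfl
          · exact absurd hcl2 ((hprop ((adjX e' he' u' hu'e l2).mpr (Or.inl hh))).symm)
          · exact absurd hcl2 ((hprop ((adjX e' he' u' hu'e l2).mpr (Or.inr (Or.inl hh)))).symm)
          · exact hh
          · exact absurd hcl2 (hprop (adjQx e' he' 0 u' hu'e))
          · exact absurd hcl2 (hprop (adjQx e' he' 1 u' hu'e))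
        have hl1S : l1 ∈ g.Sleaves := memL e' he' u' hu'e _ hl1
        have hl2S : l2 ∈ g.Sleaves := memL e' he' v' hv'e _ hl2
        refine ⟨g.x e' v', g.x e' u', l1, l2,
          hxvNq, hxuNq,
          (hNqmem _).mpr (Or.inr (Or.inl hl1)),
          (hNqmem _).mpr (Or.inr (Or.inr (Or.inl hl2))),
          hxvq, hxuq,
          fun hh => nm d19 (hh ▸ hl1S) (memQ e' he' h),
          fun hh => nm d19 (hh ▸ hl2S) (memQ e' he' h),
          hxne.symm,
          fun hh => nm d16 (hh ▸ hl1S) (memX e' he' v' hv'e),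
          fun hh => nm d16 (hh ▸ hl1S) (memX e' he' u' hu'e),
          fun hh => nm d16 (hh ▸ hl2S) (memX e' he' v' hv'e),
          fun hh => nm d16 (hh ▸ hl2S) (memX e' he' u' hu'e),
          hcl1, hcl2⟩
    -- derive the contradiction with q being a b-vertex
    have hqNq : g.q e' h ∈ Nq := by
      refine (hNqmem _).mpr ?_
      fin_cases h
      · exact Or.inr (Or.inr (Or.inr (Or.inr (Or.inr (Or.inl rfl)))))
      · exact Or.inr (Or.inr (Or.inr (Or.inr (Or.inr (Or.inr rfl)))))
    have hNqcard : Nq.card ≤ numColors G wt + 1 := by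
      have t1 := Finset.card_union_le (g.Z e' ∪ g.L e' u' ∪ g.L e' v')
        ({g.x e' u', g.x e' v', g.q e' 0, g.q e' 1} : Finset g.VH)
      have t2 := Finset.card_union_le (g.Z e' ∪ g.L e' u') (g.L e' v')
      have t3 := Finset.card_union_le (g.Z e') (g.L e' u')
      have t4 := card4 (g.x e' u') (g.x e' v') (g.q e' 0) (g.q e' 1)
      rw [hNqdef]
      omega
    set NQ' : Finset g.VH := Nq.erase (g.q e' h) with hNQ'def
    have hNq'card : NQ'.card + 1 = Nq.card := by
      rw [hNQ'def, Finset.card_erase_of_mem hqNq]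
      have := Finset.card_pos.mpr ⟨_, hqNq⟩
      omega
    have hbig : Finset.univ.erase (c (g.q e' h)) ⊆ NQ'.image c := by
      intro col hcol
      obtain ⟨hne', -⟩ := Finset.mem_erase.mp hcol
      obtain ⟨b, hadjb, hcb⟩ := hbq col hne'
      have hbNq : b ∈ Nq := by
        refine (hNqmem b).mpr ?_
        rcases adjQ e' he' h b hadjb with hh | ⟨v1, hv1, hh⟩ | ⟨v1, hv1, hh⟩ | rfl | rfl
        · exact Or.inl hh
        · have : v1 = u' ∨ v1 = v' := by rw [hee] at hv1; exact Sym2.mem_iff.mp hv1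
          rcases this with rfl | rfl
          · exact Or.inr (Or.inl hh)
          · exact Or.inr (Or.inr (Or.inl hh))
        · have : v1 = u' ∨ v1 = v' := by rw [hee] at hv1; exact Sym2.mem_iff.mp hv1
          rcases this with rfl | rfl
          · exact Or.inr (Or.inr (Or.inr (Or.inl hh)))
          · exact Or.inr (Or.inr (Or.inr (Or.inr (Or.inl hh))))
        · exact Or.inr (Or.inr (Or.inr (Or.inr (Or.inr (Or.inl rfl)))))
        · exact Or.inr (Or.inr (Or.inr (Or.inr (Or.inr (Or.inr rfl)))))
      have hbneq : b ≠ g.q e' h := (g.H.ne_of_adj hadjb).symm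
      exact Finset.mem_image.mpr ⟨b, Finset.mem_erase.mpr ⟨hbneq, hbNq⟩, hcb⟩
    have himgsub : NQ'.image c ⊆ (NQ' \ ({b1, b2} : Finset g.VH)).image c := by
      intro col hcol
      obtain ⟨b, hbN, rfl⟩ := Finset.mem_image.mp hcol
      by_cases hb1 : b = b1
      · refine Finset.mem_image.mpr ⟨a1, Finset.mem_sdiff.mpr ⟨Finset.mem_erase.mpr ⟨ha1q, ha1N⟩, ?_⟩, by rw [hc1e, hb1]⟩
        simp only [Finset.mem_insert, Finset.mem_singleton]
        push_neg
        exact ⟨ha1b1, ha1b2⟩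
      by_cases hb2 : b = b2
      · refine Finset.mem_image.mpr ⟨a2, Finset.mem_sdiff.mpr ⟨Finset.mem_erase.mpr ⟨ha2q, ha2N⟩, ?_⟩, by rw [hc2e, hb2]⟩
        simp only [Finset.mem_insert, Finset.mem_singleton]
        push_neg
        exact ⟨ha2b1, ha2b2⟩
      · refine Finset.mem_image.mpr ⟨b, Finset.mem_sdiff.mpr ⟨hbN, ?_⟩, rfl⟩
        simp only [Finset.mem_insert, Finset.mem_singleton]
        push_neg
        exact ⟨hb1, hb2⟩
    have hpairsub : ({b1, b2} : Finset g.VH) ⊆ NQ' := by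
      intro b hb
      rcases Finset.mem_insert.mp hb with rfl | hb3
      · exact Finset.mem_erase.mpr ⟨hb1q, hb1N⟩
      · rw [Finset.mem_singleton.mp hb3]
        exact Finset.mem_erase.mpr ⟨hb2q, hb2N⟩
    have hcard_sdiff : (NQ' \ ({b1, b2} : Finset g.VH)).card = NQ'.card - 2 := by
      rw [Finset.card_sdiff_of_subset hpairsub, Finset.card_pair hb12]
    have f1 : (Finset.univ.erase (c (g.q e' h))).card = numColors G wt - 1 := by
      rw [Finset.card_erase_of_mem (Finset.mem_univ _), Finset.card_univ, Fintype.card_fin]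
    have f2 := Finset.card_le_card hbig
    have f3 := Finset.card_le_card himgsub
    have f4 := Finset.card_image_le (s := NQ' \ ({b1, b2} : Finset g.VH)) (f := c)
    omega
  -- choose a b-vertex for every colour
  have hfspec : ∀ col : Fin (numColors G wt),
      c ((hbcol col).choose) = col ∧ IsBVertex g.H c ((hbcol col).choose) :=
    fun col => (hbcol col).choose_spec
  set f : Fin (numColors G wt) → g.VH := fun col => (hbcol col).choose with hfdef
  have hfinj : Function.Injective f := by
    intro a b hab
    exact ((hfspec a).1).symm.trans ((congrArg c hab).trans (hfspec b).1)
  set D : Finset g.VH := Finset.univ.image f with hDdef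
  have hDcard : D.card = numColors G wt := by
    rw [hDdef, Finset.card_image_of_injective _ hfinj, Finset.card_univ, Fintype.card_fin]
  have hDbv : ∀ a ∈ D, IsBVertex g.H c a := by
    intro a ha
    obtain ⟨col, -, rfl⟩ := Finset.mem_image.mp ha
    exact (hfspec col).2
  have hDsub : D ⊆ g.bigSet := fun a ha => hBV_mem a (hDbv a ha)
  -- the per-edge four-element sets
  set T4 : Sym2 V → Finset g.VH := fun e0 =>
    ((Finset.univ.filter (fun v0 => v0 ∈ e0)).image (g.x e0)) ∪
      ({g.q e0 0, g.q e0 1} : Finset g.VH) with hT4def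
  have hXQsub : g.Xset ∪ g.Qset ⊆ G.edgeFinset.biUnion T4 := by
    intro a ha
    rcases Finset.mem_union.mp ha with ha2 | ha2
    · simp only [GadgetData.Xset] at ha2
      obtain ⟨e0, he0, ha3⟩ := Finset.mem_biUnion.mp ha2
      exact Finset.mem_biUnion.mpr ⟨e0, he0, Finset.mem_union.mpr (Or.inl ha3)⟩
    · simp only [GadgetData.Qset] at ha2
      obtain ⟨e0, he0, ha3⟩ := Finset.mem_biUnion.mp ha2
      exact Finset.mem_biUnion.mpr ⟨e0, he0, Finset.mem_union.mpr (Or.inr ha3)⟩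
  set R : Finset g.VH := ({g.sstar} : Finset g.VH) ∪ Finset.univ.image g.orig ∪ g.Acenters
    with hRdef
  have hRest : ∀ a ∈ D, a ∈ R ∪ (D ∩ G.edgeFinset.biUnion T4) := by
    intro a ha
    have h2 := hDsub ha
    simp only [GadgetData.bigSet, Finset.mem_union] at h2
    rcases h2 with ((((h3 | h3) | h3) | h3) | h3)
    · exact Finset.mem_union.mpr (Or.inl (Finset.mem_union.mpr (Or.inl (Finset.mem_union.mpr (Or.inl h3)))))
    · exact Finset.mem_union.mpr (Or.inl (Finset.mem_union.mpr (Or.inl (Finset.mem_union.mpr (Or.inr h3)))))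
    · exact Finset.mem_union.mpr (Or.inr (Finset.mem_inter.mpr ⟨ha,
        hXQsub (Finset.mem_union.mpr (Or.inr h3))⟩))
    · exact Finset.mem_union.mpr (Or.inl (Finset.mem_union.mpr (Or.inr h3)))
    · exact Finset.mem_union.mpr (Or.inr (Finset.mem_inter.mpr ⟨ha,
        hXQsub (Finset.mem_union.mpr (Or.inl h3))⟩))
  have hsplit : D.card ≤ R.card + (D ∩ G.edgeFinset.biUnion T4).card :=
    le_trans (Finset.card_le_card hRest) (Finset.card_union_le _ _)
  have hRcard : R.card ≤ 1 + Fintype.card V + (2 * totW G wt + 1) := by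
    have t1 := Finset.card_union_le (({g.sstar} : Finset g.VH) ∪ Finset.univ.image g.orig)
      g.Acenters
    have t2 := Finset.card_union_le ({g.sstar} : Finset g.VH) (Finset.univ.image g.orig)
    have t3 : ({g.sstar} : Finset g.VH).card = 1 := Finset.card_singleton _
    have t4 : (Finset.univ.image g.orig).card ≤ Fintype.card V :=
      le_trans Finset.card_image_le (le_of_eq Finset.card_univ)
    have t5 := g.card_Acenters
    rw [hRdef]
    omega
  have hDT : (D ∩ G.edgeFinset.biUnion T4).card ≤
      ∑ e0 ∈ G.edgeFinset, (D ∩ T4 e0).card := by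
    have hsub2 : D ∩ G.edgeFinset.biUnion T4 ⊆ G.edgeFinset.biUnion (fun e0 => D ∩ T4 e0) := by
      intro a ha
      obtain ⟨ha1, ha2⟩ := Finset.mem_inter.mp ha
      obtain ⟨e0, he0, ha3⟩ := Finset.mem_biUnion.mp ha2
      exact Finset.mem_biUnion.mpr ⟨e0, he0, Finset.mem_inter.mpr ⟨ha1, ha3⟩⟩
    exact le_trans (Finset.card_le_card hsub2) (Finset.card_biUnion_le)
  have hT4sub : ∀ e0 ∈ G.edgeFinset, ∀ u0 v0 : V, e0 = s(u0, v0) →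
      T4 e0 ⊆ ({g.x e0 u0, g.x e0 v0, g.q e0 0, g.q e0 1} : Finset g.VH) := by
    intro e0 he0 u0 v0 he0eq a ha
    rcases Finset.mem_union.mp ha with ha2 | ha2
    · obtain ⟨v1, hv1, rfl⟩ := Finset.mem_image.mp ha2
      have hv1e : v1 ∈ e0 := (Finset.mem_filter.mp hv1).2
      have : v1 = u0 ∨ v1 = v0 := by rw [he0eq] at hv1e; exact Sym2.mem_iff.mp hv1e
      rcases this with rfl | rfl
      · simp
      · simp
    · rcases Finset.mem_insert.mp ha2 with rfl | ha3
      · simp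
      · rw [Finset.mem_singleton.mp ha3]
        simp
  have hper : ∀ e0 ∈ G.edgeFinset, e0 ≠ e → (D ∩ T4 e0).card ≤ 3 := by
    intro e0 he0 _
    obtain ⟨u0, v0, he0eq⟩ := sym2rep e0
    by_cases hxx : g.x e0 u0 ∈ D ∧ g.x e0 v0 ∈ D
    · have hq0 : g.q e0 0 ∉ D := fun hq =>
        block e0 he0 u0 v0 he0eq (hDbv _ hxx.1) (hDbv _ hxx.2) 0 (hDbv _ hq)
      have hsub3 : D ∩ T4 e0 ⊆ ({g.x e0 u0, g.x e0 v0, g.q e0 1} : Finset g.VH) := by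
        intro a ha
        obtain ⟨haD, haT⟩ := Finset.mem_inter.mp ha
        have h4 := hT4sub e0 he0 u0 v0 he0eq haT
        simp only [Finset.mem_insert, Finset.mem_singleton] at h4 ⊢
        rcases h4 with rfl | rfl | rfl | rfl
        · tauto
        · tauto
        · exact absurd haD hq0
        · tauto
      exact le_trans (Finset.card_le_card hsub3) (card3 _ _ _)
    · rcases not_and_or.mp hxx with hnx | hnx
      · have hsub3 : D ∩ T4 e0 ⊆ ({g.x e0 v0, g.q e0 0, g.q e0 1} : Finset g.VH) := by
          intro a ha
          obtain ⟨haD, haT⟩ := Finset.mem_inter.mp ha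
          have h4 := hT4sub e0 he0 u0 v0 he0eq haT
          simp only [Finset.mem_insert, Finset.mem_singleton] at h4 ⊢
          rcases h4 with rfl | rfl | rfl | rfl
          · exact absurd haD hnx
          · tauto
          · tauto
          · tauto
        exact le_trans (Finset.card_le_card hsub3) (card3 _ _ _)
      · have hsub3 : D ∩ T4 e0 ⊆ ({g.x e0 u0, g.q e0 0, g.q e0 1} : Finset g.VH) := by
          intro a ha
          obtain ⟨haD, haT⟩ := Finset.mem_inter.mp ha
          have h4 := hT4sub e0 he0 u0 v0 he0eq haT
          simp only [Finset.mem_insert, Finset.mem_singleton] at h4 ⊢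
          rcases h4 with rfl | rfl | rfl | rfl
          · tauto
          · exact absurd haD hnx
          · tauto
          · tauto
        exact le_trans (Finset.card_le_card hsub3) (card3 _ _ _)
  have hbad : (D ∩ T4 e).card ≤ 2 := by
    have hq0 : g.q e 0 ∉ D := fun hq => block e he u v huv hbu hbv 0 (hDbv _ hq)
    have hq1 : g.q e 1 ∉ D := fun hq => block e he u v huv hbu hbv 1 (hDbv _ hq)
    have hsub3 : D ∩ T4 e ⊆ ({g.x e u, g.x e v} : Finset g.VH) := by
      intro a ha
      obtain ⟨haD, haT⟩ := Finset.mem_inter.mp ha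
      have h4 := hT4sub e he u v huv haT
      simp only [Finset.mem_insert, Finset.mem_singleton] at h4 ⊢
      rcases h4 with rfl | rfl | rfl | rfl
      · tauto
      · tauto
      · exact absurd haD hq0
      · exact absurd haD hq1
    exact le_trans (Finset.card_le_card hsub3) (card2 _ _)
  have hsum : ∑ e0 ∈ G.edgeFinset, (D ∩ T4 e0).card ≤ 2 + 3 * (G.edgeFinset.card - 1) := by
    have hsplit2 : (D ∩ T4 e).card + ∑ e0 ∈ G.edgeFinset.erase e, (D ∩ T4 e0).card =
        ∑ e0 ∈ G.edgeFinset, (D ∩ T4 e0).card :=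
      Finset.add_sum_erase G.edgeFinset (fun e0 => (D ∩ T4 e0).card) he
    have herase : ∑ e0 ∈ G.edgeFinset.erase e, (D ∩ T4 e0).card ≤
        3 * (G.edgeFinset.card - 1) := by
      calc ∑ e0 ∈ G.edgeFinset.erase e, (D ∩ T4 e0).card
          ≤ ∑ _e0 ∈ G.edgeFinset.erase e, 3 := by
            refine Finset.sum_le_sum ?_
            intro e0 he0
            exact hper e0 (Finset.mem_of_mem_erase he0) (Finset.ne_of_mem_erase he0)
        _ = (G.edgeFinset.erase e).card * 3 := by rw [Finset.sum_const, smul_eq_mul]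
        _ = 3 * (G.edgeFinset.card - 1) := by
            rw [Finset.card_erase_of_mem he]
            ring
    omega
  have hcardV : Fintype.card V ≥ 0 := Nat.zero_le _
  omega
end

section
/- Every b-coloring of the constructed graph H with k colors has precisely one b-vertex per color. Moreover, the set of b-vertices consists of {s*} ∪ V(G) ∪ Q ∪ A together with, for each edge e = uv of G, precisely one of the two vertices x_{e,u} and x_{e,v}. -/
open Finset

variable {V : Type*} [Fintype V] [DecidableEq V]

section Infra
variable {V : Type*} [Fintype V] [DecidableEq V] {G : SimpleGraph V}
  [DecidableRel G.Adj] {wt : Sym2 V → ℕ}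

namespace Gadget

variable (g : Gadget V G wt)

instance : Fintype g.VH := g.fintypeVH
instance : DecidableEq g.VH := g.decEqVH
instance : DecidableRel g.H.Adj := g.decAdj

/-- the i-th part -/
def pt (i : ℕ) : Finset g.VH := g.toGadgetData.parts.getD i ∅

lemma parts_length : g.toGadgetData.parts.length = 10 := rfl

lemma pt_disjoint {i j : ℕ} (hi : i < 10) (hj : j < 10) (hij : i ≠ j) :
    Disjoint (g.pt i) (g.pt j) := by
  have hp := List.pairwise_iff_getElem.mp g.parts_disjoint
  have hgi : g.pt i = g.toGadgetData.parts[i]'(by rw [parts_length]; omega) :=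
    List.getD_eq_getElem _ _ _
  have hgj : g.pt j = g.toGadgetData.parts[j]'(by rw [parts_length]; omega) :=
    List.getD_eq_getElem _ _ _
  rw [hgi, hgj]
  rcases lt_or_gt_of_ne hij with h | h
  · exact hp i j _ _ h
  · exact (hp j i _ _ h).symm

lemma pt_false {i j : ℕ} (hi : i < 10) (hj : j < 10) (hij : i ≠ j) {a : g.VH}
    (ha : a ∈ g.pt i) (hb : a ∈ g.pt j) : False :=
  Finset.disjoint_left.mp (g.pt_disjoint hi hj hij) ha hb

lemma pt_ne {i j : ℕ} (hi : i < 10) (hj : j < 10) (hij : i ≠ j) {a b : g.VH}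
    (ha : a ∈ g.pt i) (hb : b ∈ g.pt j) : a ≠ b := by
  rintro rfl; exact g.pt_false hi hj hij ha hb

lemma pt0_def : g.pt 0 = {g.sstar} := rfl
lemma pt1_def : g.pt 1 = g.Sleaves := rfl
lemma pt2_def : g.pt 2 = g.Acenters := rfl
lemma pt3_def : g.pt 3 = g.Acenters.biUnion g.Aleaves := rfl
lemma pt4_def : g.pt 4 = Finset.univ.image g.orig := rfl
lemma pt5_def : g.pt 5 = Finset.univ.biUnion g.P := rfl
lemma pt6_def : g.pt 6 = g.Xset := rfl
lemma pt7_def : g.pt 7 = G.edgeFinset.biUnion g.Y := rfl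
lemma pt8_def : g.pt 8 = G.edgeFinset.biUnion g.Z := rfl
lemma pt9_def : g.pt 9 = g.Qset := rfl

lemma sstar_pt : g.sstar ∈ g.pt 0 := by rw [pt0_def]; exact Finset.mem_singleton_self _
lemma sleaf_pt {b : g.VH} (h : b ∈ g.Sleaves) : b ∈ g.pt 1 := h
lemma L_pt {e : Sym2 V} {v : V} (he : e ∈ G.edgeFinset) (hv : v ∈ e) {b : g.VH}
    (h : b ∈ g.L e v) : b ∈ g.pt 1 := g.L_subset e he v hv h
lemma acenter_pt {s : g.VH} (h : s ∈ g.Acenters) : s ∈ g.pt 2 := h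
lemma aleaf_pt {s b : g.VH} (hs : s ∈ g.Acenters) (h : b ∈ g.Aleaves s) : b ∈ g.pt 3 := by
  rw [pt3_def]; exact Finset.mem_biUnion.mpr ⟨s, hs, h⟩
lemma orig_pt (v : V) : g.orig v ∈ g.pt 4 := by
  rw [pt4_def]; exact Finset.mem_image_of_mem _ (Finset.mem_univ v)
lemma P_pt {v : V} {b : g.VH} (h : b ∈ g.P v) : b ∈ g.pt 5 := by
  rw [pt5_def]; exact Finset.mem_biUnion.mpr ⟨v, Finset.mem_univ v, h⟩
lemma x_pt {e : Sym2 V} {v : V} (he : e ∈ G.edgeFinset) (hv : v ∈ e) :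
    g.x e v ∈ g.pt 6 := by
  rw [pt6_def]
  exact Finset.mem_biUnion.mpr ⟨e, he,
    Finset.mem_image_of_mem _ (Finset.mem_filter.mpr ⟨Finset.mem_univ v, hv⟩)⟩
lemma Y_pt {e : Sym2 V} (he : e ∈ G.edgeFinset) {b : g.VH} (h : b ∈ g.Y e) :
    b ∈ g.pt 7 := by rw [pt7_def]; exact Finset.mem_biUnion.mpr ⟨e, he, h⟩
lemma Z_pt {e : Sym2 V} (he : e ∈ G.edgeFinset) {b : g.VH} (h : b ∈ g.Z e) :
    b ∈ g.pt 8 := by rw [pt8_def]; exact Finset.mem_biUnion.mpr ⟨e, he, h⟩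
lemma q_pt {e : Sym2 V} (he : e ∈ G.edgeFinset) (h : Fin 2) : g.q e h ∈ g.pt 9 := by
  rw [pt9_def, GadgetData.Qset]
  refine Finset.mem_biUnion.mpr ⟨e, he, ?_⟩
  fin_cases h <;> simp

end Gadget
end Infra
section Nbhd
variable {V : Type*} [Fintype V] [DecidableEq V] {G : SimpleGraph V}
  [DecidableRel G.Adj] {wt : Sym2 V → ℕ}

namespace Gadget

variable (g : Gadget V G wt)

/- redeclare autoparam versions -/
lemma pt_mem_lt {i : ℕ} {a : g.VH} (ha : a ∈ g.pt i) : i < 10 := by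
  by_contra hlt
  rw [Gadget.pt, List.getD_eq_default] at ha
  · exact absurd ha (Finset.notMem_empty a)
  · rw [g.parts_length]; omega

lemma pt_false' {i j : ℕ} {a : g.VH} (ha : a ∈ g.pt i) (hb : a ∈ g.pt j)
    (hij : i ≠ j) : False :=
  g.pt_false (g.pt_mem_lt ha) (g.pt_mem_lt hb) hij ha hb

lemma pt_ne' {i j : ℕ} {a b : g.VH} (ha : a ∈ g.pt i) (hb : b ∈ g.pt j)
    (hij : i ≠ j) : a ≠ b :=
  g.pt_ne (g.pt_mem_lt ha) (g.pt_mem_lt hb) hij ha hb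

lemma L_pin {e e' : Sym2 V} {v v' : V} (he : e ∈ G.edgeFinset) (hv : v ∈ e)
    (he' : e' ∈ G.edgeFinset) (hv' : v' ∈ e') {b : g.VH}
    (h : b ∈ g.L e v) (h' : b ∈ g.L e' v') : e = e' ∧ v = v' := by
  by_contra hne
  refine Finset.disjoint_left.mp (g.L_disjoint e he v hv e' he' v' hv' ?_) h h'
  intro hp
  exact hne (by simpa [Prod.ext_iff] using hp)

lemma Y_pin {e e' : Sym2 V} (he : e ∈ G.edgeFinset) (he' : e' ∈ G.edgeFinset)
    {b : g.VH} (h : b ∈ g.Y e) (h' : b ∈ g.Y e') : e = e' := by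
  by_contra hne
  exact Finset.disjoint_left.mp (g.Y_disjoint e he e' he' hne) h h'

lemma Z_pin {e e' : Sym2 V} (he : e ∈ G.edgeFinset) (he' : e' ∈ G.edgeFinset)
    {b : g.VH} (h : b ∈ g.Z e) (h' : b ∈ g.Z e') : e = e' := by
  by_contra hne
  exact Finset.disjoint_left.mp (g.Z_disjoint e he e' he' hne) h h'

lemma P_pin {v v' : V} {b : g.VH} (h : b ∈ g.P v) (h' : b ∈ g.P v') : v = v' := by
  by_contra hne
  exact Finset.disjoint_left.mp (g.P_disjoint v v' hne) h h'

lemma x_pin {e e' : Sym2 V} {v v' : V} (he : e ∈ G.edgeFinset) (hv : v ∈ e)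
    (he' : e' ∈ G.edgeFinset) (hv' : v' ∈ e')
    (h : g.x e v = g.x e' v') : e = e' ∧ v = v' := by
  simpa [Prod.ext_iff] using g.x_inj e he v hv e' he' v' hv' h

lemma q_pin {e e' : Sym2 V} {h h' : Fin 2} (he : e ∈ G.edgeFinset)
    (he' : e' ∈ G.edgeFinset) (hq : g.q e h = g.q e' h') : e = e' ∧ h = h' := by
  simpa [Prod.ext_iff] using g.q_inj e he h e' he' h' hq

lemma aleaf_pin {s s' : g.VH} (hs : s ∈ g.Acenters) (hs' : s' ∈ g.Acenters)
    {b : g.VH} (h : b ∈ g.Aleaves s) (h' : b ∈ g.Aleaves s') : s = s' := by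
  by_contra hne
  exact Finset.disjoint_left.mp (g.Aleaves_disjoint s hs s' hs' hne) h h'

/- positive adjacencies -/
lemma adj_x_Y {e : Sym2 V} {u : V} (he : e ∈ G.edgeFinset) (hu : u ∈ e) {b : g.VH}
    (hb : b ∈ g.Y e) : g.H.Adj (g.x e u) b := by
  rw [g.adj_iff]
  exact Or.inl (Or.inr (Or.inr (Or.inr (Or.inr (Or.inl
    ⟨e, he, u, hu, rfl, Or.inl hb⟩)))))

lemma adj_x_Z {e : Sym2 V} {u : V} (he : e ∈ G.edgeFinset) (hu : u ∈ e) {b : g.VH}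
    (hb : b ∈ g.Z e) : g.H.Adj (g.x e u) b := by
  rw [g.adj_iff]
  exact Or.inl (Or.inr (Or.inr (Or.inr (Or.inr (Or.inl
    ⟨e, he, u, hu, rfl, Or.inr (Or.inl hb)⟩)))))

lemma adj_x_L {e : Sym2 V} {u : V} (he : e ∈ G.edgeFinset) (hu : u ∈ e) {b : g.VH}
    (hb : b ∈ g.L e u) : g.H.Adj (g.x e u) b := by
  rw [g.adj_iff]
  exact Or.inl (Or.inr (Or.inr (Or.inr (Or.inr (Or.inl
    ⟨e, he, u, hu, rfl, Or.inr (Or.inr hb)⟩)))))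

lemma adj_x_q {e : Sym2 V} {u : V} (he : e ∈ G.edgeFinset) (hu : u ∈ e) (h : Fin 2) :
    g.H.Adj (g.x e u) (g.q e h) := by
  rw [g.adj_iff]
  refine Or.inr (Or.inr (Or.inr (Or.inr (Or.inr (Or.inr (Or.inr
    ⟨e, he, h, rfl, Or.inr (Or.inr ⟨u, hu, rfl⟩)⟩))))))

/- neighborhood upper bounds -/
lemma adj_x_sub {e : Sym2 V} {u : V} (he : e ∈ G.edgeFinset) (hu : u ∈ e) {b : g.VH}
    (hb : g.H.Adj (g.x e u) b) :
    b ∈ g.Y e ∨ b ∈ g.Z e ∨ b ∈ g.L e u ∨ b = g.q e 0 ∨ b = g.q e 1 := by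
  have hx6 := g.x_pt he hu
  rw [g.adj_iff] at hb
  rcases hb with hb | hb <;>
    rcases hb with ⟨h1, h2⟩ | ⟨s, hs, h1, h2⟩ | ⟨v, h1, h2⟩ | ⟨e', he', v, hv, h1, h2⟩ |
      ⟨e', he', v, hv, h1, h2⟩ | ⟨e', he', h1, h2⟩ | ⟨e', he', hh, h1, h2⟩
  · exact (g.pt_ne' hx6 g.sstar_pt (by omega) h1).elim
  · exact (g.pt_ne' hx6 (g.acenter_pt hs) (by omega) h1).elim
  · exact (g.pt_ne' hx6 (g.orig_pt v) (by omega) h1).elim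
  · exact (g.pt_ne' hx6 (g.orig_pt v) (by omega) h1).elim
  · obtain ⟨rfl, rfl⟩ := g.x_pin he hu he' hv h1
    tauto
  · exact (g.pt_ne' hx6 (g.q_pt he' 0) (by omega) h1).elim
  · exact (g.pt_ne' hx6 (g.q_pt he' hh) (by omega) h1).elim
  · exact (g.pt_false' hx6 (g.sleaf_pt h2) (by omega)).elim
  · exact (g.pt_false' hx6 (g.aleaf_pt hs h2) (by omega)).elim
  · exact (g.pt_false' hx6 (g.P_pt h2) (by omega)).elim
  · rcases h2 with h2 | h2
    · exact (g.pt_false' hx6 (g.L_pt he' hv h2) (by omega)).elim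
    · exact (g.pt_false' hx6 (g.Y_pt he' h2) (by omega)).elim
  · rcases h2 with h2 | h2 | h2
    · exact (g.pt_false' hx6 (g.Y_pt he' h2) (by omega)).elim
    · exact (g.pt_false' hx6 (g.Z_pt he' h2) (by omega)).elim
    · exact (g.pt_false' hx6 (g.L_pt he' hv h2) (by omega)).elim
  · exact (g.pt_ne' hx6 (g.q_pt he' 1) (by omega) h2).elim
  · rcases h2 with h2 | ⟨v, hv, h2⟩ | ⟨v, hv, h2⟩
    · exact (g.pt_false' hx6 (g.Z_pt he' h2) (by omega)).elim
    · exact (g.pt_false' hx6 (g.L_pt he' hv h2) (by omega)).elim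
    · obtain ⟨rfl, rfl⟩ := g.x_pin he hu he' hv h2
      subst h1
      fin_cases hh
      · tauto
      · tauto

lemma adj_q_sub {e : Sym2 V} (he : e ∈ G.edgeFinset) (h : Fin 2) {b : g.VH}
    (hb : g.H.Adj (g.q e h) b) :
    b ∈ g.Z e ∨ (∃ v, v ∈ e ∧ b ∈ g.L e v) ∨ (∃ v, v ∈ e ∧ b = g.x e v) ∨
      b = g.q e 0 ∨ b = g.q e 1 := by
  have hq9 := g.q_pt he h
  rw [g.adj_iff] at hb
  rcases hb with hb | hb <;>
    rcases hb with ⟨h1, h2⟩ | ⟨s, hs, h1, h2⟩ | ⟨v, h1, h2⟩ | ⟨e', he', v, hv, h1, h2⟩ |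
      ⟨e', he', v, hv, h1, h2⟩ | ⟨e', he', h1, h2⟩ | ⟨e', he', hh, h1, h2⟩
  · exact (g.pt_ne' hq9 g.sstar_pt (by omega) h1).elim
  · exact (g.pt_ne' hq9 (g.acenter_pt hs) (by omega) h1).elim
  · exact (g.pt_ne' hq9 (g.orig_pt v) (by omega) h1).elim
  · exact (g.pt_ne' hq9 (g.orig_pt v) (by omega) h1).elim
  · exact (g.pt_ne' hq9 (g.x_pt he' hv) (by omega) h1).elim
  · obtain ⟨rfl, rfl⟩ := g.q_pin he he' h1
    tauto
  · obtain ⟨rfl, rfl⟩ := g.q_pin he he' h1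
    rcases h2 with h2 | ⟨v, hv, h2⟩ | ⟨v, hv, h2⟩
    · exact Or.inl h2
    · exact Or.inr (Or.inl ⟨v, hv, h2⟩)
    · exact Or.inr (Or.inr (Or.inl ⟨v, hv, h2⟩))
  · exact (g.pt_false' hq9 (g.sleaf_pt h2) (by omega)).elim
  · exact (g.pt_false' hq9 (g.aleaf_pt hs h2) (by omega)).elim
  · exact (g.pt_false' hq9 (g.P_pt h2) (by omega)).elim
  · rcases h2 with h2 | h2
    · exact (g.pt_false' hq9 (g.L_pt he' hv h2) (by omega)).elim
    · exact (g.pt_false' hq9 (g.Y_pt he' h2) (by omega)).elim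
  · rcases h2 with h2 | h2 | h2
    · exact (g.pt_false' hq9 (g.Y_pt he' h2) (by omega)).elim
    · exact (g.pt_false' hq9 (g.Z_pt he' h2) (by omega)).elim
    · exact (g.pt_false' hq9 (g.L_pt he' hv h2) (by omega)).elim
  · obtain ⟨rfl, rfl⟩ := g.q_pin he he' h2
    tauto
  · rcases h2 with h2 | ⟨v, hv, h2⟩ | ⟨v, hv, h2⟩
    · exact (g.pt_false' hq9 (g.Z_pt he' h2) (by omega)).elim
    · exact (g.pt_false' hq9 (g.L_pt he' hv h2) (by omega)).elim
    · exact (g.pt_ne' hq9 (g.x_pt he' hv) (by omega) h2).elim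

lemma adj_sleaf_sub {b a : g.VH} (hbS : b ∈ g.Sleaves) (hadj : g.H.Adj b a) :
    a = g.sstar ∨ ∃ e ∈ G.edgeFinset, ∃ v, v ∈ e ∧ b ∈ g.L e v ∧
      (a = g.orig v ∨ a = g.x e v ∨ a = g.q e 0 ∨ a = g.q e 1) := by
  have hb1 := g.sleaf_pt hbS
  rw [g.adj_iff] at hadj
  rcases hadj with hb | hb <;>
    rcases hb with ⟨h1, h2⟩ | ⟨s, hs, h1, h2⟩ | ⟨v, h1, h2⟩ | ⟨e', he', v, hv, h1, h2⟩ |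
      ⟨e', he', v, hv, h1, h2⟩ | ⟨e', he', h1, h2⟩ | ⟨e', he', hh, h1, h2⟩
  · exact (g.pt_ne' hb1 g.sstar_pt (by omega) h1).elim
  · exact (g.pt_ne' hb1 (g.acenter_pt hs) (by omega) h1).elim
  · exact (g.pt_ne' hb1 (g.orig_pt v) (by omega) h1).elim
  · exact (g.pt_ne' hb1 (g.orig_pt v) (by omega) h1).elim
  · exact (g.pt_ne' hb1 (g.x_pt he' hv) (by omega) h1).elim
  · exact (g.pt_ne' hb1 (g.q_pt he' 0) (by omega) h1).elim
  · exact (g.pt_ne' hb1 (g.q_pt he' hh) (by omega) h1).elim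
  · exact Or.inl h1
  · exact (g.pt_false' hb1 (g.aleaf_pt hs h2) (by omega)).elim
  · exact (g.pt_false' hb1 (g.P_pt h2) (by omega)).elim
  · rcases h2 with h2 | h2
    · exact Or.inr ⟨e', he', v, hv, h2, Or.inl h1⟩
    · exact (g.pt_false' hb1 (g.Y_pt he' h2) (by omega)).elim
  · rcases h2 with h2 | h2 | h2
    · exact (g.pt_false' hb1 (g.Y_pt he' h2) (by omega)).elim
    · exact (g.pt_false' hb1 (g.Z_pt he' h2) (by omega)).elim
    · exact Or.inr ⟨e', he', v, hv, h2, Or.inr (Or.inl h1)⟩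
  · exact (g.pt_ne' hb1 (g.q_pt he' 1) (by omega) h2).elim
  · rcases h2 with h2 | ⟨v, hv, h2⟩ | ⟨v, hv, h2⟩
    · exact (g.pt_false' hb1 (g.Z_pt he' h2) (by omega)).elim
    · refine Or.inr ⟨e', he', v, hv, h2, ?_⟩
      fin_cases hh
      · exact Or.inr (Or.inr (Or.inl h1))
      · exact Or.inr (Or.inr (Or.inr h1))
    · exact (g.pt_ne' hb1 (g.x_pt he' hv) (by omega) h2).elim

lemma adj_aleaf_sub {s b a : g.VH} (hs : s ∈ g.Acenters) (hbA : b ∈ g.Aleaves s)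
    (hadj : g.H.Adj b a) : a = s := by
  have hb3 := g.aleaf_pt hs hbA
  rw [g.adj_iff] at hadj
  rcases hadj with hb | hb <;>
    rcases hb with ⟨h1, h2⟩ | ⟨s', hs', h1, h2⟩ | ⟨v, h1, h2⟩ | ⟨e', he', v, hv, h1, h2⟩ |
      ⟨e', he', v, hv, h1, h2⟩ | ⟨e', he', h1, h2⟩ | ⟨e', he', hh, h1, h2⟩
  · exact (g.pt_ne' hb3 g.sstar_pt (by omega) h1).elim
  · exact (g.pt_ne' hb3 (g.acenter_pt hs') (by omega) h1).elim
  · exact (g.pt_ne' hb3 (g.orig_pt v) (by omega) h1).elim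
  · exact (g.pt_ne' hb3 (g.orig_pt v) (by omega) h1).elim
  · exact (g.pt_ne' hb3 (g.x_pt he' hv) (by omega) h1).elim
  · exact (g.pt_ne' hb3 (g.q_pt he' 0) (by omega) h1).elim
  · exact (g.pt_ne' hb3 (g.q_pt he' hh) (by omega) h1).elim
  · exact (g.pt_false' hb3 (g.sleaf_pt h2) (by omega)).elim
  · rw [h1, g.aleaf_pin hs' hs h2 hbA]
  · exact (g.pt_false' hb3 (g.P_pt h2) (by omega)).elim
  · rcases h2 with h2 | h2
    · exact (g.pt_false' hb3 (g.L_pt he' hv h2) (by omega)).elim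
    · exact (g.pt_false' hb3 (g.Y_pt he' h2) (by omega)).elim
  · rcases h2 with h2 | h2 | h2
    · exact (g.pt_false' hb3 (g.Y_pt he' h2) (by omega)).elim
    · exact (g.pt_false' hb3 (g.Z_pt he' h2) (by omega)).elim
    · exact (g.pt_false' hb3 (g.L_pt he' hv h2) (by omega)).elim
  · exact (g.pt_ne' hb3 (g.q_pt he' 1) (by omega) h2).elim
  · rcases h2 with h2 | ⟨v, hv, h2⟩ | ⟨v, hv, h2⟩
    · exact (g.pt_false' hb3 (g.Z_pt he' h2) (by omega)).elim
    · exact (g.pt_false' hb3 (g.L_pt he' hv h2) (by omega)).elim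
    · exact (g.pt_ne' hb3 (g.x_pt he' hv) (by omega) h2).elim

lemma adj_P_sub {v : V} {b a : g.VH} (hbP : b ∈ g.P v) (hadj : g.H.Adj b a) :
    a = g.orig v := by
  have hb5 := g.P_pt hbP
  rw [g.adj_iff] at hadj
  rcases hadj with hb | hb <;>
    rcases hb with ⟨h1, h2⟩ | ⟨s', hs', h1, h2⟩ | ⟨v', h1, h2⟩ | ⟨e', he', v', hv', h1, h2⟩ |
      ⟨e', he', v', hv', h1, h2⟩ | ⟨e', he', h1, h2⟩ | ⟨e', he', hh, h1, h2⟩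
  · exact (g.pt_ne' hb5 g.sstar_pt (by omega) h1).elim
  · exact (g.pt_ne' hb5 (g.acenter_pt hs') (by omega) h1).elim
  · exact (g.pt_ne' hb5 (g.orig_pt v') (by omega) h1).elim
  · exact (g.pt_ne' hb5 (g.orig_pt v') (by omega) h1).elim
  · exact (g.pt_ne' hb5 (g.x_pt he' hv') (by omega) h1).elim
  · exact (g.pt_ne' hb5 (g.q_pt he' 0) (by omega) h1).elim
  · exact (g.pt_ne' hb5 (g.q_pt he' hh) (by omega) h1).elim
  · exact (g.pt_false' hb5 (g.sleaf_pt h2) (by omega)).elim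
  · exact (g.pt_false' hb5 (g.aleaf_pt hs' h2) (by omega)).elim
  · rw [h1, g.P_pin h2 hbP]
  · rcases h2 with h2 | h2
    · exact (g.pt_false' hb5 (g.L_pt he' hv' h2) (by omega)).elim
    · exact (g.pt_false' hb5 (g.Y_pt he' h2) (by omega)).elim
  · rcases h2 with h2 | h2 | h2
    · exact (g.pt_false' hb5 (g.Y_pt he' h2) (by omega)).elim
    · exact (g.pt_false' hb5 (g.Z_pt he' h2) (by omega)).elim
    · exact (g.pt_false' hb5 (g.L_pt he' hv' h2) (by omega)).elim
  · exact (g.pt_ne' hb5 (g.q_pt he' 1) (by omega) h2).elim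
  · rcases h2 with h2 | ⟨v', hv', h2⟩ | ⟨v', hv', h2⟩
    · exact (g.pt_false' hb5 (g.Z_pt he' h2) (by omega)).elim
    · exact (g.pt_false' hb5 (g.L_pt he' hv' h2) (by omega)).elim
    · exact (g.pt_ne' hb5 (g.x_pt he' hv') (by omega) h2).elim

lemma adj_Y_sub {e : Sym2 V} (he : e ∈ G.edgeFinset) {b a : g.VH} (hbY : b ∈ g.Y e)
    (hadj : g.H.Adj b a) : ∃ v, v ∈ e ∧ (a = g.orig v ∨ a = g.x e v) := by
  have hb7 := g.Y_pt he hbY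
  rw [g.adj_iff] at hadj
  rcases hadj with hb | hb <;>
    rcases hb with ⟨h1, h2⟩ | ⟨s', hs', h1, h2⟩ | ⟨v', h1, h2⟩ | ⟨e', he', v', hv', h1, h2⟩ |
      ⟨e', he', v', hv', h1, h2⟩ | ⟨e', he', h1, h2⟩ | ⟨e', he', hh, h1, h2⟩
  · exact (g.pt_ne' hb7 g.sstar_pt (by omega) h1).elim
  · exact (g.pt_ne' hb7 (g.acenter_pt hs') (by omega) h1).elim
  · exact (g.pt_ne' hb7 (g.orig_pt v') (by omega) h1).elim
  · exact (g.pt_ne' hb7 (g.orig_pt v') (by omega) h1).elim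
  · exact (g.pt_ne' hb7 (g.x_pt he' hv') (by omega) h1).elim
  · exact (g.pt_ne' hb7 (g.q_pt he' 0) (by omega) h1).elim
  · exact (g.pt_ne' hb7 (g.q_pt he' hh) (by omega) h1).elim
  · exact (g.pt_false' hb7 (g.sleaf_pt h2) (by omega)).elim
  · exact (g.pt_false' hb7 (g.aleaf_pt hs' h2) (by omega)).elim
  · exact (g.pt_false' hb7 (g.P_pt h2) (by omega)).elim
  · rcases h2 with h2 | h2
    · exact (g.pt_false' hb7 (g.L_pt he' hv' h2) (by omega)).elim
    · obtain rfl := g.Y_pin he' he h2 hbY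
      exact ⟨v', hv', Or.inl h1⟩
  · rcases h2 with h2 | h2 | h2
    · obtain rfl := g.Y_pin he' he h2 hbY
      exact ⟨v', hv', Or.inr h1⟩
    · exact (g.pt_false' hb7 (g.Z_pt he' h2) (by omega)).elim
    · exact (g.pt_false' hb7 (g.L_pt he' hv' h2) (by omega)).elim
  · exact (g.pt_ne' hb7 (g.q_pt he' 1) (by omega) h2).elim
  · rcases h2 with h2 | ⟨v', hv', h2⟩ | ⟨v', hv', h2⟩
    · exact (g.pt_false' hb7 (g.Z_pt he' h2) (by omega)).elim
    · exact (g.pt_false' hb7 (g.L_pt he' hv' h2) (by omega)).elim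
    · exact (g.pt_ne' hb7 (g.x_pt he' hv') (by omega) h2).elim

lemma adj_Z_sub {e : Sym2 V} (he : e ∈ G.edgeFinset) {b a : g.VH} (hbZ : b ∈ g.Z e)
    (hadj : g.H.Adj b a) :
    (∃ v, v ∈ e ∧ a = g.x e v) ∨ a = g.q e 0 ∨ a = g.q e 1 := by
  have hb8 := g.Z_pt he hbZ
  rw [g.adj_iff] at hadj
  rcases hadj with hb | hb <;>
    rcases hb with ⟨h1, h2⟩ | ⟨s', hs', h1, h2⟩ | ⟨v', h1, h2⟩ | ⟨e', he', v', hv', h1, h2⟩ |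
      ⟨e', he', v', hv', h1, h2⟩ | ⟨e', he', h1, h2⟩ | ⟨e', he', hh, h1, h2⟩
  · exact (g.pt_ne' hb8 g.sstar_pt (by omega) h1).elim
  · exact (g.pt_ne' hb8 (g.acenter_pt hs') (by omega) h1).elim
  · exact (g.pt_ne' hb8 (g.orig_pt v') (by omega) h1).elim
  · exact (g.pt_ne' hb8 (g.orig_pt v') (by omega) h1).elim
  · exact (g.pt_ne' hb8 (g.x_pt he' hv') (by omega) h1).elim
  · exact (g.pt_ne' hb8 (g.q_pt he' 0) (by omega) h1).elim
  · exact (g.pt_ne' hb8 (g.q_pt he' hh) (by omega) h1).elim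
  · exact (g.pt_false' hb8 (g.sleaf_pt h2) (by omega)).elim
  · exact (g.pt_false' hb8 (g.aleaf_pt hs' h2) (by omega)).elim
  · exact (g.pt_false' hb8 (g.P_pt h2) (by omega)).elim
  · rcases h2 with h2 | h2
    · exact (g.pt_false' hb8 (g.L_pt he' hv' h2) (by omega)).elim
    · exact (g.pt_false' hb8 (g.Y_pt he' h2) (by omega)).elim
  · rcases h2 with h2 | h2 | h2
    · exact (g.pt_false' hb8 (g.Y_pt he' h2) (by omega)).elim
    · obtain rfl := g.Z_pin he' he h2 hbZ
      exact Or.inl ⟨v', hv', h1⟩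
    · exact (g.pt_false' hb8 (g.L_pt he' hv' h2) (by omega)).elim
  · exact (g.pt_ne' hb8 (g.q_pt he' 1) (by omega) h2).elim
  · rcases h2 with h2 | ⟨v', hv', h2⟩ | ⟨v', hv', h2⟩
    · obtain rfl := g.Z_pin he' he h2 hbZ
      fin_cases hh
      · exact Or.inr (Or.inl h1)
      · exact Or.inr (Or.inr h1)
    · exact (g.pt_false' hb8 (g.L_pt he' hv' h2) (by omega)).elim
    · exact (g.pt_ne' hb8 (g.x_pt he' hv') (by omega) h2).elim

end Gadget
end Nbhd
set_option linter.unusedSectionVars false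
section Deg
variable {V : Type*} [Fintype V] [DecidableEq V] {G : SimpleGraph V}
  [DecidableRel G.Adj] {wt : Sym2 V → ℕ}

namespace Gadget

variable (g : Gadget V G wt)

lemma k_ge_3 (hn : 1 ≤ Fintype.card V) : 3 ≤ numColors G wt := by
  unfold numColors; omega

lemma k_ge_8 (hwt : ∀ e ∈ G.edgeFinset, 1 ≤ wt e) {e : Sym2 V}
    (he : e ∈ G.edgeFinset) (hn : 1 ≤ Fintype.card V) : 8 ≤ numColors G wt := by
  have h1 : 1 ≤ totW G wt :=
    le_trans (hwt e he) (Finset.single_le_sum (fun _ _ => Nat.zero_le _) he)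
  have h2 : 1 ≤ G.edgeFinset.card := Finset.card_pos.mpr ⟨e, he⟩
  unfold numColors
  omega

lemma bvertex_card_ge {c : g.VH → Fin (numColors G wt)} {a : g.VH}
    (ha : IsBVertex g.H c a) :
    numColors G wt - 1 ≤ (g.H.neighborFinset a).card := by
  classical
  have hsub : (Finset.univ.erase (c a)).card ≤ (g.H.neighborFinset a).card := by
    apply Finset.card_le_card_of_injOn
      (f := fun col => if h : col = c a then a else (ha col h).choose)
    · intro col hcol
      rw [Finset.mem_coe, Finset.mem_erase] at hcol
      dsimp only; rw [dif_neg hcol.1]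
      exact (SimpleGraph.mem_neighborFinset _ _ _).mpr ((ha col hcol.1).choose_spec).1
    · intro c1 h1 c2 h2 heq
      simp only [Finset.coe_erase, Set.mem_diff, Finset.mem_coe, Set.mem_singleton_iff]
        at h1 h2
      dsimp only at heq
      rw [dif_neg h1.2, dif_neg h2.2] at heq
      rw [← ((ha c1 h1.2).choose_spec).2, heq, ((ha c2 h2.2).choose_spec).2]
  have hce : (Finset.univ.erase (c a)).card = numColors G wt - 1 := by
    rw [Finset.card_erase_of_mem (Finset.mem_univ _), Finset.card_univ, Fintype.card_fin]
  omega

lemma bvertex_injOn {c : g.VH → Fin (numColors G wt)} {a : g.VH}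
    (ha : IsBVertex g.H c a)
    (hd : (g.H.neighborFinset a).card ≤ numColors G wt - 1) :
    Set.InjOn c (g.H.neighborFinset a) := by
  classical
  have hk1 : 1 ≤ numColors G wt := by unfold numColors; omega
  have hsub : Finset.univ.erase (c a) ⊆ (g.H.neighborFinset a).image c := by
    intro col hcol
    rw [Finset.mem_erase] at hcol
    obtain ⟨b, hb, hcb⟩ := ha col hcol.1
    exact Finset.mem_image.mpr ⟨b, (SimpleGraph.mem_neighborFinset _ _ _).mpr hb, hcb⟩
  have h1 : numColors G wt - 1 ≤ ((g.H.neighborFinset a).image c).card := by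
    calc numColors G wt - 1
        = (Finset.univ.erase (c a)).card := by
          rw [Finset.card_erase_of_mem (Finset.mem_univ _), Finset.card_univ,
            Fintype.card_fin]
      _ ≤ _ := Finset.card_le_card hsub
  have h2 : ((g.H.neighborFinset a).image c).card ≤ (g.H.neighborFinset a).card :=
    Finset.card_image_le
  have : ((g.H.neighborFinset a).image c).card = (g.H.neighborFinset a).card := by omega
  exact Finset.card_image_iff.mp this

lemma x_nbhd_sub {e : Sym2 V} {u : V} (he : e ∈ G.edgeFinset) (hu : u ∈ e) :
    g.H.neighborFinset (g.x e u) ⊆ g.Y e ∪ g.Z e ∪ g.L e u ∪ {g.q e 0, g.q e 1} := by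
  intro b hb
  rw [SimpleGraph.mem_neighborFinset] at hb
  rcases g.adj_x_sub he hu hb with h | h | h | h | h
  · exact Finset.mem_union.mpr (Or.inl (Finset.mem_union.mpr (Or.inl
      (Finset.mem_union.mpr (Or.inl h)))))
  · exact Finset.mem_union.mpr (Or.inl (Finset.mem_union.mpr (Or.inl
      (Finset.mem_union.mpr (Or.inr h)))))
  · exact Finset.mem_union.mpr (Or.inl (Finset.mem_union.mpr (Or.inr h)))
  · exact Finset.mem_union.mpr (Or.inr (by simp [h]))
  · exact Finset.mem_union.mpr (Or.inr (by simp [h]))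

lemma x_nbhd_card {e : Sym2 V} {u : V} (he : e ∈ G.edgeFinset) (hu : u ∈ e) :
    (g.H.neighborFinset (g.x e u)).card ≤ numColors G wt - 1 := by
  have h1 := Finset.card_le_card (g.x_nbhd_sub he hu)
  have h2 := Finset.card_union_le (g.Y e ∪ g.Z e ∪ g.L e u) ({g.q e 0, g.q e 1} : Finset g.VH)
  have h3 := Finset.card_union_le (g.Y e ∪ g.Z e) (g.L e u)
  have h4 := Finset.card_union_le (g.Y e) (g.Z e)
  have h5 : ({g.q e 0, g.q e 1} : Finset g.VH).card ≤ 2 :=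
    le_trans (Finset.card_insert_le _ _) (by simp)
  have hY := g.card_Y e he
  have hL := g.card_L e he u hu
  have hZ := g.card_Z e he
  omega

lemma x_injOn {c : g.VH → Fin (numColors G wt)} {e : Sym2 V} {u : V}
    (he : e ∈ G.edgeFinset) (hu : u ∈ e) (hb : IsBVertex g.H c (g.x e u)) :
    Set.InjOn c (g.H.neighborFinset (g.x e u)) :=
  g.bvertex_injOn hb (g.x_nbhd_card he hu)

lemma not_bq {c : g.VH → Fin (numColors G wt)} (hwt : ∀ e ∈ G.edgeFinset, 1 ≤ wt e)
    (hprop : ∀ ⦃a b : g.VH⦄, g.H.Adj a b → c a ≠ c b)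
    {u v : V} (huv : u ≠ v) (he : s(u, v) ∈ G.edgeFinset)
    (hbu : IsBVertex g.H c (g.x s(u, v) u)) (hbv : IsBVertex g.H c (g.x s(u, v) v))
    (h : Fin 2) : ¬ IsBVertex g.H c (g.q s(u, v) h) := by
  intro hq
  set e : Sym2 V := s(u, v) with hedef
  have hu : u ∈ e := by rw [hedef]; exact Sym2.mem_mk_left u v
  have hv : v ∈ e := by rw [hedef]; exact Sym2.mem_mk_right u v
  have hYne : (g.Y e).Nonempty := by
    rw [← Finset.card_pos, g.card_Y e he]
    exact hwt e he
  obtain ⟨y, hy⟩ := hYne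
  have hIu := g.x_injOn he hu hbu
  have hIv := g.x_injOn he hv hbv
  have hyu : y ∈ g.H.neighborFinset (g.x e u) :=
    (SimpleGraph.mem_neighborFinset _ _ _).mpr (g.adj_x_Y he hu hy)
  have hyv : y ∈ g.H.neighborFinset (g.x e v) :=
    (SimpleGraph.mem_neighborFinset _ _ _).mpr (g.adj_x_Y he hv hy)
  have hqu : ∀ h' : Fin 2, g.q e h' ∈ g.H.neighborFinset (g.x e u) :=
    fun h' => (SimpleGraph.mem_neighborFinset _ _ _).mpr (g.adj_x_q he hu h')
  have hcyq : c y ≠ c (g.q e h) := by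
    intro hcc
    exact g.pt_ne' (g.Y_pt he hy) (g.q_pt he h) (by omega)
      (hIu (Finset.mem_coe.mpr hyu) (Finset.mem_coe.mpr (hqu h)) hcc)
  obtain ⟨b, hadj, hcb⟩ := hq (c y) hcyq
  rcases g.adj_q_sub he h hadj with hbZ | ⟨v', hv', hbL⟩ | ⟨v', hv', rfl⟩ | rfl | rfl
  · have hbn : b ∈ g.H.neighborFinset (g.x e u) :=
      (SimpleGraph.mem_neighborFinset _ _ _).mpr (g.adj_x_Z he hu hbZ)
    exact g.pt_ne' (g.Z_pt he hbZ) (g.Y_pt he hy) (by omega)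
      (hIu (Finset.mem_coe.mpr hbn) (Finset.mem_coe.mpr hyu) hcb)
  · have hv'uv : v' = u ∨ v' = v := by
      rw [hedef] at hv'
      exact Sym2.mem_iff.mp hv'
    rcases hv'uv with rfl | rfl
    · have hbn : b ∈ g.H.neighborFinset (g.x e v') :=
        (SimpleGraph.mem_neighborFinset _ _ _).mpr (g.adj_x_L he hv' hbL)
      exact g.pt_ne' (g.L_pt he hv' hbL) (g.Y_pt he hy) (by omega)
        (hIu (Finset.mem_coe.mpr hbn) (Finset.mem_coe.mpr hyu) hcb)
    · have hbn : b ∈ g.H.neighborFinset (g.x e v') :=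
        (SimpleGraph.mem_neighborFinset _ _ _).mpr (g.adj_x_L he hv' hbL)
      exact g.pt_ne' (g.L_pt he hv' hbL) (g.Y_pt he hy) (by omega)
        (hIv (Finset.mem_coe.mpr hbn) (Finset.mem_coe.mpr hyv) hcb)
  · exact hprop (g.adj_x_Y he hv' hy) hcb
  · exact g.pt_ne' (g.q_pt he 0) (g.Y_pt he hy) (by omega)
      (hIu (Finset.mem_coe.mpr (hqu 0)) (Finset.mem_coe.mpr hyu) hcb)
  · exact g.pt_ne' (g.q_pt he 1) (g.Y_pt he hy) (by omega)
      (hIu (Finset.mem_coe.mpr (hqu 1)) (Finset.mem_coe.mpr hyu) hcb)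

end Gadget
end Deg
section Big
variable {V : Type*} [Fintype V] [DecidableEq V] {G : SimpleGraph V}
  [DecidableRel G.Adj] {wt : Sym2 V → ℕ}

lemma edge_repr {e : Sym2 V} (he : e ∈ G.edgeFinset) :
    ∃ u v : V, u ≠ v ∧ e = s(u, v) ∧ u ∈ e ∧ v ∈ e := by
  rw [SimpleGraph.mem_edgeFinset] at he
  revert he
  refine Sym2.ind (fun u v => ?_) e
  intro hadj
  rw [SimpleGraph.mem_edgeSet] at hadj
  exact ⟨u, v, hadj.ne, rfl, Sym2.mem_mk_left u v, Sym2.mem_mk_right u v⟩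

lemma card_le_five {α : Type*} [DecidableEq α] (a b c d e : α) :
    ({a, b, c, d, e} : Finset α).card ≤ 5 := by
  have h1 := Finset.card_insert_le a ({b, c, d, e} : Finset α)
  have h2 := Finset.card_insert_le b ({c, d, e} : Finset α)
  have h3 := Finset.card_insert_le c ({d, e} : Finset α)
  have h4 := Finset.card_insert_le d ({e} : Finset α)
  have h5 : ({e} : Finset α).card = 1 := Finset.card_singleton e
  omega

lemma card_le_four {α : Type*} [DecidableEq α] (a b c d : α) :
    ({a, b, c, d} : Finset α).card ≤ 4 := by
  have h2 := Finset.card_insert_le a ({b, c, d} : Finset α)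
  have h3 := Finset.card_insert_le b ({c, d} : Finset α)
  have h4 := Finset.card_insert_le c ({d} : Finset α)
  have h5 : ({d} : Finset α).card = 1 := Finset.card_singleton d
  omega

lemma card_le_three {α : Type*} [DecidableEq α] (a b c : α) :
    ({a, b, c} : Finset α).card ≤ 3 := by
  have h3 := Finset.card_insert_le a ({b, c} : Finset α)
  have h4 := Finset.card_insert_le b ({c} : Finset α)
  have h5 : ({c} : Finset α).card = 1 := Finset.card_singleton c
  omega

lemma card_le_two {α : Type*} [DecidableEq α] (a b : α) :
    ({a, b} : Finset α).card ≤ 2 := by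
  have h4 := Finset.card_insert_le a ({b} : Finset α)
  have h5 : ({b} : Finset α).card = 1 := Finset.card_singleton b
  omega

namespace Gadget

variable (g : Gadget V G wt)

lemma sstar_big : g.sstar ∈ g.bigSet := by
  rw [GadgetData.bigSet]
  exact Finset.mem_union_left _ (Finset.mem_union_left _ (Finset.mem_union_left _
    (Finset.mem_union_left _ (Finset.mem_singleton_self _))))

lemma orig_big (v : V) : g.orig v ∈ g.bigSet := by
  rw [GadgetData.bigSet]
  exact Finset.mem_union_left _ (Finset.mem_union_left _ (Finset.mem_union_left _
    (Finset.mem_union_right _ (Finset.mem_image_of_mem _ (Finset.mem_univ v)))))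

lemma qset_big {a : g.VH} (h : a ∈ g.Qset) : a ∈ g.bigSet := by
  rw [GadgetData.bigSet]
  exact Finset.mem_union_left _ (Finset.mem_union_left _ (Finset.mem_union_right _ h))

lemma ac_big {a : g.VH} (h : a ∈ g.Acenters) : a ∈ g.bigSet := by
  rw [GadgetData.bigSet]
  exact Finset.mem_union_left _ (Finset.mem_union_right _ h)

lemma xset_big {a : g.VH} (h : a ∈ g.Xset) : a ∈ g.bigSet := by
  rw [GadgetData.bigSet]
  exact Finset.mem_union_right _ h

lemma bvertex_mem_bigSet (hwt : ∀ e ∈ G.edgeFinset, 1 ≤ wt e)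
    (hn : 1 ≤ Fintype.card V) {c : g.VH → Fin (numColors G wt)} {a : g.VH}
    (ha : IsBVertex g.H c a) : a ∈ g.bigSet := by
  obtain ⟨p, hp, hap⟩ := g.parts_cover a
  have hge := g.bvertex_card_ge ha
  have hk3 : 3 ≤ numColors G wt := Gadget.k_ge_3 (G := G) (wt := wt) hn
  rw [GadgetData.parts] at hp
  simp only [List.mem_cons, List.not_mem_nil, or_false] at hp
  rcases hp with rfl | rfl | rfl | rfl | rfl | rfl | rfl | rfl | rfl | rfl
  · rw [Finset.mem_singleton] at hap
    subst hap
    exact g.sstar_big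
  · -- superstar leaves
    exfalso
    by_cases hL : ∃ e, e ∈ G.edgeFinset ∧ ∃ w, w ∈ e ∧ a ∈ g.L e w
    · obtain ⟨e, he, w, hw, haL⟩ := hL
      have hk8 : 8 ≤ numColors G wt := Gadget.k_ge_8 (wt := wt) hwt he hn
      have hsub : g.H.neighborFinset a ⊆
          {g.sstar, g.orig w, g.x e w, g.q e 0, g.q e 1} := by
        intro b hb
        rw [SimpleGraph.mem_neighborFinset] at hb
        rcases g.adj_sleaf_sub hap hb with rfl | ⟨e', he', w', hw', haL', hcase⟩
        · simp
        · obtain ⟨rfl, rfl⟩ := g.L_pin he' hw' he hw haL' haL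
          rcases hcase with rfl | rfl | rfl | rfl <;> simp
      have hcard := Finset.card_le_card hsub
      have h5 := card_le_five g.sstar (g.orig w) (g.x e w) (g.q e 0) (g.q e 1)
      omega
    · have hsub : g.H.neighborFinset a ⊆ {g.sstar} := by
        intro b hb
        rw [SimpleGraph.mem_neighborFinset] at hb
        rcases g.adj_sleaf_sub hap hb with rfl | ⟨e', he', w', hw', haL', _⟩
        · simp
        · exact absurd ⟨e', he', w', hw', haL'⟩ hL
      have hcard := Finset.card_le_card hsub
      rw [Finset.card_singleton] at hcard
      omega
  · exact g.ac_big hap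
  · -- anonymous leaves
    exfalso
    rw [Finset.mem_biUnion] at hap
    obtain ⟨s, hs, haA⟩ := hap
    have hsub : g.H.neighborFinset a ⊆ {s} := by
      intro b hb
      rw [SimpleGraph.mem_neighborFinset] at hb
      rw [Finset.mem_singleton]
      exact g.adj_aleaf_sub hs haA hb
    have hcard := Finset.card_le_card hsub
    rw [Finset.card_singleton] at hcard
    omega
  · rw [Finset.mem_image] at hap
    obtain ⟨v, -, rfl⟩ := hap
    exact g.orig_big v
  · -- P leaves
    exfalso
    rw [Finset.mem_biUnion] at hap
    obtain ⟨v, -, haP⟩ := hap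
    have hsub : g.H.neighborFinset a ⊆ {g.orig v} := by
      intro b hb
      rw [SimpleGraph.mem_neighborFinset] at hb
      rw [Finset.mem_singleton]
      exact g.adj_P_sub haP hb
    have hcard := Finset.card_le_card hsub
    rw [Finset.card_singleton] at hcard
    omega
  · exact g.xset_big hap
  · -- Y vertices
    exfalso
    rw [Finset.mem_biUnion] at hap
    obtain ⟨e, he, haY⟩ := hap
    have hk8 : 8 ≤ numColors G wt := Gadget.k_ge_8 (wt := wt) hwt he hn
    obtain ⟨u', v', huv, rfl, hu', hv'⟩ := edge_repr he
    have hsub : g.H.neighborFinset a ⊆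
        {g.orig u', g.orig v', g.x s(u', v') u', g.x s(u', v') v'} := by
      intro b hb
      rw [SimpleGraph.mem_neighborFinset] at hb
      obtain ⟨w, hw, hcase⟩ := g.adj_Y_sub he haY hb
      rcases Sym2.mem_iff.mp hw with rfl | rfl <;> rcases hcase with rfl | rfl <;> simp
    have hcard := Finset.card_le_card hsub
    have h4 := card_le_four (g.orig u') (g.orig v') (g.x s(u', v') u') (g.x s(u', v') v')
    omega
  · -- Z vertices
    exfalso
    rw [Finset.mem_biUnion] at hap
    obtain ⟨e, he, haZ⟩ := hap
    have hk8 : 8 ≤ numColors G wt := Gadget.k_ge_8 (wt := wt) hwt he hn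
    obtain ⟨u', v', huv, rfl, hu', hv'⟩ := edge_repr he
    have hsub : g.H.neighborFinset a ⊆
        {g.x s(u', v') u', g.x s(u', v') v', g.q s(u', v') 0, g.q s(u', v') 1} := by
      intro b hb
      rw [SimpleGraph.mem_neighborFinset] at hb
      rcases g.adj_Z_sub he haZ hb with ⟨w, hw, rfl⟩ | rfl | rfl
      · rcases Sym2.mem_iff.mp hw with rfl | rfl <;> simp
      · simp
      · simp
    have hcard := Finset.card_le_card hsub
    have h4 := card_le_four (g.x s(u', v') u') (g.x s(u', v') v')
      (g.q s(u', v') 0) (g.q s(u', v') 1)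
    omega
  · exact g.qset_big hap

end Gadget
end Big
section Count
variable {V : Type*} [Fintype V] [DecidableEq V] {G : SimpleGraph V}
  [DecidableRel G.Adj] {wt : Sym2 V → ℕ}

namespace Gadget

variable (g : Gadget V G wt)

/-- the non-edge part of the candidate set -/
def core : Finset g.VH := {g.sstar} ∪ Finset.univ.image g.orig ∪ g.Acenters

/-- the per-edge part of the candidate set -/
def Fedge (e : Sym2 V) : Finset g.VH :=
  (Finset.univ.filter (fun v : V => v ∈ e)).image (g.x e) ∪ {g.q e 0, g.q e 1}

lemma biUnion_Fedge_eq : G.edgeFinset.biUnion g.Fedge = g.Xset ∪ g.Qset := by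
  ext a
  simp only [Fedge, GadgetData.Xset, GadgetData.Qset, Finset.mem_union, Finset.mem_biUnion]
  constructor
  · rintro ⟨e, he, h | h⟩
    · exact Or.inl ⟨e, he, h⟩
    · exact Or.inr ⟨e, he, h⟩
  · rintro (⟨e, he, h⟩ | ⟨e, he, h⟩)
    · exact ⟨e, he, Or.inl h⟩
    · exact ⟨e, he, Or.inr h⟩

lemma bigSet_eq : g.bigSet = g.core ∪ G.edgeFinset.biUnion g.Fedge := by
  rw [g.biUnion_Fedge_eq]
  ext a
  simp only [GadgetData.bigSet, core, Finset.mem_union]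
  tauto

lemma core_card : g.core.card = 2 * totW G wt + Fintype.card V + 2 := by
  have hd1 : Disjoint ({g.sstar} : Finset g.VH) (Finset.univ.image g.orig) := by
    have h := g.pt_disjoint (i := 0) (j := 4) (by omega) (by omega) (by omega)
    rwa [g.pt0_def, g.pt4_def] at h
  have hd2 : Disjoint ({g.sstar} ∪ Finset.univ.image g.orig) g.Acenters := by
    rw [Finset.disjoint_union_left]
    constructor
    · have h := g.pt_disjoint (i := 0) (j := 2) (by omega) (by omega) (by omega)
      rwa [g.pt0_def, g.pt2_def] at h
    · have h := g.pt_disjoint (i := 4) (j := 2) (by omega) (by omega) (by omega)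
      rwa [g.pt4_def, g.pt2_def] at h
  rw [core, Finset.card_union_of_disjoint hd2, Finset.card_union_of_disjoint hd1,
    Finset.card_singleton, Finset.card_image_of_injective _ g.orig_inj,
    Finset.card_univ, g.card_Acenters]
  ring

lemma Fedge_eq {u v : V} (huv : u ≠ v) :
    g.Fedge s(u, v) = {g.x s(u, v) u, g.x s(u, v) v, g.q s(u, v) 0, g.q s(u, v) 1} := by
  have hfil : (Finset.univ.filter (fun w : V => w ∈ s(u, v))) = {u, v} := by
    ext w
    simp [Sym2.mem_iff]
  rw [Fedge, hfil]
  ext a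
  simp only [Finset.mem_union, Finset.mem_image, Finset.mem_insert, Finset.mem_singleton]
  constructor
  · rintro (⟨w, hw, rfl⟩ | h | h)
    · rcases hw with rfl | rfl <;> tauto
    · tauto
    · tauto
  · rintro (rfl | rfl | rfl | rfl)
    · exact Or.inl ⟨u, by simp, rfl⟩
    · exact Or.inl ⟨v, by simp, rfl⟩
    · tauto
    · tauto

lemma B_le3 {c : g.VH → Fin (numColors G wt)} (hwt : ∀ e ∈ G.edgeFinset, 1 ≤ wt e)
    (hprop : ∀ ⦃a b : g.VH⦄, g.H.Adj a b → c a ≠ c b)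
    {u v : V} (huv : u ≠ v) (he : s(u, v) ∈ G.edgeFinset) (B : Finset g.VH)
    (hB : ∀ a : g.VH, a ∈ B ↔ IsBVertex g.H c a) :
    (B ∩ g.Fedge s(u, v)).card ≤ 3 := by
  rw [g.Fedge_eq huv]
  by_cases hboth : g.x s(u, v) u ∈ B ∧ g.x s(u, v) v ∈ B
  · have hq0 : g.q s(u, v) 0 ∉ B := fun hq =>
      g.not_bq hwt hprop huv he ((hB _).mp hboth.1) ((hB _).mp hboth.2) 0 ((hB _).mp hq)
    have hq1 : g.q s(u, v) 1 ∉ B := fun hq =>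
      g.not_bq hwt hprop huv he ((hB _).mp hboth.1) ((hB _).mp hboth.2) 1 ((hB _).mp hq)
    have hsub : B ∩ {g.x s(u, v) u, g.x s(u, v) v, g.q s(u, v) 0, g.q s(u, v) 1} ⊆
        {g.x s(u, v) u, g.x s(u, v) v} := by
      intro a ha
      rw [Finset.mem_inter] at ha
      have h2 := ha.2
      simp only [Finset.mem_insert, Finset.mem_singleton] at h2 ⊢
      rcases h2 with rfl | rfl | rfl | rfl
      · exact Or.inl rfl
      · exact Or.inr rfl
      · exact absurd ha.1 hq0
      · exact absurd ha.1 hq1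
    have hc2 := le_trans (Finset.card_le_card hsub)
      (card_le_two (g.x s(u, v) u) (g.x s(u, v) v))
    omega
  · rw [not_and_or] at hboth
    rcases hboth with hxu | hxv
    · have hsub : B ∩ {g.x s(u, v) u, g.x s(u, v) v, g.q s(u, v) 0, g.q s(u, v) 1} ⊆
          {g.x s(u, v) v, g.q s(u, v) 0, g.q s(u, v) 1} := by
        intro a ha
        rw [Finset.mem_inter] at ha
        have h2 := ha.2
        simp only [Finset.mem_insert, Finset.mem_singleton] at h2 ⊢
        rcases h2 with rfl | rfl | rfl | rfl
        · exact absurd ha.1 hxu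
        · tauto
        · tauto
        · tauto
      exact le_trans (Finset.card_le_card hsub) (card_le_three _ _ _)
    · have hsub : B ∩ {g.x s(u, v) u, g.x s(u, v) v, g.q s(u, v) 0, g.q s(u, v) 1} ⊆
          {g.x s(u, v) u, g.q s(u, v) 0, g.q s(u, v) 1} := by
        intro a ha
        rw [Finset.mem_inter] at ha
        have h2 := ha.2
        simp only [Finset.mem_insert, Finset.mem_singleton] at h2 ⊢
        rcases h2 with rfl | rfl | rfl | rfl
        · tauto
        · exact absurd ha.1 hxv
        · tauto
        · tauto
      exact le_trans (Finset.card_le_card hsub) (card_le_three _ _ _)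

lemma B_eq3 {c : g.VH → Fin (numColors G wt)} (hwt : ∀ e ∈ G.edgeFinset, 1 ≤ wt e)
    (hprop : ∀ ⦃a b : g.VH⦄, g.H.Adj a b → c a ≠ c b)
    {u v : V} (huv : u ≠ v) (he : s(u, v) ∈ G.edgeFinset) (B : Finset g.VH)
    (hB : ∀ a : g.VH, a ∈ B ↔ IsBVertex g.H c a)
    (h3 : (B ∩ g.Fedge s(u, v)).card = 3) :
    g.q s(u, v) 0 ∈ B ∧ g.q s(u, v) 1 ∈ B ∧
      (g.x s(u, v) u ∈ B ↔ g.x s(u, v) v ∉ B) := by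
  rw [g.Fedge_eq huv] at h3
  have hnb : ¬ (g.x s(u, v) u ∈ B ∧ g.x s(u, v) v ∈ B) := by
    rintro ⟨h1, h2⟩
    have hq0 : g.q s(u, v) 0 ∉ B := fun hq =>
      g.not_bq hwt hprop huv he ((hB _).mp h1) ((hB _).mp h2) 0 ((hB _).mp hq)
    have hq1 : g.q s(u, v) 1 ∉ B := fun hq =>
      g.not_bq hwt hprop huv he ((hB _).mp h1) ((hB _).mp h2) 1 ((hB _).mp hq)
    have hsub : B ∩ {g.x s(u, v) u, g.x s(u, v) v, g.q s(u, v) 0, g.q s(u, v) 1} ⊆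
        {g.x s(u, v) u, g.x s(u, v) v} := by
      intro a ha
      rw [Finset.mem_inter] at ha
      have h2' := ha.2
      simp only [Finset.mem_insert, Finset.mem_singleton] at h2' ⊢
      rcases h2' with rfl | rfl | rfl | rfl
      · exact Or.inl rfl
      · exact Or.inr rfl
      · exact absurd ha.1 hq0
      · exact absurd ha.1 hq1
    have hc2 := le_trans (Finset.card_le_card hsub) (card_le_two _ _)
    omega
  have honex : g.x s(u, v) u ∉ B ∨ g.x s(u, v) v ∉ B := by
    rw [← not_and_or]
    exact hnb
  have hq0B : g.q s(u, v) 0 ∈ B := by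
    by_contra hq0
    rcases honex with hx | hx
    · have hsub : B ∩ {g.x s(u, v) u, g.x s(u, v) v, g.q s(u, v) 0, g.q s(u, v) 1} ⊆
          {g.x s(u, v) v, g.q s(u, v) 1} := by
        intro a ha
        rw [Finset.mem_inter] at ha
        have h2' := ha.2
        simp only [Finset.mem_insert, Finset.mem_singleton] at h2' ⊢
        rcases h2' with rfl | rfl | rfl | rfl
        · exact absurd ha.1 hx
        · tauto
        · exact absurd ha.1 hq0
        · tauto
      have hc2 := le_trans (Finset.card_le_card hsub) (card_le_two _ _)
      omega
    · have hsub : B ∩ {g.x s(u, v) u, g.x s(u, v) v, g.q s(u, v) 0, g.q s(u, v) 1} ⊆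
          {g.x s(u, v) u, g.q s(u, v) 1} := by
        intro a ha
        rw [Finset.mem_inter] at ha
        have h2' := ha.2
        simp only [Finset.mem_insert, Finset.mem_singleton] at h2' ⊢
        rcases h2' with rfl | rfl | rfl | rfl
        · tauto
        · exact absurd ha.1 hx
        · exact absurd ha.1 hq0
        · tauto
      have hc2 := le_trans (Finset.card_le_card hsub) (card_le_two _ _)
      omega
  have hq1B : g.q s(u, v) 1 ∈ B := by
    by_contra hq1
    rcases honex with hx | hx
    · have hsub : B ∩ {g.x s(u, v) u, g.x s(u, v) v, g.q s(u, v) 0, g.q s(u, v) 1} ⊆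
          {g.x s(u, v) v, g.q s(u, v) 0} := by
        intro a ha
        rw [Finset.mem_inter] at ha
        have h2' := ha.2
        simp only [Finset.mem_insert, Finset.mem_singleton] at h2' ⊢
        rcases h2' with rfl | rfl | rfl | rfl
        · exact absurd ha.1 hx
        · tauto
        · tauto
        · exact absurd ha.1 hq1
      have hc2 := le_trans (Finset.card_le_card hsub) (card_le_two _ _)
      omega
    · have hsub : B ∩ {g.x s(u, v) u, g.x s(u, v) v, g.q s(u, v) 0, g.q s(u, v) 1} ⊆
          {g.x s(u, v) u, g.q s(u, v) 0} := by
        intro a ha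
        rw [Finset.mem_inter] at ha
        have h2' := ha.2
        simp only [Finset.mem_insert, Finset.mem_singleton] at h2' ⊢
        rcases h2' with rfl | rfl | rfl | rfl
        · tauto
        · exact absurd ha.1 hx
        · tauto
        · exact absurd ha.1 hq1
      have hc2 := le_trans (Finset.card_le_card hsub) (card_le_two _ _)
      omega
  refine ⟨hq0B, hq1B, ?_, ?_⟩
  · intro hxu hxv
    exact hnb ⟨hxu, hxv⟩
  · intro hnxv
    by_contra hnxu
    have hsub : B ∩ {g.x s(u, v) u, g.x s(u, v) v, g.q s(u, v) 0, g.q s(u, v) 1} ⊆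
        {g.q s(u, v) 0, g.q s(u, v) 1} := by
      intro a ha
      rw [Finset.mem_inter] at ha
      have h2' := ha.2
      simp only [Finset.mem_insert, Finset.mem_singleton] at h2' ⊢
      rcases h2' with rfl | rfl | rfl | rfl
      · exact absurd ha.1 hnxu
      · exact absurd ha.1 hnxv
      · tauto
      · tauto
    have hc2 := le_trans (Finset.card_le_card hsub) (card_le_two _ _)
    omega

lemma sstar_core : g.sstar ∈ g.core := by
  rw [core]
  exact Finset.mem_union_left _ (Finset.mem_union_left _ (Finset.mem_singleton_self _))

lemma orig_core (v : V) : g.orig v ∈ g.core := by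
  rw [core]
  exact Finset.mem_union_left _
    (Finset.mem_union_right _ (Finset.mem_image_of_mem _ (Finset.mem_univ v)))

lemma ac_core {s : g.VH} (h : s ∈ g.Acenters) : s ∈ g.core := by
  rw [core]
  exact Finset.mem_union_right _ h

end Gadget
end Count
/-- Every b-coloring of `H` with `k` colors has precisely one b-vertex per
color, and the b-vertices are `{s*} ∪ V(G) ∪ Q ∪ A` together with, for each edge
`e = uv` of `G`, precisely one of `x_{e,u}` and `x_{e,v}`. -/
theorem bVertices_characterization
    {V : Type*} [Fintype V] [DecidableEq V] (G : SimpleGraph V) [DecidableRel G.Adj]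
    (wt : Sym2 V → ℕ) (hconn : G.Connected)
    (hwt : ∀ e ∈ G.edgeFinset, 1 ≤ wt e)
    (heven : ∀ v : V, Even (vertW G wt v))
    (g : Gadget V G wt)
    (c : g.VH → Fin (numColors G wt)) (hc : IsBColoring g.H (numColors G wt) c) :
    (∀ col : Fin (numColors G wt), ∃! a : g.VH, c a = col ∧ IsBVertex g.H c a) ∧
    (∀ e ∈ G.edgeFinset, ∀ u v : V, e = s(u, v) → u ≠ v →
      (IsBVertex g.H c (g.x e u) ↔ ¬ IsBVertex g.H c (g.x e v))) ∧
    {a : g.VH | IsBVertex g.H c a} =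
      ({g.sstar} : Set g.VH) ∪ Set.range g.orig ∪
        {a : g.VH | ∃ e ∈ G.edgeFinset, ∃ h : Fin 2, a = g.q e h} ∪
        (↑g.Acenters : Set g.VH) ∪
        {a : g.VH | ∃ e ∈ G.edgeFinset, ∃ v : V, v ∈ e ∧
          IsBVertex g.H c (g.x e v) ∧ a = g.x e v} := by
  classical
  obtain ⟨hprop, hsurj, hbv⟩ := hc
  have hn : 1 ≤ Fintype.card V := Fintype.card_pos_iff.mpr hconn.nonempty
  obtain ⟨B, hB⟩ : ∃ B : Finset g.VH, ∀ a : g.VH, a ∈ B ↔ IsBVertex g.H c a :=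
    ⟨Finset.univ.filter (fun a => IsBVertex g.H c a), fun a => by simp⟩
  -- lower bound on the number of b-vertices
  have hkB : numColors G wt ≤ B.card := by
    have hmem : ∀ col : Fin (numColors G wt), (hbv col).choose ∈ B :=
      fun col => (hB _).mpr ((hbv col).choose_spec).2
    have hinj : Set.InjOn (fun col => (hbv col).choose)
        ((Finset.univ : Finset (Fin (numColors G wt))) : Set (Fin (numColors G wt))) := by
      intro c1 _ c2 _ heq
      have e1 := ((hbv c1).choose_spec).1
      have e2 := ((hbv c2).choose_spec).1
      dsimp only at heq
      rw [← e1, ← e2, heq]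
    have := Finset.card_le_card_of_injOn _ (fun col _ => hmem col) hinj
    simpa using this
  -- upper bound
  have hBsub : B ⊆ g.core ∪ G.edgeFinset.biUnion g.Fedge := by
    intro a haB
    rw [← g.bigSet_eq]
    exact g.bvertex_mem_bigSet hwt hn ((hB a).mp haB)
  have hsplit : B.card ≤ (B ∩ g.core).card + ∑ e ∈ G.edgeFinset, (B ∩ g.Fedge e).card := by
    have h1 : B = B ∩ g.core ∪ B ∩ G.edgeFinset.biUnion g.Fedge := by
      rw [← Finset.inter_union_distrib_left]
      exact (Finset.inter_eq_left.mpr hBsub).symm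
    have h2 : (B ∩ G.edgeFinset.biUnion g.Fedge).card ≤
        ∑ e ∈ G.edgeFinset, (B ∩ g.Fedge e).card := by
      have hsub2 : B ∩ G.edgeFinset.biUnion g.Fedge ⊆
          G.edgeFinset.biUnion (fun e => B ∩ g.Fedge e) := by
        intro a ha
        simp only [Finset.mem_inter, Finset.mem_biUnion] at ha ⊢
        obtain ⟨h3, e, he, h4⟩ := ha
        exact ⟨e, he, h3, h4⟩
      exact le_trans (Finset.card_le_card hsub2) Finset.card_biUnion_le
    have h3 := Finset.card_union_le (B ∩ g.core) (B ∩ G.edgeFinset.biUnion g.Fedge)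
    rw [← h1] at h3
    omega
  have hFe3 : ∀ e ∈ G.edgeFinset, (B ∩ g.Fedge e).card ≤ 3 := by
    intro e he
    obtain ⟨u, v, huv, rfl, -, -⟩ := edge_repr he
    exact g.B_le3 hwt hprop huv he B hB
  have hsum3 : ∑ e ∈ G.edgeFinset, (B ∩ g.Fedge e).card ≤ 3 * G.edgeFinset.card := by
    calc ∑ e ∈ G.edgeFinset, (B ∩ g.Fedge e).card
        ≤ ∑ _e ∈ G.edgeFinset, 3 := Finset.sum_le_sum hFe3
      _ = 3 * G.edgeFinset.card := by rw [Finset.sum_const, smul_eq_mul, mul_comm]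
  have hcorec := g.core_card
  have hcoreB : (B ∩ g.core).card ≤ g.core.card :=
    Finset.card_le_card Finset.inter_subset_right
  have hknum : numColors G wt = 2 * totW G wt + 3 * G.edgeFinset.card +
      Fintype.card V + 2 := rfl
  have htotal : B.card = numColors G wt := by omega
  have hcoreEq : (B ∩ g.core).card = g.core.card := by omega
  have hcoreSub : g.core ⊆ B := by
    intro a ha
    have hirq : B ∩ g.core = g.core :=
      Finset.eq_of_subset_of_card_le Finset.inter_subset_right (by omega)
    rw [← hirq] at ha
    exact (Finset.mem_inter.mp ha).1
  have hFeEq : ∀ e ∈ G.edgeFinset, (B ∩ g.Fedge e).card = 3 := by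
    by_contra hcon
    push_neg at hcon
    obtain ⟨e0, he0, hne⟩ := hcon
    have hlt : (B ∩ g.Fedge e0).card < 3 := lt_of_le_of_ne (hFe3 e0 he0) hne
    have hslt : ∑ e ∈ G.edgeFinset, (B ∩ g.Fedge e).card < 3 * G.edgeFinset.card := by
      calc ∑ e ∈ G.edgeFinset, (B ∩ g.Fedge e).card
          < ∑ _e ∈ G.edgeFinset, 3 := Finset.sum_lt_sum hFe3 ⟨e0, he0, hlt⟩
        _ = 3 * G.edgeFinset.card := by rw [Finset.sum_const, smul_eq_mul, mul_comm]
    omega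
  have pedge : ∀ u v : V, u ≠ v → s(u, v) ∈ G.edgeFinset →
      g.q s(u, v) 0 ∈ B ∧ g.q s(u, v) 1 ∈ B ∧
        (g.x s(u, v) u ∈ B ↔ g.x s(u, v) v ∉ B) :=
    fun u v huv he => g.B_eq3 hwt hprop huv he B hB (hFeEq _ he)
  -- color classes are injective on B
  have himg : B.image c = Finset.univ := by
    refine Finset.eq_univ_of_forall (fun col => ?_)
    obtain ⟨a, hca, hba⟩ := hbv col
    exact Finset.mem_image.mpr ⟨a, (hB a).mpr hba, hca⟩
  have hinjB : Set.InjOn c (B : Set g.VH) := by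
    apply Finset.card_image_iff.mp
    rw [himg, Finset.card_univ, Fintype.card_fin, htotal]
  refine ⟨?_, ?_, ?_⟩
  · -- exactly one b-vertex per color
    intro col
    obtain ⟨a, hca, hba⟩ := hbv col
    refine ⟨a, ⟨hca, hba⟩, ?_⟩
    rintro a' ⟨hca', hba'⟩
    exact hinjB ((hB a').mpr hba') ((hB a).mpr hba) (by rw [hca, hca'])
  · -- exactly one of the two x's per edge
    intro e he u v hesuv huv
    subst hesuv
    have hp := (pedge u v huv he).2.2
    constructor
    · intro hxu hxv
      exact hp.mp ((hB _).mpr hxu) ((hB _).mpr hxv)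
    · intro hnxv
      refine (hB _).mp (hp.mpr (fun hvB => hnxv ((hB _).mp hvB)))
  · -- the set of b-vertices
    ext a
    simp only [Set.mem_setOf_eq, Set.mem_union, Set.mem_singleton_iff, Set.mem_range,
      Finset.mem_coe]
    constructor
    · intro hba
      have haB : a ∈ B := (hB a).mpr hba
      rcases Finset.mem_union.mp (hBsub haB) with hcore | hfe
      · rw [Gadget.core] at hcore
        rcases Finset.mem_union.mp hcore with h1 | h2
        · rcases Finset.mem_union.mp h1 with h0 | h1'
          · exact Or.inl (Or.inl (Or.inl (Or.inl (Finset.mem_singleton.mp h0))))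
          · obtain ⟨v, -, rfl⟩ := Finset.mem_image.mp h1'
            exact Or.inl (Or.inl (Or.inl (Or.inr ⟨v, rfl⟩)))
        · exact Or.inl (Or.inr h2)
      · rw [Finset.mem_biUnion] at hfe
        obtain ⟨e, he, hafe⟩ := hfe
        rw [Gadget.Fedge] at hafe
        rcases Finset.mem_union.mp hafe with hx | hq
        · obtain ⟨v, hvf, rfl⟩ := Finset.mem_image.mp hx
          have hv : v ∈ e := (Finset.mem_filter.mp hvf).2
          exact Or.inr ⟨e, he, v, hv, hba, rfl⟩
        · rcases Finset.mem_insert.mp hq with rfl | hq1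
          · exact Or.inl (Or.inl (Or.inr ⟨e, he, 0, rfl⟩))
          · rw [Finset.mem_singleton] at hq1
            subst hq1
            exact Or.inl (Or.inl (Or.inr ⟨e, he, 1, rfl⟩))
    · rintro ((((rfl | ⟨v, rfl⟩) | ⟨e, he, hh, rfl⟩) | hac) | ⟨e, he, v, hv, hbx, rfl⟩)
      · exact (hB _).mp (hcoreSub g.sstar_core)
      · exact (hB _).mp (hcoreSub (g.orig_core v))
      · obtain ⟨u, v, huv, rfl, -, -⟩ := edge_repr he
        have hp := pedge u v huv he
        fin_cases hh
        · exact (hB _).mp hp.1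
        · exact (hB _).mp hp.2.1
      · exact (hB _).mp (hcoreSub (g.ac_core hac))
      · exact hbx
end
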